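/- arXiv:1510.00303 — 6 statements merged into one kernel-verified Lean document; each statement's English description precedes it below -/
import Mathlib

section
/- Let p > q > 0 and for each c ∈ ℝ let R(z,c) := z² − cz − q + p·∫₀^∞∫_ℝ K(s,w)·e^{−z(cs+w)} dw ds, defined for z in the maximal interval [0, δ(c)) of convergence of the integral, with δ(c) ∈ (0,+∞]. Then there exists c# ∈ ℝ such that: (i) for every c > c#, the function z ↦ R(z,c) has at least one zero in (0, δ(c)), has at most two zeros in (0, δ(c)), has no zero at any z < 0 at which the defining integral converges, and every zero λ in (0, δ(c)) satisfies λ < μ_q(c) := (c + √(c² + 4q))/2 (the positive root of z² − cz − q = 0); (ii) if lim_{z↑δ(c#)} R(z,c#) ≠ 0, then z ↦ R(z,c#) has exactly one zero λ₁ in (0, δ(c#)) and R(z,c#) > 0 for every z ∈ [0, δ(c#)) with z ≠ λ₁. -/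
set_option maxHeartbeats 1000000


open MeasureTheory Filter Set
open scoped ENNReal

noncomputable section

/-- The characteristic-type function `R(z,c) = z² - cz - q + p ∫₀^∞∫_ℝ K(s,w) e^{-z(cs+w)}`. -/
def Rfun (K : ℝ → ℝ → ℝ) (p q : ℝ) (z c : ℝ) : ℝ :=
  z ^ 2 - c * z - q +
    p * ∫ s in Set.Ioi (0:ℝ), ∫ w : ℝ, K s w * Real.exp (-z * (c * s + w))

/-- The filter describing `z ↑ δ(c)`: `atTop` if `δ(c) = ∞`, otherwise the left
  neighbourhood filter of `δ(c)`. -/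
def leftApproach (d : ℝ≥0∞) : Filter ℝ :=
  if d = ⊤ then Filter.atTop else nhdsWithin d.toReal (Set.Iio d.toReal)

open scoped Topology

namespace CharAux

def μP : Measure (ℝ × ℝ) := (volume.restrict (Set.Ioi 0)).prod volume

def gh (K : ℝ → ℝ → ℝ) (a b : ℝ) (x : ℝ × ℝ) : ℝ :=
  K x.1 x.2 * Real.exp (-(a * x.1 + b * x.2))

def Fh (K : ℝ → ℝ → ℝ) (a b : ℝ) : ℝ := ∫ x, gh K a b x ∂μP

variable {K : ℝ → ℝ → ℝ}

lemma iterated_eq_prod {z c : ℝ} (h : Integrable (gh K (z * c) z) μP) :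
    (∫ s in Set.Ioi (0:ℝ), ∫ w : ℝ, K s w * Real.exp (-z * (c * s + w))) = Fh K (z * c) z := by
  have huncurry : (Function.uncurry fun s w => K s w * Real.exp (-z * (c * s + w)))
      = gh K (z * c) z := by
    funext x; unfold Function.uncurry gh; simp only; congr 1; congr 1; ring
  have := MeasureTheory.integral_integral (μ := volume.restrict (Set.Ioi 0)) (ν := volume)
    (f := fun s w => K s w * Real.exp (-z * (c * s + w))) (by rw [huncurry]; exact h)
  rw [this, Fh, μP]
  apply MeasureTheory.integral_congr_ae
  filter_upwards with x
  unfold gh; congr 1; congr 1; ring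

lemma Rfun_eq {p q z c : ℝ} (h : Integrable (gh K (z * c) z) μP) :
    Rfun K p q z c = z ^ 2 - c * z - q + p * Fh K (z * c) z := by
  rw [Rfun, iterated_eq_prod h]

lemma Rzero (hKnorm : (∫ s in Set.Ioi (0:ℝ), ∫ w : ℝ, K s w) = 1) (p q c : ℝ) :
    Rfun K p q 0 c = p - q := by
  rw [Rfun]
  simp only [neg_zero, zero_mul, Real.exp_zero, mul_one, hKnorm]
  ring

lemma Fh00 (hKint : IntegrableOn (fun x : ℝ × ℝ => K x.1 x.2) (Set.Ioi 0 ×ˢ Set.univ))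
    (hKnorm : (∫ s in Set.Ioi (0:ℝ), ∫ w : ℝ, K s w) = 1) : Fh K 0 0 = 1 := by
  have h : Integrable (gh K (0 * (0:ℝ)) 0) μP := by
    have : gh K (0 * (0:ℝ)) 0 = fun x : ℝ × ℝ => K x.1 x.2 := by
      funext x; simp [gh]
    rw [this]
    rw [IntegrableOn, Measure.volume_eq_prod, ← Measure.prod_restrict,
      Measure.restrict_univ] at hKint
    exact hKint
  have h2 := iterated_eq_prod h
  rw [show Fh K ((0:ℝ)*0) 0 = Fh K 0 0 by norm_num] at h2
  rw [← h2]
  rw [← hKnorm]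
  apply MeasureTheory.setIntegral_congr_fun measurableSet_Ioi
  intro s _
  apply MeasureTheory.integral_congr_ae
  filter_upwards with w
  simp


lemma intK (hKint : IntegrableOn (fun x : ℝ × ℝ => K x.1 x.2) (Set.Ioi 0 ×ˢ Set.univ)) :
    Integrable (fun x : ℝ × ℝ => K x.1 x.2) μP := by
  rw [IntegrableOn, Measure.volume_eq_prod, ← Measure.prod_restrict,
    Measure.restrict_univ] at hKint
  exact hKint

lemma gh_meas (hKmeas : Measurable fun x : ℝ × ℝ => K x.1 x.2) (a b : ℝ) :
    AEStronglyMeasurable (gh K a b) μP := by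
  apply Measurable.aestronglyMeasurable
  exact hKmeas.mul (((measurable_fst.const_mul a).add (measurable_snd.const_mul b)).neg.exp)

lemma gh_nonneg (hKnn : ∀ s w, 0 ≤ K s w) (a b : ℝ) (x : ℝ × ℝ) : 0 ≤ gh K a b x :=
  mul_nonneg (hKnn _ _) (Real.exp_pos _).le

/-- comparison: if the exponent is a.e. pointwise larger, the function is smaller -/
lemma gh_le_of_exponent (hKnn : ∀ s w, 0 ≤ K s w) {a b a' b' : ℝ} (x : ℝ × ℝ)
    (hx : a * x.1 + b * x.2 ≤ a' * x.1 + b' * x.2) : gh K a' b' x ≤ gh K a b x := by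
  apply mul_le_mul_of_nonneg_left _ (hKnn _ _)
  exact Real.exp_le_exp.2 (by linarith)

lemma integrable_mono (hKmeas : Measurable fun x : ℝ × ℝ => K x.1 x.2)
    (hKnn : ∀ s w, 0 ≤ K s w) {a b a' b' : ℝ}
    (h : Integrable (gh K a b) μP)
    (hle : ∀ᵐ x ∂μP, gh K a' b' x ≤ gh K a b x) :
    Integrable (gh K a' b') μP ∧ Fh K a' b' ≤ Fh K a b := by
  have hint : Integrable (gh K a' b') μP := by
    apply Integrable.mono' h (gh_meas hKmeas a' b')
    filter_upwards [hle] with x hx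
    rw [Real.norm_of_nonneg (gh_nonneg hKnn _ _ _)]
    exact hx
  exact ⟨hint, integral_mono_ae hint h hle⟩

/-- convexity along segments in the `(a, b)` plane -/
lemma segment_le (hKnn : ∀ s w, 0 ≤ K s w) {a₁ b₁ a₂ b₂ t : ℝ} (ht0 : 0 ≤ t) (ht1 : t ≤ 1)
    (x : ℝ × ℝ) :
    gh K (t * a₁ + (1 - t) * a₂) (t * b₁ + (1 - t) * b₂) x
      ≤ t * gh K a₁ b₁ x + (1 - t) * gh K a₂ b₂ x := by
  have hconv := convexOn_exp.2 (Set.mem_univ (-(a₁ * x.1 + b₁ * x.2)))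
    (Set.mem_univ (-(a₂ * x.1 + b₂ * x.2))) ht0 (sub_nonneg.2 ht1)
    (show t + (1 - t) = 1 by ring)
  simp only [smul_eq_mul] at hconv
  have harg : t * -(a₁ * x.1 + b₁ * x.2) + (1 - t) * -(a₂ * x.1 + b₂ * x.2)
      = -((t * a₁ + (1 - t) * a₂) * x.1 + (t * b₁ + (1 - t) * b₂) * x.2) := by ring
  rw [harg] at hconv
  unfold gh
  calc K x.1 x.2 * Real.exp (-((t * a₁ + (1 - t) * a₂) * x.1 + (t * b₁ + (1 - t) * b₂) * x.2))
      ≤ K x.1 x.2 * (t * Real.exp (-(a₁ * x.1 + b₁ * x.2))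
          + (1 - t) * Real.exp (-(a₂ * x.1 + b₂ * x.2))) :=
        mul_le_mul_of_nonneg_left hconv (hKnn _ _)
    _ = t * (K x.1 x.2 * Real.exp (-(a₁ * x.1 + b₁ * x.2)))
          + (1 - t) * (K x.1 x.2 * Real.exp (-(a₂ * x.1 + b₂ * x.2))) := by ring

lemma segment_integrable (hKmeas : Measurable fun x : ℝ × ℝ => K x.1 x.2)
    (hKnn : ∀ s w, 0 ≤ K s w) {a₁ b₁ a₂ b₂ t : ℝ} (ht0 : 0 ≤ t) (ht1 : t ≤ 1)
    (h₁ : Integrable (gh K a₁ b₁) μP) (h₂ : Integrable (gh K a₂ b₂) μP) :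
    Integrable (gh K (t * a₁ + (1 - t) * a₂) (t * b₁ + (1 - t) * b₂)) μP := by
  apply Integrable.mono' ((h₁.const_mul t).add (h₂.const_mul (1 - t)))
    (gh_meas hKmeas _ _)
  filter_upwards with x
  rw [Real.norm_of_nonneg (gh_nonneg hKnn _ _ _)]
  exact segment_le hKnn ht0 ht1 x

lemma segment_F_le (hKmeas : Measurable fun x : ℝ × ℝ => K x.1 x.2)
    (hKnn : ∀ s w, 0 ≤ K s w) {a₁ b₁ a₂ b₂ t : ℝ} (ht0 : 0 ≤ t) (ht1 : t ≤ 1)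
    (h₁ : Integrable (gh K a₁ b₁) μP) (h₂ : Integrable (gh K a₂ b₂) μP) :
    Fh K (t * a₁ + (1 - t) * a₂) (t * b₁ + (1 - t) * b₂)
      ≤ t * Fh K a₁ b₁ + (1 - t) * Fh K a₂ b₂ := by
  have hint := segment_integrable hKmeas hKnn ht0 ht1 h₁ h₂
  have := integral_mono_ae hint ((h₁.const_mul t).add (h₂.const_mul (1 - t)))
    (Filter.Eventually.of_forall fun x => segment_le hKnn ht0 ht1 x)
  simp only [Pi.add_apply] at this
  rw [integral_add (h₁.const_mul t) (h₂.const_mul (1 - t))] at this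
  rw [MeasureTheory.integral_const_mul, MeasureTheory.integral_const_mul] at this
  exact this

lemma Fh_nonneg (hKnn : ∀ s w, 0 ≤ K s w) (a b : ℝ) : 0 ≤ Fh K a b :=
  integral_nonneg (gh_nonneg hKnn a b)

lemma Fh_pos (hKmeas : Measurable fun x : ℝ × ℝ => K x.1 x.2)
    (hKnn : ∀ s w, 0 ≤ K s w)
    (hKint : IntegrableOn (fun x : ℝ × ℝ => K x.1 x.2) (Set.Ioi 0 ×ˢ Set.univ))
    (hKnorm : (∫ s in Set.Ioi (0:ℝ), ∫ w : ℝ, K s w) = 1)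
    {a b : ℝ} (h : Integrable (gh K a b) μP) : 0 < Fh K a b := by
  rcases lt_or_eq_of_le (Fh_nonneg hKnn a b (K := K)) with hlt | heq
  · exact hlt
  exfalso
  have hzero : gh K a b =ᵐ[μP] 0 := by
    rw [← MeasureTheory.integral_eq_zero_iff_of_nonneg (gh_nonneg hKnn a b) h]
    exact heq.symm
  have hK0 : (fun x : ℝ × ℝ => K x.1 x.2) =ᵐ[μP] 0 := by
    filter_upwards [hzero] with x hx
    have := (Real.exp_pos (-(a * x.1 + b * x.2))).ne'
    simp only [gh, Pi.zero_apply] at hx ⊢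
    rcases mul_eq_zero.1 hx with h' | h'
    · exact h'
    · exact absurd h' this
  have h1 : Fh K 0 0 = 0 := by
    rw [Fh]
    rw [MeasureTheory.integral_eq_zero_iff_of_nonneg (gh_nonneg hKnn 0 0)]
    · filter_upwards [hK0] with x hx
      simp only [gh, Pi.zero_apply] at hx ⊢
      simp [hx]
    · rw [show gh K (0:ℝ) 0 = fun x : ℝ × ℝ => K x.1 x.2 from funext fun x => by simp [gh]]
      rw [IntegrableOn, Measure.volume_eq_prod, ← Measure.prod_restrict,
        Measure.restrict_univ] at hKint
      exact hKint
  rw [Fh00 hKint hKnorm] at h1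
  exact one_ne_zero h1

/-- strict convexity of `R(·, c)` -/
lemma R_strict (hKmeas : Measurable fun x : ℝ × ℝ => K x.1 x.2)
    (hKnn : ∀ s w, 0 ≤ K s w) {p q c x y u : ℝ} (hp : 0 < p)
    (hxy : x < y) (hyu : y < u)
    (hx : Integrable (gh K (x * c) x) μP) (hu : Integrable (gh K (u * c) u) μP) :
    Integrable (gh K (y * c) y) μP ∧
      Rfun K p q y c < ((u - y) / (u - x)) * Rfun K p q x c
        + ((y - x) / (u - x)) * Rfun K p q u c := by
  set t : ℝ := (u - y) / (u - x) with ht_def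
  have hxu : x < u := hxy.trans hyu
  have hux : 0 < u - x := by linarith
  have ht0 : 0 < t := div_pos (by linarith) hux
  have ht1 : t < 1 := by
    rw [div_lt_one hux]; linarith
  have hcombo_a : t * (x * c) + (1 - t) * (u * c) = y * c := by
    rw [ht_def]; field_simp; ring
  have hcombo_b : t * x + (1 - t) * u = y := by
    rw [ht_def]; field_simp; ring
  have hint : Integrable (gh K (y * c) y) μP := by
    have := segment_integrable hKmeas hKnn ht0.le ht1.le hx hu
    rwa [hcombo_a, hcombo_b] at this
  refine ⟨hint, ?_⟩
  have hFle : Fh K (y * c) y ≤ t * Fh K (x * c) x + (1 - t) * Fh K (u * c) u := by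
    have := segment_F_le hKmeas hKnn ht0.le ht1.le hx hu
    rwa [hcombo_a, hcombo_b] at this
  rw [Rfun_eq hint, Rfun_eq hx, Rfun_eq hu]
  have hquad : y ^ 2 - c * y - q < t * (x ^ 2 - c * x - q) + (1 - t) * (u ^ 2 - c * u - q) := by
    rw [← hcombo_b]
    nlinarith [mul_pos (mul_pos ht0 (sub_pos.2 ht1)) (mul_pos hux hux)]
  have h1t : (y - x) / (u - x) = 1 - t := by
    rw [ht_def]; field_simp; ring
  rw [h1t]
  nlinarith [mul_le_mul_of_nonneg_left hFle hp.le]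

lemma bound_pt (hKnn : ∀ s w, 0 ≤ K s w) {c z b' : ℝ} (h0 : 0 ≤ z) (hzb : z ≤ b')
    (x : ℝ × ℝ) : ‖gh K (z * c) z x‖ ≤ K x.1 x.2 + gh K (b' * c) b' x := by
  rw [Real.norm_of_nonneg (gh_nonneg hKnn _ _ _)]
  rcases le_or_gt 0 (c * x.1 + x.2) with hA | hA
  · have h1 : gh K (z * c) z x ≤ K x.1 x.2 := by
      unfold gh
      calc K x.1 x.2 * Real.exp (-(z * c * x.1 + z * x.2))
          ≤ K x.1 x.2 * 1 := by
            apply mul_le_mul_of_nonneg_left _ (hKnn _ _)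
            rw [← Real.exp_zero]
            apply Real.exp_le_exp.2
            have : z * c * x.1 + z * x.2 = z * (c * x.1 + x.2) := by ring
            rw [this]
            simp only [neg_nonpos]
            exact mul_nonneg h0 hA
        _ = K x.1 x.2 := mul_one _
    linarith [gh_nonneg hKnn (b' * c) b' x]
  · have h1 : gh K (z * c) z x ≤ gh K (b' * c) b' x := by
      apply gh_le_of_exponent hKnn
      have h2 : b' * c * x.1 + b' * x.2 = b' * (c * x.1 + x.2) := by ring
      have h3 : z * c * x.1 + z * x.2 = z * (c * x.1 + x.2) := by ring
      rw [h2, h3]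
      exact mul_le_mul_of_nonpos_right hzb hA.le
    linarith [hKnn x.1 x.2]

lemma int_between (hKmeas : Measurable fun x : ℝ × ℝ => K x.1 x.2)
    (hKnn : ∀ s w, 0 ≤ K s w)
    (hKint : IntegrableOn (fun x : ℝ × ℝ => K x.1 x.2) (Set.Ioi 0 ×ˢ Set.univ))
    {c z b' : ℝ} (h0 : 0 ≤ z) (hzb : z ≤ b')
    (hint' : Integrable (gh K (b' * c) b') μP) : Integrable (gh K (z * c) z) μP := by
  apply Integrable.mono' ((intK hKint).add hint') (gh_meas hKmeas _ _)
  exact Filter.Eventually.of_forall (bound_pt hKnn h0 hzb)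

lemma contF (hKmeas : Measurable fun x : ℝ × ℝ => K x.1 x.2)
    (hKnn : ∀ s w, 0 ≤ K s w)
    (hKint : IntegrableOn (fun x : ℝ × ℝ => K x.1 x.2) (Set.Ioi 0 ×ˢ Set.univ))
    {c b b' : ℝ} (hb : 0 ≤ b) (hbb' : b ≤ b')
    (hint' : Integrable (gh K (b' * c) b') μP) :
    ContinuousOn (fun z => Fh K (z * c) z) (Set.Icc 0 b) := by
  apply MeasureTheory.continuousOn_of_dominated (bound := fun x => K x.1 x.2 + gh K (b' * c) b' x)
  · exact fun z _ => gh_meas hKmeas _ _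
  · intro z hz
    exact Filter.Eventually.of_forall (bound_pt hKnn hz.1 (hz.2.trans hbb'))
  · exact (intK hKint).add hint'
  · apply Filter.Eventually.of_forall
    intro x
    apply Continuous.continuousOn
    unfold gh
    fun_prop

lemma contR (hKmeas : Measurable fun x : ℝ × ℝ => K x.1 x.2)
    (hKnn : ∀ s w, 0 ≤ K s w)
    (hKint : IntegrableOn (fun x : ℝ × ℝ => K x.1 x.2) (Set.Ioi 0 ×ˢ Set.univ))
    {p q c b b' : ℝ} (hb : 0 ≤ b) (hbb' : b ≤ b')
    (hint' : Integrable (gh K (b' * c) b') μP) :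
    ContinuousOn (fun z => Rfun K p q z c) (Set.Icc 0 b) := by
  have h1 : ContinuousOn (fun z => z ^ 2 - c * z - q + p * Fh K (z * c) z) (Set.Icc 0 b) := by
    apply ContinuousOn.add
    · exact (Continuous.continuousOn (by fun_prop))
    · exact (contF hKmeas hKnn hKint hb hbb' hint').const_smul p
  apply h1.congr
  intro z hz
  exact Rfun_eq (int_between hKmeas hKnn hKint hz.1 (hz.2.trans hbb') hint')

lemma ae_pos_fst : ∀ᵐ x ∂μP, (0 : ℝ) < x.1 := by
  rw [ae_iff]
  have h : {x : ℝ × ℝ | ¬ (0:ℝ) < x.1} = (Set.Iic 0) ×ˢ (Set.univ : Set ℝ) := by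
    ext x; simp [not_lt]
  rw [h, μP, Measure.prod_prod, Measure.restrict_apply measurableSet_Iic]
  have : Set.Iic (0:ℝ) ∩ Set.Ioi 0 = ∅ := by
    ext t
    simp only [Set.mem_inter_iff, Set.mem_Iic, Set.mem_Ioi, Set.mem_empty_iff_false,
      iff_false, not_and, not_lt]
    exact fun h => h
  rw [this]; simp

lemma intOn_iff (z c : ℝ) :
    IntegrableOn (fun x : ℝ × ℝ => K x.1 x.2 * Real.exp (-z * (c * x.1 + x.2)))
      (Set.Ioi 0 ×ˢ Set.univ) ↔ Integrable (gh K (z * c) z) μP := by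
  have h1 : (fun x : ℝ × ℝ => K x.1 x.2 * Real.exp (-z * (c * x.1 + x.2))) = gh K (z * c) z := by
    funext x; unfold gh; congr 1; congr 1; ring
  rw [h1, IntegrableOn, Measure.volume_eq_prod, ← Measure.prod_restrict, Measure.restrict_univ,
    μP]

lemma ae_mono_c (hKnn : ∀ s w, 0 ≤ K s w) {z c c' : ℝ} (h0 : 0 ≤ z) (hcc : c ≤ c') :
    ∀ᵐ x ∂μP, gh K (z * c') z x ≤ gh K (z * c) z x := by
  filter_upwards [ae_pos_fst] with x hx
  apply gh_le_of_exponent hKnn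
  have : z * c * x.1 ≤ z * c' * x.1 :=
    mul_le_mul_of_nonneg_right (mul_le_mul_of_nonneg_left hcc h0) hx.le
  linarith

lemma gh_meas' (hKmeas : Measurable fun x : ℝ × ℝ => K x.1 x.2) (a b : ℝ) :
    Measurable (gh K a b) :=
  hKmeas.mul (((measurable_fst.const_mul a).add (measurable_snd.const_mul b)).neg.exp)

lemma gh_tendsto {an bn : ℕ → ℝ} {a b : ℝ}
    (hab : Tendsto (fun n : ℕ => (an n, bn n)) atTop (𝓝 (a, b))) (x : ℝ × ℝ) :
    Tendsto (fun n => gh K (an n) (bn n) x) atTop (𝓝 (gh K a b x)) := by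
  have h1 : Tendsto (fun n => an n) atTop (𝓝 a) :=
    (continuous_fst.tendsto _).comp hab
  have h2 : Tendsto (fun n => bn n) atTop (𝓝 b) :=
    (continuous_snd.tendsto _).comp hab
  unfold gh
  apply Tendsto.const_mul
  apply (Real.continuous_exp.tendsto _).comp
  apply Tendsto.neg
  exact ((h1.mul_const _).add (h2.mul_const _))

/-- Fatou-type lemma along a sequence. -/
lemma fatou_seq (hKmeas : Measurable fun x : ℝ × ℝ => K x.1 x.2)
    (hKnn : ∀ s w, 0 ≤ K s w)
    {an bn : ℕ → ℝ} {a b : ℝ}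
    (hab : Tendsto (fun n : ℕ => ((an n : ℝ), (bn n : ℝ))) atTop (𝓝 (a, b)))
    (hint : ∀ n, Integrable (gh K (an n) (bn n)) μP)
    {βn : ℕ → ℝ} {β : ℝ} (hβ : Tendsto βn atTop (𝓝 β))
    (hFle : ∀ n, Fh K (an n) (bn n) ≤ βn n) :
    (∫⁻ x, ENNReal.ofReal (gh K a b x) ∂μP) ≤ ENNReal.ofReal β := by
  have hmeas : ∀ n, Measurable fun x => ENNReal.ofReal (gh K (an n) (bn n) x) :=
    fun n => (gh_meas' hKmeas _ _).ennreal_ofReal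
  have hptwise : ∀ x, (ENNReal.ofReal (gh K a b x))
      = Filter.liminf (fun n => ENNReal.ofReal (gh K (an n) (bn n) x)) atTop := by
    intro x
    exact ((ENNReal.tendsto_ofReal (gh_tendsto hab x))).liminf_eq.symm
  calc (∫⁻ x, ENNReal.ofReal (gh K a b x) ∂μP)
      = ∫⁻ x, Filter.liminf (fun n => ENNReal.ofReal (gh K (an n) (bn n) x)) atTop ∂μP := by
        apply lintegral_congr; intro x; exact hptwise x
    _ ≤ Filter.liminf (fun n => ∫⁻ x, ENNReal.ofReal (gh K (an n) (bn n) x) ∂μP) atTop :=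
        lintegral_liminf_le hmeas
    _ ≤ Filter.liminf (fun n => ENNReal.ofReal (βn n)) atTop := by
        apply Filter.liminf_le_liminf
        apply Filter.Eventually.of_forall
        intro n
        rw [← MeasureTheory.ofReal_integral_eq_lintegral_ofReal (hint n)
          (Filter.Eventually.of_forall (gh_nonneg hKnn _ _))]
        exact ENNReal.ofReal_le_ofReal (hFle n)
        all_goals isBoundedDefault
    _ = ENNReal.ofReal β := (ENNReal.tendsto_ofReal hβ).liminf_eq

lemma int_of_lintegral_le (hKmeas : Measurable fun x : ℝ × ℝ => K x.1 x.2)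
    (hKnn : ∀ s w, 0 ≤ K s w) {a b β : ℝ}
    (h : (∫⁻ x, ENNReal.ofReal (gh K a b x) ∂μP) ≤ ENNReal.ofReal β) :
    Integrable (gh K a b) μP ∧ Fh K a b ≤ max β 0 := by
  have hint : Integrable (gh K a b) μP := by
    refine ⟨(gh_meas hKmeas a b), ?_⟩
    rw [MeasureTheory.hasFiniteIntegral_iff_norm]
    have heq : ∀ x, ENNReal.ofReal ‖gh K a b x‖ = ENNReal.ofReal (gh K a b x) := by
      intro x; rw [Real.norm_of_nonneg (gh_nonneg hKnn _ _ _)]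
    calc (∫⁻ x, ENNReal.ofReal ‖gh K a b x‖ ∂μP)
        = ∫⁻ x, ENNReal.ofReal (gh K a b x) ∂μP := lintegral_congr heq
      _ ≤ ENNReal.ofReal β := h
      _ < ⊤ := ENNReal.ofReal_lt_top
  refine ⟨hint, ?_⟩
  have h2 : ENNReal.ofReal (Fh K a b) ≤ ENNReal.ofReal (max β 0) := by
    rw [Fh, MeasureTheory.ofReal_integral_eq_lintegral_ofReal hint
      (Filter.Eventually.of_forall (gh_nonneg hKnn _ _))]
    exact le_trans h (ENNReal.ofReal_le_ofReal (le_max_left _ _))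
  exact (ENNReal.ofReal_le_ofReal_iff (le_max_right β 0)).1 h2

/-- dominated convergence in the `c` variable -/
lemma tendsto_F_c (hKmeas : Measurable fun x : ℝ × ℝ => K x.1 x.2)
    (hKnn : ∀ s w, 0 ≤ K s w) {z c₀ cl : ℝ} (h0 : 0 ≤ z) {dk : ℕ → ℝ}
    (hdk : ∀ k, c₀ ≤ dk k) (hton : Tendsto dk atTop (𝓝 cl))
    (hint₀ : Integrable (gh K (z * c₀) z) μP) :
    Tendsto (fun k => Fh K (z * dk k) z) atTop (𝓝 (Fh K (z * cl) z)) := by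
  apply MeasureTheory.tendsto_integral_of_dominated_convergence (bound := gh K (z * c₀) z)
  · exact fun n => gh_meas hKmeas _ _
  · exact hint₀
  · intro n
    filter_upwards [ae_pos_fst] with x hx
    rw [Real.norm_of_nonneg (gh_nonneg hKnn _ _ _)]
    apply gh_le_of_exponent hKnn
    have : z * c₀ * x.1 ≤ z * dk n * x.1 :=
      mul_le_mul_of_nonneg_right (mul_le_mul_of_nonneg_left (hdk n) h0) hx.le
    linarith
  · apply Filter.Eventually.of_forall
    intro x
    apply gh_tendsto
    rw [Prod.tendsto_iff]
    constructor
    · exact (hton.const_mul z)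
    · exact tendsto_const_nhds

section Delta
variable {δ : ℝ → ℝ≥0∞}

lemma delta_mono (hKmeas : Measurable fun x : ℝ × ℝ => K x.1 x.2)
    (hKnn : ∀ s w, 0 ≤ K s w)
    (hKconv : ∀ c z : ℝ, 0 ≤ z → ENNReal.ofReal z < δ c →
      IntegrableOn (fun x : ℝ × ℝ => K x.1 x.2 * Real.exp (-z * (c * x.1 + x.2)))
        (Set.Ioi 0 ×ˢ Set.univ))
    (hKdiv : ∀ c z : ℝ, δ c < ENNReal.ofReal z →
      ¬ IntegrableOn (fun x : ℝ × ℝ => K x.1 x.2 * Real.exp (-z * (c * x.1 + x.2)))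
        (Set.Ioi 0 ×ˢ Set.univ))
    {c c' : ℝ} (hcc : c ≤ c') : δ c ≤ δ c' := by
  by_contra hlt
  push_neg at hlt
  obtain ⟨r, hr0, hr1, hr2⟩ := ENNReal.lt_iff_exists_real_btwn.1 hlt
  have hint : Integrable (gh K (r * c) r) μP := (intOn_iff r c).1 (hKconv c r hr0 hr2)
  have hint' : Integrable (gh K (r * c') r) μP :=
    (integrable_mono hKmeas hKnn hint (ae_mono_c hKnn hr0 hcc)).1
  exact hKdiv c' r hr1 ((intOn_iff r c').2 hint')

lemma delta_leftsc (hKmeas : Measurable fun x : ℝ × ℝ => K x.1 x.2)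
    (hKnn : ∀ s w, 0 ≤ K s w)
    (hδpos : ∀ c, 0 < δ c)
    (hKconv : ∀ c z : ℝ, 0 ≤ z → ENNReal.ofReal z < δ c →
      IntegrableOn (fun x : ℝ × ℝ => K x.1 x.2 * Real.exp (-z * (c * x.1 + x.2)))
        (Set.Ioi 0 ×ˢ Set.univ))
    (hKdiv : ∀ c z : ℝ, δ c < ENNReal.ofReal z →
      ¬ IntegrableOn (fun x : ℝ × ℝ => K x.1 x.2 * Real.exp (-z * (c * x.1 + x.2)))
        (Set.Ioi 0 ×ˢ Set.univ))
    {cs zh : ℝ} (hzh : 0 ≤ zh) (hlt : ENNReal.ofReal zh < δ cs) :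
    ∃ c' < cs, ENNReal.ofReal zh < δ c' := by
  -- pick z' strictly between zh and δ cs
  obtain ⟨z', hz'0, hz'1, hz'2⟩ := ENNReal.lt_iff_exists_real_btwn.1 hlt
  have hzz' : zh < z' := by
    by_contra hcon
    push_neg at hcon
    exact absurd (lt_of_lt_of_le hz'1 (ENNReal.ofReal_le_ofReal hcon)) (lt_irrefl _)
  have hz'pos : 0 < z' := lt_of_le_of_lt hzh hzz'
  -- pick a small point in the domain at c₀ = cs - 1
  set c₀ : ℝ := cs - 1 with hc₀
  obtain ⟨t₁, ht₁0, ht₁1, ht₁2⟩ := ENNReal.lt_iff_exists_real_btwn.1 (hδpos c₀)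
  have ht₁pos : 0 < t₁ := by
    rcases lt_or_eq_of_le ht₁0 with h | h
    · exact h
    · exfalso; rw [← h] at ht₁1; simp at ht₁1
  set t₀ : ℝ := min t₁ (z' / 4) with ht₀def
  have ht₀pos : 0 < t₀ := lt_min ht₁pos (by linarith)
  have ht₀z' : t₀ ≤ z' / 4 := min_le_right _ _
  have ht₀int : Integrable (gh K (t₀ * c₀) t₀) μP := by
    refine (intOn_iff t₀ c₀).1 (hKconv c₀ t₀ ht₀pos.le ?_)
    exact lt_of_le_of_lt (ENNReal.ofReal_le_ofReal (min_le_left _ _)) ht₁2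
  have hz'int : Integrable (gh K (z' * cs) z') μP := (intOn_iff z' cs).1 (hKconv cs z' hz'0 hz'2)
  -- convex combination
  set lam : ℝ := (z' - zh) / (2 * (z' - t₀)) with hlamdef
  have hz't₀ : t₀ < z' := lt_of_le_of_lt ht₀z' (by linarith)
  have hden : 0 < z' - t₀ := by linarith
  have hlam0 : 0 < lam := div_pos (by linarith) (by linarith)
  have hlam1 : lam < 1 := by
    rw [div_lt_one (by linarith)]
    have : z' - zh ≤ z' := by linarith
    have h4 : z' - t₀ ≥ (3/4) * z' := by linarith
    nlinarith
  set τ : ℝ := lam * t₀ + (1 - lam) * z' with hτdef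
  have hτ : τ = z' - lam * (z' - t₀) := by rw [hτdef]; ring
  have hlamval : lam * (z' - t₀) = (z' - zh) / 2 := by
    rw [hlamdef]; field_simp
  have hτval : τ = (z' + zh) / 2 := by rw [hτ, hlamval]; ring
  have hτpos : 0 < τ := by rw [hτval]; linarith
  have hτz : zh < τ := by rw [hτval]; linarith
  have hint_combo : Integrable (gh K (lam * (t₀ * c₀) + (1 - lam) * (z' * cs)) τ) μP := by
    have := segment_integrable hKmeas hKnn hlam0.le hlam1.le ht₀int hz'int
    rwa [hτdef]
  set c'' : ℝ := (lam * (t₀ * c₀) + (1 - lam) * (z' * cs)) / τ with hc''def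
  have hacoord : lam * (t₀ * c₀) + (1 - lam) * (z' * cs) = τ * c'' := by
    rw [hc''def, mul_div_cancel₀]
    exact hτpos.ne'
  rw [hacoord] at hint_combo
  have hδc'' : ENNReal.ofReal τ ≤ δ c'' := by
    by_contra hcon
    push_neg at hcon
    exact hKdiv c'' τ hcon ((intOn_iff τ c'').2 hint_combo)
  have hc''lt : c'' < cs := by
    have h1 : lam * (t₀ * c₀) + (1 - lam) * (z' * cs) < τ * cs := by
      rw [hτdef]
      have : t₀ * c₀ < t₀ * cs := by
        apply mul_lt_mul_of_pos_left _ ht₀pos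
        rw [hc₀]; linarith
      nlinarith [hlam0]
    rw [hacoord] at h1
    exact lt_of_mul_lt_mul_left (by linarith [h1]) hτpos.le
  refine ⟨c'', hc''lt, lt_of_lt_of_le ?_ hδc''⟩
  exact ENNReal.ofReal_lt_ofReal_iff hτpos |>.2 hτz

end Delta

end CharAux

open CharAux

/-- Properties of the real zeros of `R(·,c)`. -/
theorem char_function_roots
    (K : ℝ → ℝ → ℝ) (δ : ℝ → ℝ≥0∞) (p q : ℝ)
    (hq : 0 < q) (hpq : q < p)
    (hKmeas : Measurable fun x : ℝ × ℝ => K x.1 x.2)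
    (hKnn : ∀ s w, 0 ≤ K s w)
    (hKint : IntegrableOn (fun x : ℝ × ℝ => K x.1 x.2) (Set.Ioi 0 ×ˢ Set.univ))
    (hKnorm : (∫ s in Set.Ioi (0:ℝ), ∫ w : ℝ, K s w) = 1)
    (hδpos : ∀ c, 0 < δ c)
    (hKconv : ∀ c z : ℝ, 0 ≤ z → ENNReal.ofReal z < δ c →
      IntegrableOn (fun x : ℝ × ℝ => K x.1 x.2 * Real.exp (-z * (c * x.1 + x.2)))
        (Set.Ioi 0 ×ˢ Set.univ))
    (hKdiv : ∀ c z : ℝ, δ c < ENNReal.ofReal z →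
      ¬ IntegrableOn (fun x : ℝ × ℝ => K x.1 x.2 * Real.exp (-z * (c * x.1 + x.2)))
        (Set.Ioi 0 ×ˢ Set.univ)) :
    ∃ csharp : ℝ,
      -- (i) : for any c > csharp
      (∀ c : ℝ, csharp < c →
        -- at least one positive zero in (0, δ(c))
        (∃ z : ℝ, 0 < z ∧ ENNReal.ofReal z < δ c ∧ Rfun K p q z c = 0) ∧
        -- at most two zeros in (0, δ(c))
        {z : ℝ | 0 < z ∧ ENNReal.ofReal z < δ c ∧ Rfun K p q z c = 0}.encard ≤ 2 ∧
        -- no negative zero (where the integral converges)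
        (∀ z : ℝ, z < 0 →
          IntegrableOn (fun x : ℝ × ℝ => K x.1 x.2 * Real.exp (-z * (c * x.1 + x.2)))
            (Set.Ioi 0 ×ˢ Set.univ) → Rfun K p q z c ≠ 0) ∧
        -- every zero is below the positive root of z² - cz - q = 0
        (∀ z : ℝ, 0 < z → ENNReal.ofReal z < δ c → Rfun K p q z c = 0 →
          z < (c + Real.sqrt (c ^ 2 + 4 * q)) / 2)) ∧
      -- (ii) : at c = csharp, if lim_{z ↑ δ(csharp)} R(z,csharp) ≠ 0
      (¬ Tendsto (fun z => Rfun K p q z csharp) (leftApproach (δ csharp)) (nhds 0) →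
        ∃ lam : ℝ, 0 < lam ∧ ENNReal.ofReal lam < δ csharp ∧
          Rfun K p q lam csharp = 0 ∧
          ∀ z : ℝ, 0 ≤ z → ENNReal.ofReal z < δ csharp → z ≠ lam →
            0 < Rfun K p q z csharp) := by
  classical
  have hp : 0 < p := hq.trans hpq
  -- basic integrability translations
  have hDint : ∀ c z : ℝ, 0 ≤ z → ENNReal.ofReal z < δ c → Integrable (gh K (z * c) z) μP :=
    fun c z h0 h1 => (intOn_iff z c).1 (hKconv c z h0 h1)
  have hdm : ∀ {c c' : ℝ}, c ≤ c' → δ c ≤ δ c' :=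
    fun h => delta_mono hKmeas hKnn hKconv hKdiv h
  have hRz : ∀ c : ℝ, Rfun K p q 0 c = p - q := fun c => Rzero hKnorm p q c
  have hFpos : ∀ {a b : ℝ}, Integrable (gh K a b) μP → 0 < Fh K a b :=
    fun h => Fh_pos hKmeas hKnn hKint hKnorm h
  have hint00 : Integrable (gh K 0 0) μP := by
    rw [show gh K (0:ℝ) 0 = fun x : ℝ × ℝ => K x.1 x.2 from funext fun x => by simp [gh]]
    exact intK hKint
  have hint0c : ∀ c : ℝ, Integrable (gh K (0 * c) 0) μP := by
    intro c; rw [zero_mul]; exact hint00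
  -- choose z₀ in the domain of δ 0
  obtain ⟨z₀, hz₀0, hz₀pos', hz₀δ⟩ := ENNReal.lt_iff_exists_real_btwn.1 (hδpos 0)
  have hz₀pos : 0 < z₀ := ENNReal.ofReal_pos.1 hz₀pos'
  have hintz₀ : Integrable (gh K (z₀ * 0) z₀) μP := hDint 0 z₀ hz₀0 hz₀δ
  set Bad : Set ℝ := {c | ∃ z, 0 < z ∧ ENNReal.ofReal z < δ c ∧ Rfun K p q z c ≤ 0}
    with hBad_def
  -- Bad is nonempty
  have hBadne : Bad.Nonempty := by
    set F₀ : ℝ := Fh K (z₀ * 0) z₀ with hF₀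
    set cb : ℝ := max 1 ((z₀ ^ 2 + p * F₀) / z₀) with hcb
    have hcb0 : 0 ≤ cb := le_trans zero_le_one (le_max_left _ _)
    have hmono := integrable_mono hKmeas hKnn hintz₀ (ae_mono_c hKnn hz₀0 hcb0)
    have hδcb : ENNReal.ofReal z₀ < δ cb := lt_of_lt_of_le hz₀δ (hdm hcb0)
    refine ⟨cb, z₀, hz₀pos, hδcb, ?_⟩
    rw [Rfun_eq hmono.1]
    have h1 : cb * z₀ ≥ z₀ ^ 2 + p * F₀ := by
      rw [ge_iff_le, ← div_le_iff₀ hz₀pos]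
      exact le_max_right _ _
    have h2 : p * Fh K (z₀ * cb) z₀ ≤ p * F₀ := mul_le_mul_of_nonneg_left hmono.2 hp.le
    nlinarith
  -- Bad is bounded below
  have hBadbdd : BddBelow Bad := by
    -- continuity of F(·, 0) near 0 gives a small region where p F > q
    have hcont : ContinuousOn (fun z => Fh K (z * 0) z) (Set.Icc 0 (z₀ / 2)) :=
      contF hKmeas hKnn hKint (by linarith) (by linarith) hintz₀
    have hmem0 : (0:ℝ) ∈ Set.Icc 0 (z₀ / 2) := ⟨le_refl _, by linarith⟩
    have hF00 : Fh K ((0:ℝ) * 0) 0 = 1 := by rw [zero_mul]; exact Fh00 hKint hKnorm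
    have hq' : q < p * Fh K ((0:ℝ) * 0) 0 := by rw [hF00]; linarith
    have htend : Tendsto (fun z => p * Fh K (z * 0) z) (nhdsWithin 0 (Set.Icc 0 (z₀ / 2)))
        (nhds (p * Fh K ((0:ℝ) * 0) 0)) :=
      Filter.Tendsto.const_mul p (hcont 0 hmem0)
    have hev : ∀ᶠ z in nhdsWithin 0 (Set.Icc 0 (z₀ / 2)), q < p * Fh K (z * 0) z :=
      htend.eventually (eventually_gt_nhds hq')
    obtain ⟨ε, hεpos, hεsub⟩ := Metric.mem_nhdsWithin_iff.1 hev
    set η : ℝ := min (ε / 2) (z₀ / 2) with hη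
    have hηpos : 0 < η := lt_min (by linarith) (by linarith)
    have hηgood : ∀ z : ℝ, 0 ≤ z → z ≤ η → q < p * Fh K (z * 0) z := by
      intro z h0 h1
      apply hεsub
      constructor
      · rw [Metric.mem_ball, Real.dist_eq, sub_zero, abs_of_nonneg h0]
        exact lt_of_le_of_lt h1 (lt_of_le_of_lt (min_le_left _ _) (by linarith))
      · exact ⟨h0, le_trans h1 (min_le_right _ _)⟩
    refine ⟨-(q / η) - 1, ?_⟩
    intro c hcBad
    by_contra hcon
    push_neg at hcon
    have hcle : c ≤ -(q / η) - 1 := hcon.le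
    have hqη : 0 < q / η := div_pos hq hηpos
    have hc0 : c ≤ 0 := by linarith
    obtain ⟨z, hz0, hzδ, hR⟩ := hcBad
    have hzint : Integrable (gh K (z * c) z) μP := hDint c z hz0.le hzδ
    have hzδ0 : ENNReal.ofReal z < δ 0 := lt_of_lt_of_le hzδ (hdm hc0)
    have hz0int : Integrable (gh K (z * 0) z) μP := hDint 0 z hz0.le hzδ0
    have hFge : Fh K (z * 0) z ≤ Fh K (z * c) z := by
      apply integral_mono_ae hz0int hzint
      filter_upwards [ae_pos_fst] with x hx
      apply gh_le_of_exponent hKnn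
      have h1 : z * c * x.1 ≤ z * 0 * x.1 := by
        apply mul_le_mul_of_nonneg_right _ hx.le
        apply mul_le_mul_of_nonneg_left hc0 hz0.le
      linarith
    rw [Rfun_eq hzint] at hR
    rcases le_or_gt z η with hcase | hcase
    · have hgt := hηgood z hz0.le hcase
      have hcz : c * z ≤ 0 := mul_nonpos_of_nonpos_of_nonneg hc0 hz0.le
      nlinarith [mul_le_mul_of_nonneg_left hFge hp.le]
    · have h1 : q / η + 1 ≤ -c := by linarith
      have h2 : (q / η + 1) * z ≤ (-c) * z := mul_le_mul_of_nonneg_right h1 hz0.le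
      have h3 : q / η * η < q / η * z := mul_lt_mul_of_pos_left hcase hqη
      have h4 : q / η * η = q := div_mul_cancel₀ q hηpos.ne'
      have h5 : 0 ≤ p * Fh K (z * c) z := mul_nonneg hp.le (Fh_nonneg hKnn _ _)
      nlinarith
  set cs : ℝ := sInf Bad with hcs_def
  have hcs_le : ∀ c ∈ Bad, cs ≤ c := fun c hc => csInf_le hBadbdd hc
  -- a strictly negative point for every c > cs
  have hneg : ∀ c : ℝ, cs < c → ∃ z, 0 < z ∧ ENNReal.ofReal z < δ c ∧
      Integrable (gh K (z * c) z) μP ∧ Rfun K p q z c < 0 := by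
    intro c hc
    obtain ⟨c', hc'Bad, hc'lt⟩ := (csInf_lt_iff hBadbdd hBadne).1 hc
    obtain ⟨z', hz'0, hz'δ, hz'R⟩ := hc'Bad
    have hz'int : Integrable (gh K (z' * c') z') μP := hDint c' z' hz'0.le hz'δ
    have hmono := integrable_mono hKmeas hKnn hz'int (ae_mono_c hKnn hz'0.le hc'lt.le)
    have hδc : ENNReal.ofReal z' < δ c := lt_of_lt_of_le hz'δ (hdm hc'lt.le)
    refine ⟨z', hz'0, hδc, hmono.1, ?_⟩
    rw [Rfun_eq hmono.1]
    rw [Rfun_eq hz'int] at hz'R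
    have h1 : p * Fh K (z' * c) z' ≤ p * Fh K (z' * c') z' :=
      mul_le_mul_of_nonneg_left hmono.2 hp.le
    have h2 : c' * z' < c * z' := mul_lt_mul_of_pos_right hc'lt hz'0
    linarith
  -- two zeros at the same c, both ≥ 0, are impossible when R ≥ 0 in between
  refine ⟨cs, ?_, ?_⟩
  · intro c hc
    obtain ⟨zs, hzs0, hzsδ, hzsint, hzsneg⟩ := hneg c hc
    refine ⟨?_, ?_, ?_, ?_⟩
    · -- existence of a zero by IVT
      obtain ⟨r, hr0, hr1, hr2⟩ := ENNReal.lt_iff_exists_real_btwn.1 hzsδ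
      have hzsr : zs ≤ r := by
        by_contra hcon
        push_neg at hcon
        exact absurd (lt_of_lt_of_le hr1 (ENNReal.ofReal_le_ofReal hcon.le)) (lt_irrefl _)
      have hrint : Integrable (gh K (r * c) r) μP := hDint c r hr0 hr2
      have hcontR : ContinuousOn (fun z => Rfun K p q z c) (Set.Icc 0 zs) :=
        contR hKmeas hKnn hKint hzs0.le hzsr hrint
      have hmem : (0:ℝ) ∈ Set.Icc (Rfun K p q zs c) (Rfun K p q 0 c) := by
        rw [hRz]
        exact ⟨hzsneg.le, by linarith⟩
      obtain ⟨z, hzIcc, hzR'⟩ := intermediate_value_Icc' hzs0.le hcontR hmem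
      have hzR : Rfun K p q z c = 0 := hzR'
      have hzne : z ≠ 0 := by
        intro h
        rw [h, hRz] at hzR
        linarith
      refine ⟨z, lt_of_le_of_ne hzIcc.1 (Ne.symm hzne), ?_, hzR⟩
      exact lt_of_le_of_lt (ENNReal.ofReal_le_ofReal hzIcc.2) hzsδ
    · -- at most two zeros
      set S : Set ℝ := {z : ℝ | 0 < z ∧ ENNReal.ofReal z < δ c ∧ Rfun K p q z c = 0} with hS
      have key3 : ∀ x y u : ℝ, x ∈ S → y ∈ S → u ∈ S → x < y → y < u → False := by
        intro x y u hx hy hu hxy hyu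
        have h := (R_strict hKmeas hKnn (q := q) hp hxy hyu (hDint c x hx.1.le hx.2.1)
          (hDint c u hu.1.le hu.2.1)).2
        rw [hx.2.2, hy.2.2, hu.2.2] at h
        simp at h
      by_contra hcon
      push_neg at hcon
      have hSne : S.Nonempty := by
        rw [← Set.encard_ne_zero]
        intro h0
        rw [h0] at hcon
        exact absurd hcon (by simp)
      obtain ⟨a, ha⟩ := hSne
      have hSa : ¬ S ⊆ {a} := by
        intro hsub
        have := Set.encard_mono hsub
        rw [Set.encard_singleton] at this
        exact absurd (lt_of_le_of_lt this (by norm_num)) (not_lt.2 hcon.le)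
      obtain ⟨b, hb, hba⟩ := Set.not_subset.1 hSa
      rw [Set.mem_singleton_iff] at hba
      have hSab : ¬ S ⊆ {a, b} := by
        intro hsub
        have h1 := Set.encard_mono hsub
        rw [Set.encard_pair (Ne.symm hba)] at h1
        exact absurd (lt_of_lt_of_le hcon h1) (lt_irrefl _)
      obtain ⟨u, hu, hunab⟩ := Set.not_subset.1 hSab
      simp only [Set.mem_insert_iff, Set.mem_singleton_iff, not_or] at hunab
      obtain ⟨hua, hub⟩ := hunab
      rcases lt_trichotomy a b with h1 | h1 | h1
      · rcases lt_trichotomy u a with h2 | h2 | h2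
        · exact key3 u a b hu ha hb h2 h1
        · exact hua h2
        · rcases lt_trichotomy u b with h3 | h3 | h3
          · exact key3 a u b ha hu hb h2 h3
          · exact hub h3
          · exact key3 a b u ha hb hu h1 h3
      · exact hba h1.symm
      · rcases lt_trichotomy u b with h2 | h2 | h2
        · exact key3 u b a hu hb ha h2 h1
        · exact hub h2
        · rcases lt_trichotomy u a with h3 | h3 | h3
          · exact key3 b u a hb hu ha h2 h3
          · exact hua h3
          · exact key3 b a u hb ha hu h1 h3
    · -- no negative zeros
      intro z hzneg hIOn hR0
      have hzint : Integrable (gh K (z * c) z) μP := (intOn_iff z c).1 hIOn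
      have h := (R_strict hKmeas hKnn (q := q) hp hzneg hzs0 hzint hzsint).2
      rw [hR0, hRz, mul_zero, zero_add] at h
      have hco : 0 < (0 - z) / (zs - z) := div_pos (by linarith) (by linarith)
      have h2 : (0 - z) / (zs - z) * Rfun K p q zs c < 0 :=
        mul_neg_of_pos_of_neg hco hzsneg
      linarith
    · -- zeros are below the positive root of the quadratic
      intro z hz0 hzδ hR0
      have hzint : Integrable (gh K (z * c) z) μP := hDint c z hz0.le hzδ
      rw [Rfun_eq hzint] at hR0
      have hF := hFpos hzint
      have hquad : z ^ 2 - c * z - q < 0 := by nlinarith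
      have hs0 : 0 ≤ c ^ 2 + 4 * q := by nlinarith
      have hsq := Real.sq_sqrt hs0
      have hsnn := Real.sqrt_nonneg (c ^ 2 + 4 * q)
      by_contra hcon
      push_neg at hcon
      nlinarith
  · -- part (ii)
    intro hP
    -- sequence cₙ ↓ cs with negative points zₙ
    set cn : ℕ → ℝ := fun n => cs + 1 / (n + 1) with hcn_def
    have hcn_gt : ∀ n, cs < cn n := by
      intro n
      have : (0:ℝ) < 1 / (n + 1) := by positivity
      simp only [hcn_def]; linarith
    have hcn_le : ∀ n, cn n ≤ cs + 1 := by
      intro n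
      have h1 : (1:ℝ) ≤ (n:ℝ) + 1 := by
        have := Nat.cast_nonneg (α := ℝ) n; linarith
      have : (1:ℝ) / (n + 1) ≤ 1 := by
        rw [div_le_one (by linarith)]; linarith
      simp only [hcn_def]; linarith
    have hcn_ten : Tendsto cn atTop (nhds cs) := by
      have h1 : Tendsto (fun n : ℕ => 1 / ((n:ℝ) + 1)) atTop (nhds 0) :=
        tendsto_one_div_add_atTop_nhds_zero_nat
      have := (tendsto_const_nhds (x := cs) (f := atTop (α := ℕ))).add h1
      rw [add_zero] at this
      exact this
    choose zn hzn0 hznδ hznint hznR using fun n => hneg (cn n) (hcn_gt n)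
    -- the zₙ are bounded
    set Z : ℝ := max 1 (|cs + 1| + q + 1) with hZ_def
    have hznZ : ∀ n, zn n ∈ Set.Icc 0 Z := by
      intro n
      refine ⟨(hzn0 n).le, ?_⟩
      have hR := hznR n
      rw [Rfun_eq (hznint n)] at hR
      have hF := hFpos (hznint n)
      have hcz : cn n * zn n ≤ |cs + 1| * zn n :=
        mul_le_mul_of_nonneg_right ((hcn_le n).trans (le_abs_self _)) (hzn0 n).le
      by_contra hcon
      push_neg at hcon
      have h1 : 1 < zn n := lt_of_le_of_lt (le_max_left _ _) hcon
      have h2 : |cs + 1| + q + 1 < zn n := lt_of_le_of_lt (le_max_right _ _) hcon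
      nlinarith [abs_nonneg (cs + 1), mul_pos hp hF]
    -- Bolzano–Weierstrass
    obtain ⟨lam, hlamcl, φ, hφ, hzφ⟩ :=
      tendsto_subseq_of_bounded (Metric.isBounded_Icc 0 Z) hznZ
    rw [IsClosed.closure_eq isClosed_Icc] at hlamcl
    have hlam0 : 0 ≤ lam := hlamcl.1
    have hcφ : Tendsto (fun n => cn (φ n)) atTop (nhds cs) :=
      hcn_ten.comp hφ.tendsto_atTop
    -- joint Fatou argument at (lam, cs)
    have hab : Tendsto (fun n : ℕ => (zn (φ n) * cn (φ n), zn (φ n))) atTop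
        (nhds (lam * cs, lam)) := by
      rw [Prod.tendsto_iff]
      exact ⟨hzφ.mul hcφ, hzφ⟩
    have hβten : Tendsto (fun n : ℕ => (q + cn (φ n) * zn (φ n) - zn (φ n) ^ 2) / p) atTop
        (nhds ((q + cs * lam - lam ^ 2) / p)) := by
      apply Tendsto.div_const
      exact (tendsto_const_nhds.add (hcφ.mul hzφ)).sub (hzφ.pow 2)
    have hFle : ∀ n : ℕ, Fh K (zn (φ n) * cn (φ n)) (zn (φ n))
        ≤ (q + cn (φ n) * zn (φ n) - zn (φ n) ^ 2) / p := by
      intro n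
      have hR := hznR (φ n)
      rw [Rfun_eq (hznint (φ n))] at hR
      rw [le_div_iff₀ hp]
      linarith
    have hlin := fatou_seq hKmeas hKnn hab (fun n => hznint (φ n)) hβten hFle
    obtain ⟨hintlam, hFlam'⟩ := int_of_lintegral_le hKmeas hKnn hlin
    have hδlam : ENNReal.ofReal lam ≤ δ cs := by
      by_contra hcon
      push_neg at hcon
      exact hKdiv cs lam hcon ((intOn_iff lam cs).2 hintlam)
    have hβ0 : 0 ≤ (q + cs * lam - lam ^ 2) / p := by
      by_contra hcon
      push_neg at hcon
      rw [max_eq_right hcon.le] at hFlam'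
      exact absurd (lt_of_lt_of_le (hFpos hintlam) hFlam') (lt_irrefl _)
    have hFlam : Fh K (lam * cs) lam ≤ (q + cs * lam - lam ^ 2) / p := by
      rwa [max_eq_left hβ0] at hFlam'
    have hRlam : Rfun K p q lam cs ≤ 0 := by
      rw [Rfun_eq hintlam]
      have h1 : p * ((q + cs * lam - lam ^ 2) / p) = q + cs * lam - lam ^ 2 :=
        mul_div_cancel₀ _ hp.ne'
      nlinarith [mul_le_mul_of_nonneg_left hFlam hp.le]
    have hlampos : 0 < lam := by
      rcases eq_or_lt_of_le hlam0 with h | h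
      · exfalso
        rw [← h] at hRlam
        rw [hRz] at hRlam
        linarith
      · exact h
    -- R(·, cs) is nonnegative on the whole domain
    have claimA : ∀ z : ℝ, 0 ≤ z → ENNReal.ofReal z < δ cs → 0 ≤ Rfun K p q z cs := by
      intro z hz0 hzδ
      rcases eq_or_lt_of_le hz0 with h | hzpos
      · rw [← h, hRz]; linarith
      by_contra hcon
      push_neg at hcon
      obtain ⟨c₀, hc₀lt, hc₀δ⟩ := delta_leftsc hKmeas hKnn hδpos hKconv hKdiv hz0 hzδ
      set dk : ℕ → ℝ := fun k => cs - (cs - c₀) / (k + 1) with hdk_def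
      have hcsc₀ : 0 < cs - c₀ := by linarith
      have hdk_ge : ∀ k, c₀ ≤ dk k := by
        intro k
        have h1 : (cs - c₀) / ((k:ℝ) + 1) ≤ cs - c₀ := by
          apply div_le_self hcsc₀.le
          have := Nat.cast_nonneg (α := ℝ) k; linarith
        simp only [hdk_def]; linarith
      have hdk_lt : ∀ k, dk k < cs := by
        intro k
        have h1 : (0:ℝ) < (cs - c₀) / ((k:ℝ) + 1) := by positivity
        simp only [hdk_def]; linarith
      have hdk_ten : Tendsto dk atTop (nhds cs) := by
        have h1 : Tendsto (fun k : ℕ => (cs - c₀) * (1 / ((k:ℝ) + 1))) atTop (nhds 0) := by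
          have := tendsto_one_div_add_atTop_nhds_zero_nat.const_mul (cs - c₀)
          rwa [mul_zero] at this
        have h2 := (tendsto_const_nhds (x := cs) (f := atTop (α := ℕ))).sub h1
        rw [sub_zero] at h2
        apply h2.congr
        intro k
        simp only [hdk_def]
        ring
      have hint₀ : Integrable (gh K (z * c₀) z) μP := hDint c₀ z hz0 hc₀δ
      have hintk : ∀ k, Integrable (gh K (z * dk k) z) μP := fun k =>
        (integrable_mono hKmeas hKnn hint₀ (ae_mono_c hKnn hz0 (hdk_ge k))).1
      have htF := tendsto_F_c hKmeas hKnn hz0 hdk_ge hdk_ten hint₀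
      have hintcs : Integrable (gh K (z * cs) z) μP := hDint cs z hz0 hzδ
      have htR : Tendsto (fun k => Rfun K p q z (dk k)) atTop (nhds (Rfun K p q z cs)) := by
        have h1 : Tendsto (fun k => z ^ 2 - dk k * z - q + p * Fh K (z * dk k) z) atTop
            (nhds (z ^ 2 - cs * z - q + p * Fh K (z * cs) z)) := by
          exact ((tendsto_const_nhds.sub (hdk_ten.mul_const z)).sub tendsto_const_nhds).add
            (htF.const_mul p)
        rw [← Rfun_eq hintcs] at h1
        apply h1.congr
        intro k
        rw [← Rfun_eq (hintk k)]
      have hev : ∀ᶠ k in atTop, Rfun K p q z (dk k) < 0 :=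
        htR.eventually (eventually_lt_nhds hcon)
      obtain ⟨k, hk⟩ := hev.exists
      have hdkBad : dk k ∈ Bad :=
        ⟨z, hzpos, lt_of_lt_of_le hc₀δ (hdm (hdk_ge k)), hk.le⟩
      exact absurd (hcs_le _ hdkBad) (not_le.2 (hdk_lt k))
    -- helper : two distinct zeros are impossible
    have twozeros : ∀ x u : ℝ, 0 ≤ x → x < u → ENNReal.ofReal x < δ cs →
        ENNReal.ofReal u < δ cs → Rfun K p q x cs = 0 → Rfun K p q u cs = 0 → False := by
      intro x u hx0 hxu hxδ huδ hRx hRu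
      set m : ℝ := (x + u) / 2 with hm_def
      have hxm : x < m := by simp only [hm_def]; linarith
      have hmu : m < u := by simp only [hm_def]; linarith
      have h := (R_strict hKmeas hKnn (q := q) hp hxm hmu (hDint cs x hx0 hxδ)
        (hDint cs u (by linarith) huδ)).2
      rw [hRx, hRu, mul_zero, mul_zero, add_zero] at h
      have hm0 : 0 ≤ m := by simp only [hm_def]; linarith
      have hmδ : ENNReal.ofReal m < δ cs :=
        lt_of_le_of_lt (ENNReal.ofReal_le_ofReal hmu.le) huδ
      exact absurd (claimA m hm0 hmδ) (not_le.2 h)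
    rcases lt_or_eq_of_le hδlam with hlt | heqδ
    · -- lam is in the open domain : it is the unique zero
      have hRlam0 : Rfun K p q lam cs = 0 :=
        le_antisymm hRlam (claimA lam hlam0 hlt)
      refine ⟨lam, hlampos, hlt, hRlam0, ?_⟩
      intro z hz0 hzδ hzne
      rcases eq_or_lt_of_le hz0 with h | hzpos
      · rw [← h, hRz]; linarith
      have hA := claimA z hz0 hzδ
      rcases eq_or_lt_of_le hA with hR0 | hRpos
      · exfalso
        rcases lt_or_gt_of_ne hzne with hcase | hcase
        · exact twozeros z lam hz0 hcase hzδ hlt hR0.symm hRlam0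
        · exact twozeros lam z hlam0 hcase hlt hzδ hRlam0 hR0.symm
      · exact hRpos
    · -- boundary case : contradiction with the limit hypothesis
      exfalso
      have hδne : δ cs ≠ ⊤ := by rw [← heqδ]; exact ENNReal.ofReal_ne_top
      have hfilter : leftApproach (δ cs) = nhdsWithin lam (Set.Iio lam) := by
        rw [leftApproach, if_neg hδne, ← heqδ, ENNReal.toReal_ofReal hlam0]
      -- the upper bound near the boundary
      have hub : ∀ z : ℝ, 0 < z → z < lam → Rfun K p q z cs ≤ (1 - z / lam) * (p - q) := by
        intro z hzpos hzlam
        have hzδcs : ENNReal.ofReal z < δ cs := by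
          rw [← heqδ]
          exact (ENNReal.ofReal_lt_ofReal_iff hlampos).2 hzlam
        have hintzcs : Integrable (gh K (z * cs) z) μP := hDint cs z hzpos.le hzδcs
        obtain ⟨N, hN⟩ := Filter.eventually_atTop.1 (hzφ.eventually (eventually_gt_nhds hzlam))
        have hzψ : Tendsto (fun n => zn (φ (n + N))) atTop (nhds lam) :=
          hzφ.comp (tendsto_add_atTop_nat N)
        have hcψ : Tendsto (fun n => cn (φ (n + N))) atTop (nhds cs) :=
          hcφ.comp (tendsto_add_atTop_nat N)
        have hintz_cn : ∀ n : ℕ, Integrable (gh K (z * cn (φ (n + N))) z) μP := by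
          intro n
          apply hDint (cn (φ (n + N))) z hzpos.le
          exact lt_of_lt_of_le hzδcs (hdm (hcn_gt _).le)
        have hstrict : ∀ n : ℕ, Rfun K p q z (cn (φ (n + N)))
            ≤ (1 - z / zn (φ (n + N))) * (p - q) := by
          intro n
          have hzzn : z < zn (φ (n + N)) := hN (n + N) (Nat.le_add_left N n)
          have h := (R_strict hKmeas hKnn (q := q) hp hzpos hzzn (hint0c (cn (φ (n + N))))
            (hznint (φ (n + N)))).2
          rw [hRz] at h
          have hco : 0 < (z - 0) / (zn (φ (n + N)) - 0) :=
            div_pos (by linarith) (by linarith [hzn0 (φ (n + N))])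
          have h2 : (z - 0) / (zn (φ (n + N)) - 0) * Rfun K p q (zn (φ (n + N))) (cn (φ (n + N))) < 0 :=
            mul_neg_of_pos_of_neg hco (hznR (φ (n + N)))
          have h3 : (zn (φ (n + N)) - z) / (zn (φ (n + N)) - 0) = 1 - z / zn (φ (n + N)) := by
            rw [sub_zero, sub_div, div_self (hzn0 (φ (n + N))).ne']
          rw [h3] at h
          linarith
        have hab2 : Tendsto (fun n : ℕ => (z * cn (φ (n + N)), z)) atTop
            (nhds (z * cs, z)) := by
          rw [Prod.tendsto_iff]
          exact ⟨hcψ.const_mul z, tendsto_const_nhds⟩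
        have hβten2 : Tendsto (fun n : ℕ =>
            ((1 - z / zn (φ (n + N))) * (p - q) + q + cn (φ (n + N)) * z - z ^ 2) / p) atTop
            (nhds (((1 - z / lam) * (p - q) + q + cs * z - z ^ 2) / p)) := by
          have htmp : Tendsto (fun n : ℕ => z / zn (φ (n + N))) atTop (nhds (z / lam)) :=
            tendsto_const_nhds.div hzψ hlampos.ne'
          have t1 : Tendsto (fun n : ℕ => (1 - z / zn (φ (n + N))) * (p - q)) atTop
              (nhds ((1 - z / lam) * (p - q))) :=
            (tendsto_const_nhds.sub htmp).mul_const (p - q)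
          exact ((((t1.add tendsto_const_nhds).add (hcψ.mul_const z)).sub
            tendsto_const_nhds).div_const p)
        have hFle2 : ∀ n : ℕ, Fh K (z * cn (φ (n + N))) z
            ≤ ((1 - z / zn (φ (n + N))) * (p - q) + q + cn (φ (n + N)) * z - z ^ 2) / p := by
          intro n
          have h := hstrict n
          rw [Rfun_eq (hintz_cn n)] at h
          rw [le_div_iff₀ hp]
          linarith
        have hlin2 := fatou_seq hKmeas hKnn hab2 hintz_cn hβten2 hFle2
        obtain ⟨hint2, hFle2'⟩ := int_of_lintegral_le hKmeas hKnn hlin2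
        set β' : ℝ := ((1 - z / lam) * (p - q) + q + cs * z - z ^ 2) / p with hβ'def
        have hβ'0 : 0 ≤ β' := by
          by_contra hcon
          push_neg at hcon
          rw [max_eq_right hcon.le] at hFle2'
          exact absurd (lt_of_lt_of_le (hFpos hint2) hFle2') (lt_irrefl _)
        have hF2 : Fh K (z * cs) z ≤ β' := by rwa [max_eq_left hβ'0] at hFle2'
        rw [Rfun_eq hintzcs]
        have h1 : p * β' = (1 - z / lam) * (p - q) + q + cs * z - z ^ 2 := by
          rw [hβ'def, mul_div_cancel₀ _ hp.ne']
        linarith [mul_le_mul_of_nonneg_left hF2 hp.le]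
      -- squeeze to get the limit, contradicting hP
      have hupper_t : Tendsto (fun z : ℝ => (1 - z / lam) * (p - q))
          (nhdsWithin lam (Set.Iio lam)) (nhds 0) := by
        have hcontu : Continuous fun z : ℝ => (1 - z / lam) * (p - q) :=
          ((continuous_const.sub (continuous_id.div_const lam)).mul continuous_const)
        have h0 : (1 - lam / lam) * (p - q) = 0 := by
          rw [div_self hlampos.ne']; ring
        have := hcontu.tendsto lam
        rw [h0] at this
        exact this.mono_left nhdsWithin_le_nhds
      have hT : Tendsto (fun z => Rfun K p q z cs) (nhdsWithin lam (Set.Iio lam)) (nhds 0) := by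
        apply tendsto_of_tendsto_of_tendsto_of_le_of_le' tendsto_const_nhds hupper_t
        · filter_upwards [Ioo_mem_nhdsLT_of_mem (show lam ∈ Set.Ioc 0 lam from
            ⟨hlampos, le_refl _⟩)] with z hz
          apply claimA z hz.1.le
          rw [← heqδ]
          exact (ENNReal.ofReal_lt_ofReal_iff hlampos).2 hz.2
        · filter_upwards [Ioo_mem_nhdsLT_of_mem (show lam ∈ Set.Ioc 0 lam from
            ⟨hlampos, le_refl _⟩)] with z hz
          exact hub z hz.1 hz.2
      rw [← hfilter] at hT
      exact hP hT
end
end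

section
/- Let β > 0, c ∈ ℝ, let ν(c) < 0 < μ(c) be the two real roots of z² − cz − β = 0, σ(c) = √(c² + 4β), and define k₁(s) = σ(c)⁻¹·e^{ν(c)s} for s ≥ 0 and k₁(s) = σ(c)⁻¹·e^{μ(c)s} for s < 0, and k₂(r) = ∫₀^∞ K(s, r − cs) ds. Let L > 0, q₀ := inf_{s≥0} f'(s), and χ_L(z,c) := z² − cz − q₀ + L·∫₀^∞∫_ℝ K(s,w)·e^{−z(cs+w)} dw ds. Then for every m with 0 < m < μ(c) and m < γ#(c), and for every t ∈ ℝ: L·∫_ℝ (k₁ * k₂)(s)·e^{m(t−s)} ds + (β − q₀)·∫_ℝ k₁(s)·e^{m(t−s)} ds = e^{mt}·(1 + χ_L(m,c)/(β + cm − m²)). In particular this quantity equals e^{mt} when χ_L(m,c) = 0, and is strictly less than e^{mt} when χ_L(m,c) < 0. -/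
open MeasureTheory Filter Set
open scoped ENNReal
open scoped Topology

noncomputable section

/-- positive root `μ(c)` of `z² - cz - β = 0`. -/
def muRoot (β c : ℝ) : ℝ := (c + Real.sqrt (c ^ 2 + 4 * β)) / 2

/-- negative root `ν(c)` of `z² - cz - β = 0`. -/
def nuRoot (β c : ℝ) : ℝ := (c - Real.sqrt (c ^ 2 + 4 * β)) / 2

/-- the Green's function kernel `k₁`. -/
def k1 (β c : ℝ) (s : ℝ) : ℝ :=
  if 0 ≤ s then Real.exp (nuRoot β c * s) / Real.sqrt (c ^ 2 + 4 * β)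
  else Real.exp (muRoot β c * s) / Real.sqrt (c ^ 2 + 4 * β)

/-- the kernel `k₂(r) = ∫₀^∞ K(s, r - cs) ds`. -/
def k2 (K : ℝ → ℝ → ℝ) (c : ℝ) (r : ℝ) : ℝ := ∫ s in Set.Ioi (0:ℝ), K s (r - c * s)

/-- convolution of two functions on `ℝ`. -/
def conv (a b : ℝ → ℝ) (t : ℝ) : ℝ := ∫ r : ℝ, a (t - r) * b r

/-- `χ_L(z,c) = z² - cz - q₀ + L ∫₀^∞∫_ℝ K(s,w) e^{-z(cs+w)}`. -/
def chiL (K : ℝ → ℝ → ℝ) (q₀ L : ℝ) (z c : ℝ) : ℝ :=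
  z ^ 2 - c * z - q₀ +
    L * ∫ s in Set.Ioi (0:ℝ), ∫ w : ℝ, K s w * Real.exp (-z * (c * s + w))

/-! ### Auxiliary lemmas -/

lemma integrableOn_exp_mul_Ioi' {b : ℝ} (hb : b < 0) :
    IntegrableOn (fun s => Real.exp (b * s)) (Set.Ioi (0:ℝ)) := by
  have h := exp_neg_integrableOn_Ioi (0:ℝ) (show (0:ℝ) < -b by linarith)
  simpa using h

lemma integral_exp_mul_Ioi' {b : ℝ} (hb : b < 0) :
    ∫ s in Set.Ioi (0:ℝ), Real.exp (b * s) = -b⁻¹ := by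
  have hd : ∀ x ∈ Set.Ici (0:ℝ),
      HasDerivAt (fun y => Real.exp (b * y) / b) (Real.exp (b * x)) x := by
    intro x _
    have h1 : HasDerivAt (fun y : ℝ => b * y) b x := by
      simpa using (hasDerivAt_id x).const_mul b
    have h3 := h1.exp.div_const b
    simpa [mul_div_cancel_right₀ _ hb.ne] using h3
  have hl : Tendsto (fun y => Real.exp (b * y) / b) atTop (𝓝 0) := by
    have h1 : Tendsto (fun y : ℝ => b * y) atTop atBot :=
      (tendsto_const_mul_atBot_of_neg hb).mpr tendsto_id
    have := (Real.tendsto_exp_atBot.comp h1).div_const b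
    simpa using this
  have h := integral_Ioi_of_hasDerivAt_of_tendsto' hd (integrableOn_exp_mul_Ioi' hb) hl
  simpa [one_div] using h

lemma integrableOn_exp_mul_Iic' {b : ℝ} (hb : 0 < b) :
    IntegrableOn (fun s => Real.exp (b * s)) (Set.Iic (0:ℝ)) := by
  rw [← Measure.map_neg_eq_self (volume : Measure ℝ)]
  have m : MeasurableEmbedding fun x : ℝ => -x := (Homeomorph.neg ℝ).measurableEmbedding
  rw [m.integrableOn_map_iff]
  simp only [Function.comp_def, neg_preimage, neg_Iic, neg_zero, mul_neg]
  refine Iff.mpr integrableOn_Ici_iff_integrableOn_Ioi ?_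
  simpa [neg_mul] using exp_neg_integrableOn_Ioi (0:ℝ) hb

lemma integral_exp_mul_Iic' {b : ℝ} (hb : 0 < b) :
    ∫ s in Set.Iic (0:ℝ), Real.exp (b * s) = b⁻¹ := by
  have hd : ∀ x ∈ Set.Iic (0:ℝ),
      HasDerivAt (fun y => Real.exp (b * y) / b) (Real.exp (b * x)) x := by
    intro x _
    have h1 : HasDerivAt (fun y : ℝ => b * y) b x := by
      simpa using (hasDerivAt_id x).const_mul b
    have h3 := h1.exp.div_const b
    simpa [mul_div_cancel_right₀ _ hb.ne'] using h3
  have hl : Tendsto (fun y => Real.exp (b * y) / b) atBot (𝓝 0) := by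
    have h1 : Tendsto (fun y : ℝ => b * y) atBot atBot :=
      (tendsto_const_mul_atBot_of_pos hb).mpr (tendsto_id (α := ℝ))
    have := (Real.tendsto_exp_atBot.comp h1).div_const b
    simpa using this
  have h := integral_Iic_of_hasDerivAt_of_tendsto' hd (integrableOn_exp_mul_Iic' hb) hl
  simpa [one_div] using h

lemma root_facts (β c : ℝ) (hβ : 0 < β) :
    nuRoot β c < 0 ∧ muRoot β c - nuRoot β c = Real.sqrt (c ^ 2 + 4 * β) ∧
      (∀ m : ℝ, β + c * m - m ^ 2 = (m - nuRoot β c) * (muRoot β c - m)) := by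
  have hpos : (0:ℝ) < c ^ 2 + 4 * β := by positivity
  have hσ : 0 < Real.sqrt (c ^ 2 + 4 * β) := Real.sqrt_pos.mpr hpos
  have hσsq : Real.sqrt (c ^ 2 + 4 * β) ^ 2 = c ^ 2 + 4 * β := Real.sq_sqrt hpos.le
  refine ⟨?_, by unfold muRoot nuRoot; ring, ?_⟩
  · unfold nuRoot
    nlinarith [hσ, hσsq, hβ, sq_nonneg (Real.sqrt (c ^ 2 + 4 * β) - c)]
  · intro m
    have hsum : muRoot β c + nuRoot β c = c := by unfold muRoot nuRoot; ring
    have hprod : muRoot β c * nuRoot β c = -β := by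
      unfold muRoot nuRoot
      linear_combination (-(1:ℝ)/4) * hσsq
    linear_combination (-m) * hsum + hprod

lemma k1_facts (β c m : ℝ) (hβ : 0 < β) (hm : 0 < m) (hmμ : m < muRoot β c) :
    Integrable (fun s => k1 β c s * Real.exp (-(m * s))) volume ∧
    (∫ s : ℝ, k1 β c s * Real.exp (-(m * s))) = (β + c * m - m ^ 2)⁻¹ := by
  obtain ⟨hν, hμν, hD⟩ := root_facts β c hβ
  have hpos : (0:ℝ) < c ^ 2 + 4 * β := by positivity
  have hσ : 0 < Real.sqrt (c ^ 2 + 4 * β) := Real.sqrt_pos.mpr hpos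
  set σ := Real.sqrt (c ^ 2 + 4 * β) with hσdef
  set ν := nuRoot β c with hνdef
  set μ := muRoot β c with hμdef
  have hb1 : ν - m < 0 := by linarith
  have hb2 : 0 < μ - m := by linarith
  have heq1 : EqOn (fun s => k1 β c s * Real.exp (-(m * s)))
      (fun s => Real.exp ((ν - m) * s) * σ⁻¹) (Set.Ioi (0:ℝ)) := by
    intro s hs
    have h0 : (0:ℝ) ≤ s := le_of_lt hs
    simp only [k1, if_pos h0, ← hνdef, ← hσdef]
    rw [div_mul_eq_mul_div, ← Real.exp_add, div_eq_mul_inv]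
    ring_nf
  have heq2 : EqOn (fun s => k1 β c s * Real.exp (-(m * s)))
      (fun s => Real.exp ((μ - m) * s) * σ⁻¹) (Set.Iic (0:ℝ)) := by
    intro s hs
    by_cases h0 : (0:ℝ) ≤ s
    · have : s = 0 := le_antisymm hs h0
      subst this
      simp [k1, hσdef]
    · simp only [k1, if_neg h0, ← hμdef, ← hσdef]
      rw [div_mul_eq_mul_div, ← Real.exp_add, div_eq_mul_inv]
      ring_nf
  have hIoi : IntegrableOn (fun s => k1 β c s * Real.exp (-(m * s))) (Set.Ioi (0:ℝ)) := by
    exact IntegrableOn.congr_fun ((integrableOn_exp_mul_Ioi' hb1).mul_const σ⁻¹)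
      (fun s hs => (heq1 hs).symm) measurableSet_Ioi
  have hIic : IntegrableOn (fun s => k1 β c s * Real.exp (-(m * s))) (Set.Iic (0:ℝ)) := by
    exact IntegrableOn.congr_fun ((integrableOn_exp_mul_Iic' hb2).mul_const σ⁻¹)
      (fun s hs => (heq2 hs).symm) measurableSet_Iic
  have hint : Integrable (fun s => k1 β c s * Real.exp (-(m * s))) volume := by
    have h := hIic.union hIoi
    rwa [Set.Iic_union_Ioi, integrableOn_univ] at h
  refine ⟨hint, ?_⟩
  rw [← intervalIntegral.integral_Iic_add_Ioi hIic hIoi]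
  have hI1 : (∫ s in Set.Ioi (0:ℝ), k1 β c s * Real.exp (-(m * s)))
      = -(ν - m)⁻¹ * σ⁻¹ := by
    rw [setIntegral_congr_fun measurableSet_Ioi heq1, integral_mul_const,
      integral_exp_mul_Ioi' hb1]
  have hI2 : (∫ s in Set.Iic (0:ℝ), k1 β c s * Real.exp (-(m * s)))
      = (μ - m)⁻¹ * σ⁻¹ := by
    rw [setIntegral_congr_fun measurableSet_Iic heq2, integral_mul_const,
      integral_exp_mul_Iic' hb2]
  rw [hI1, hI2, hD m]
  have hxy : σ = (m - ν) + (μ - m) := by rw [← hμν]; ring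
  have h1 : m - ν ≠ 0 := by intro h; linarith [hν, hm, (by linarith [h] : m = ν)]
  have h2 : μ - m ≠ 0 := ne_of_gt hb2
  have h4 : (m - ν) + (μ - m) ≠ 0 := ne_of_gt (by linarith)
  have h5 : -(ν - m)⁻¹ = (m - ν)⁻¹ := by
    rw [← inv_neg]; ring_nf
  have key : ∀ x y : ℝ, x ≠ 0 → y ≠ 0 → x + y ≠ 0 →
      y⁻¹ * (x + y)⁻¹ + x⁻¹ * (x + y)⁻¹ = (x * y)⁻¹ := by
    intro x y hx hy hxy0
    field_simp
  rw [hxy, h5]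
  exact key (m - ν) (μ - m) h1 h2 h4

lemma k2_facts (K : ℝ → ℝ → ℝ) (c m : ℝ)
    (hconv : IntegrableOn (fun x : ℝ × ℝ => K x.1 x.2 * Real.exp (-m * (c * x.1 + x.2)))
      (Set.Ioi 0 ×ˢ Set.univ)) :
    Integrable (fun r => k2 K c r * Real.exp (-(m * r))) volume ∧
    (∫ r : ℝ, k2 K c r * Real.exp (-(m * r)))
      = ∫ s in Set.Ioi (0:ℝ), ∫ w : ℝ, K s w * Real.exp (-m * (c * s + w)) := by
  set μ₁ : Measure ℝ := volume.restrict (Set.Ioi 0) with hμ₁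
  set h : ℝ × ℝ → ℝ := fun p => K p.1 p.2 * Real.exp (-m * (c * p.1 + p.2)) with hh
  have hρ : Integrable h (μ₁.prod volume) := by
    have := hconv
    rw [IntegrableOn, Measure.volume_eq_prod, ← Measure.prod_restrict,
      Measure.restrict_univ] at this
    exact this
  set T : ℝ × ℝ → ℝ × ℝ := fun p => (p.1, p.2 - c * p.1) with hT
  have mpT : MeasurePreserving T (μ₁.prod volume) (μ₁.prod volume) := by
    refine (MeasurePreserving.id μ₁).skew_product (g := fun a r => r - c * a)
      (measurable_snd.sub (measurable_fst.const_mul c)) (ae_of_all _ fun a => ?_)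
    simp_rw [sub_eq_add_neg]
    exact map_add_right_eq_self volume _
  have hmeas_h : AEStronglyMeasurable h (μ₁.prod volume) := hρ.1
  set g : ℝ × ℝ → ℝ := fun p => K p.1 (p.2 - c * p.1) * Real.exp (-m * p.2) with hg
  have hgT : g = h ∘ T := by
    funext p
    simp only [hg, hh, hT, Function.comp]
    rw [show c * p.1 + (p.2 - c * p.1) = p.2 by ring]
  have gInt : Integrable g (μ₁.prod volume) := by
    rw [hgT]
    exact (mpT.integrable_comp hmeas_h).mpr hρ
  have bdef : ∀ r : ℝ, k2 K c r * Real.exp (-(m * r)) = ∫ s, g (s, r) ∂μ₁ := by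
    intro r
    rw [k2, hμ₁, ← integral_mul_const]
    congr 1 with s
    simp only [hg, neg_mul]
  have bInt : Integrable (fun r => k2 K c r * Real.exp (-(m * r))) volume := by
    have := gInt.swap.integral_prod_left
    refine this.congr ?_
    filter_upwards with r
    exact (bdef r).symm
  refine ⟨bInt, ?_⟩
  have hswap : (∫ r : ℝ, ∫ s, g (s, r) ∂μ₁) = ∫ s, (∫ r : ℝ, g (s, r)) ∂μ₁ :=
    (integral_integral_swap (f := fun s r => g (s, r)) (by exact gInt)).symm
  have hinner : ∀ s : ℝ, (∫ r : ℝ, g (s, r)) = ∫ w : ℝ, h (s, w) := by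
    intro s
    have := integral_sub_right_eq_self (μ := (volume : Measure ℝ)) (fun w => h (s, w)) (c * s)
    simpa [hg, hh] using this
  calc (∫ r : ℝ, k2 K c r * Real.exp (-(m * r))) = ∫ r : ℝ, ∫ s, g (s, r) ∂μ₁ := by
        congr 1 with r; exact bdef r
    _ = ∫ s, (∫ r : ℝ, g (s, r)) ∂μ₁ := hswap
    _ = ∫ s, (∫ w : ℝ, h (s, w)) ∂μ₁ := by congr 1 with s; exact hinner s
    _ = _ := rfl

/-- The key computation of `L ∫ (k₁*k₂)(s) e^{m(t-s)} ds + (β-q₀) ∫ k₁(s) e^{m(t-s)} ds`. -/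
theorem exponential_eigenfunction_identity
    (K : ℝ → ℝ → ℝ) (γsharp : ℝ → ℝ≥0∞) (f f' : ℝ → ℝ) (β c L q₀ : ℝ)
    (hβ : 0 < β) (hL : 0 < L)
    (hKmeas : Measurable fun x : ℝ × ℝ => K x.1 x.2)
    (hKnn : ∀ s w, 0 ≤ K s w)
    (hKint : IntegrableOn (fun x : ℝ × ℝ => K x.1 x.2) (Set.Ioi 0 ×ˢ Set.univ))
    (hKnorm : (∫ s in Set.Ioi (0:ℝ), ∫ w : ℝ, K s w) = 1)
    (hγpos : ∀ c', 0 < γsharp c')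
    (hKconv : ∀ c' z : ℝ, 0 ≤ z → ENNReal.ofReal z < γsharp c' →
      IntegrableOn (fun x : ℝ × ℝ => K x.1 x.2 * Real.exp (-z * (c' * x.1 + x.2)))
        (Set.Ioi 0 ×ˢ Set.univ))
    (hKdiv : ∀ c' z : ℝ, γsharp c' < ENNReal.ofReal z →
      ¬ IntegrableOn (fun x : ℝ × ℝ => K x.1 x.2 * Real.exp (-z * (c' * x.1 + x.2)))
        (Set.Ioi 0 ×ˢ Set.univ))
    -- f ∈ C¹(ℝ₊, ℝ₊) with q₀ = inf f' < β
    (hfd : ∀ s, 0 ≤ s → HasDerivWithinAt f (f' s) (Set.Ici 0) s)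
    (hf'c : ContinuousOn f' (Set.Ici 0))
    (hfnn : ∀ s, 0 ≤ s → 0 ≤ f s)
    (hq₀ : q₀ = sInf (f' '' Set.Ici 0))
    (hq₀β : q₀ < β) :
    ∀ m t : ℝ, 0 < m → m < muRoot β c → ENNReal.ofReal m < γsharp c →
      (L * (∫ s : ℝ, conv (k1 β c) (k2 K c) s * Real.exp (m * (t - s))) +
        (β - q₀) * (∫ s : ℝ, k1 β c s * Real.exp (m * (t - s)))
        = Real.exp (m * t) * (1 + chiL K q₀ L m c / (β + c * m - m ^ 2))) ∧
      (chiL K q₀ L m c = 0 →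
        L * (∫ s : ℝ, conv (k1 β c) (k2 K c) s * Real.exp (m * (t - s))) +
          (β - q₀) * (∫ s : ℝ, k1 β c s * Real.exp (m * (t - s)))
          = Real.exp (m * t)) ∧
      (chiL K q₀ L m c < 0 →
        L * (∫ s : ℝ, conv (k1 β c) (k2 K c) s * Real.exp (m * (t - s))) +
          (β - q₀) * (∫ s : ℝ, k1 β c s * Real.exp (m * (t - s)))
          < Real.exp (m * t)) := by
  intro m t hm hmμ hmγ
  obtain ⟨aInt, hA⟩ := k1_facts β c m hβ hm hmμ
  obtain ⟨bInt, hB⟩ := k2_facts K c m (hKconv c m hm.le hmγ)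
  obtain ⟨hν, hμν, hDfac⟩ := root_facts β c hβ
  have hDpos : 0 < β + c * m - m ^ 2 := by
    rw [hDfac m]; exact mul_pos (by linarith) (by linarith)
  set a : ℝ → ℝ := fun s => k1 β c s * Real.exp (-(m * s)) with ha
  set b : ℝ → ℝ := fun r => k2 K c r * Real.exp (-(m * r)) with hb
  have hexp : ∀ s : ℝ, Real.exp (m * (t - s)) = Real.exp (m * t) * Real.exp (-(m * s)) := by
    intro s; rw [← Real.exp_add]; ring_nf
  -- second term
  have hT2 : (∫ s : ℝ, k1 β c s * Real.exp (m * (t - s)))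
      = Real.exp (m * t) * (β + c * m - m ^ 2)⁻¹ := by
    calc (∫ s : ℝ, k1 β c s * Real.exp (m * (t - s)))
        = ∫ s : ℝ, Real.exp (m * t) * a s := by
          congr 1 with s; rw [hexp s, ha]; ring
      _ = Real.exp (m * t) * ∫ s : ℝ, a s := integral_const_mul _ _
      _ = _ := by rw [hA]
  -- first term
  have hconvpt : ∀ s : ℝ, conv (k1 β c) (k2 K c) s * Real.exp (m * (t - s))
      = Real.exp (m * t) * (∫ r : ℝ, b r * a (s - r)) := by
    intro s
    rw [conv, hexp s,
      show (∫ r : ℝ, k1 β c (s - r) * k2 K c r) * (Real.exp (m * t) * Real.exp (-(m * s)))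
        = Real.exp (m * t) * ((∫ r : ℝ, k1 β c (s - r) * k2 K c r) * Real.exp (-(m * s)))
        by ring, ← integral_mul_const]
    congr 1
    congr 1 with r
    have hsplit : Real.exp (-(m * s)) = Real.exp (-(m * r)) * Real.exp (-(m * (s - r))) := by
      rw [← Real.exp_add]; ring_nf
    rw [hsplit, ha, hb]
    ring
  have hconvtotal : (∫ s : ℝ, ∫ r : ℝ, b r * a (s - r))
      = (∫ r : ℝ, b r) * ∫ s : ℝ, a s := by
    have hci := integral_convolution (L := ContinuousLinearMap.mul ℝ ℝ)
      (μ := (volume : Measure ℝ)) (ν := (volume : Measure ℝ)) bInt aInt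
    simpa [convolution, ContinuousLinearMap.mul_apply'] using hci
  have hT1 : (∫ s : ℝ, conv (k1 β c) (k2 K c) s * Real.exp (m * (t - s)))
      = Real.exp (m * t) *
        ((∫ s in Set.Ioi (0:ℝ), ∫ w : ℝ, K s w * Real.exp (-m * (c * s + w)))
          * (β + c * m - m ^ 2)⁻¹) := by
    calc (∫ s : ℝ, conv (k1 β c) (k2 K c) s * Real.exp (m * (t - s)))
        = ∫ s : ℝ, Real.exp (m * t) * (∫ r : ℝ, b r * a (s - r)) := by
          congr 1 with s; exact hconvpt s
      _ = Real.exp (m * t) * ∫ s : ℝ, ∫ r : ℝ, b r * a (s - r) := integral_const_mul _ _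
      _ = _ := by rw [hconvtotal, hB, hA]
  have hDne : β + c * m - m ^ 2 ≠ 0 := ne_of_gt hDpos
  have hmain : L * (∫ s : ℝ, conv (k1 β c) (k2 K c) s * Real.exp (m * (t - s))) +
      (β - q₀) * (∫ s : ℝ, k1 β c s * Real.exp (m * (t - s)))
      = Real.exp (m * t) * (1 + chiL K q₀ L m c / (β + c * m - m ^ 2)) := by
    rw [hT1, hT2, chiL, div_eq_mul_inv]
    have hDinv : (β + c * m - m ^ 2) * (β + c * m - m ^ 2)⁻¹ = 1 := mul_inv_cancel₀ hDne
    linear_combination (Real.exp (m * t)) * hDinv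
  refine ⟨hmain, ?_, ?_⟩
  · intro hz
    rw [hmain, hz]
    simp
  · intro hz
    rw [hmain]
    have h1 : chiL K q₀ L m c / (β + c * m - m ^ 2) < 0 := div_neg_of_neg_of_pos hz hDpos
    nlinarith [Real.exp_pos (m * t)]
end
end

section
/- Assume (H0)–(H2) and let β > f'(0) be large enough that βs − f(s) ≥ 0 for all s in the range of φ. If φ : ℝ → ℝ₊ is a bounded, nonnegative, twice continuously differentiable solution of the profile equation y''(t) − c·y'(t) − f(y(t)) + ∫₀^∞∫_ℝ K(s,w)·g(y(t − cs − w)) dw ds = 0 on ℝ, and φ(t₀) = 0 for some t₀ ∈ ℝ, then φ(t) = 0 for all t ∈ ℝ. -/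
open MeasureTheory Filter Set
open scoped ENNReal

noncomputable section

/-- The traveling-wave profile equation. -/
def ProfileEq (K : ℝ → ℝ → ℝ) (f g : ℝ → ℝ) (c : ℝ) (φ : ℝ → ℝ) : Prop :=
  ∀ t : ℝ, deriv (deriv φ) t - c * deriv φ t - f (φ t)
      + (∫ s in Set.Ioi (0:ℝ), ∫ w : ℝ, K s w * g (φ (t - c * s - w))) = 0

/-- A bounded nonnegative solution of the profile equation vanishing at one point
vanishes identically. -/
theorem vanishing_point_implies_zero
    (K : ℝ → ℝ → ℝ) (γsharp : ℝ → ℝ≥0∞)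
    (f f' g : ℝ → ℝ) (g'0 β c : ℝ) (φ : ℝ → ℝ)
    -- (H0)
    (hKmeas : Measurable fun x : ℝ × ℝ => K x.1 x.2)
    (hKnn : ∀ s w, 0 ≤ K s w)
    (hKint : IntegrableOn (fun x : ℝ × ℝ => K x.1 x.2) (Set.Ioi 0 ×ˢ Set.univ))
    (hKnorm : (∫ s in Set.Ioi (0:ℝ), ∫ w : ℝ, K s w) = 1)
    (hγpos : ∀ c', 0 < γsharp c')
    (hKconv : ∀ c' z : ℝ, 0 ≤ z → ENNReal.ofReal z < γsharp c' →
      IntegrableOn (fun x : ℝ × ℝ => K x.1 x.2 * Real.exp (-z * (c' * x.1 + x.2)))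
        (Set.Ioi 0 ×ˢ Set.univ))
    (hKdiv : ∀ c' z : ℝ, γsharp c' < ENNReal.ofReal z →
      ¬ IntegrableOn (fun x : ℝ × ℝ => K x.1 x.2 * Real.exp (-z * (c' * x.1 + x.2)))
        (Set.Ioi 0 ×ˢ Set.univ))
    -- (H1)
    (hgc : ContinuousOn g (Set.Ici 0))
    (hgnn : ∀ s, 0 ≤ s → 0 ≤ g s)
    (hg0 : g 0 = 0)
    (hgpos : ∀ s, 0 < s → 0 < g s)
    (hgd : HasDerivWithinAt g g'0 (Set.Ici 0) 0)
    -- (H2)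
    (hfd : ∀ s, 0 ≤ s → HasDerivWithinAt f (f' s) (Set.Ici 0) s)
    (hf'c : ContinuousOn f' (Set.Ici 0))
    (hfnn : ∀ s, 0 ≤ s → 0 ≤ f s)
    (hfmono : StrictMonoOn f (Set.Ici 0))
    (hf0 : f 0 = 0)
    (hf'0pos : 0 < f' 0) (hf'0lt : f' 0 < g'0)
    (hgbdd : BddAbove (g '' Set.Ici 0))
    (hfinf : ∃ s₀, 0 ≤ s₀ ∧ sSup (g '' Set.Ici 0) < f s₀)
    -- β is large enough: β > f'(0) and βs - f(s) ≥ 0 on the range of φ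
    (hβ : f' 0 < β)
    (hβrange : ∀ t, 0 ≤ β * φ t - f (φ t))
    -- φ is a bounded nonnegative C² solution
    (hφC2 : ContDiff ℝ 2 φ)
    (hφnn : ∀ t, 0 ≤ φ t)
    (hφbdd : ∃ M, ∀ t, |φ t| ≤ M)
    (hφsol : ProfileEq K f g c φ)
    -- φ vanishes at some point
    (t₀ : ℝ) (hφt₀ : φ t₀ = 0) :
    ∀ t, φ t = 0 := by
  have hβpos : 0 < β := lt_trans hf'0pos hβ
  have hφd : Differentiable ℝ φ := hφC2.differentiable (by norm_num)
  have hφd2 : Differentiable ℝ (deriv φ) := by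
    have h2 : ContDiff ℝ ((1:ℕ) + 1) φ := by exact_mod_cast hφC2
    exact ((contDiff_succ_iff_deriv.mp h2).2.2).differentiable (by norm_num)
  -- derivative vanishes at the minimum
  have hmin : IsLocalMin φ t₀ := Filter.Eventually.of_forall fun t => by
    rw [hφt₀]; exact hφnn t
  have hd0 : deriv φ t₀ = 0 := hmin.deriv_eq_zero
  -- nonnegativity of the nonlocal term
  have hI : ∀ t, 0 ≤ ∫ s in Set.Ioi (0:ℝ), ∫ w : ℝ, K s w * g (φ (t - c * s - w)) :=
    fun t => setIntegral_nonneg measurableSet_Ioi fun s _ =>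
      integral_nonneg fun w => mul_nonneg (hKnn s w) (hgnn _ (hφnn _))
  -- the key differential inequality
  have key : ∀ t, deriv (deriv φ) t - c * deriv φ t - β * φ t ≤ 0 := by
    intro t
    have h := hφsol t
    have h1 := hβrange t
    have h2 := hI t
    linarith
  -- roots of λ² - cλ - β = 0
  set D : ℝ := Real.sqrt (c ^ 2 + 4 * β) with hD
  have hDsq : D ^ 2 = c ^ 2 + 4 * β := Real.sq_sqrt (by positivity)
  set lp : ℝ := (c + D) / 2 with hlp
  set lm : ℝ := (c - D) / 2 with hlm
  have hsum : lm + lp = c := by rw [hlp, hlm]; ring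
  have hprod : lm * lp = -β := by
    have : lm * lp = (c ^ 2 - D ^ 2) / 4 := by rw [hlp, hlm]; ring
    rw [this, hDsq]; ring
  -- first factor: v = φ' - lm φ
  set v : ℝ → ℝ := fun t => deriv φ t - lm * φ t with hv
  have hdv : ∀ t, HasDerivAt v (deriv (deriv φ) t - lm * deriv φ t) t := fun t =>
    ((hφd2 t).hasDerivAt).sub (((hφd t).hasDerivAt).const_mul lm)
  have hvt₀ : v t₀ = 0 := by simp [hv, hd0, hφt₀]
  -- w = exp(-lp t) * v is antitone
  set W : ℝ → ℝ := fun t => Real.exp (-lp * t) * v t with hW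
  have hdW : ∀ t, HasDerivAt W
      (Real.exp (-lp * t) * (-lp * 1) * v t
        + Real.exp (-lp * t) * (deriv (deriv φ) t - lm * deriv φ t)) t := fun t =>
    (((hasDerivAt_id t).const_mul (-lp)).exp).mul (hdv t)
  have hWderiv_nonpos : ∀ t, deriv W t ≤ 0 := by
    intro t
    rw [(hdW t).deriv]
    have heq : Real.exp (-lp * t) * (-lp * 1) * v t
        + Real.exp (-lp * t) * (deriv (deriv φ) t - lm * deriv φ t)
        = Real.exp (-lp * t)
          * (deriv (deriv φ) t - (lm + lp) * deriv φ t + (lm * lp) * φ t) := by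
      rw [hv]; ring
    rw [heq, hsum, hprod]
    have h1 : deriv (deriv φ) t - c * deriv φ t + (-β) * φ t ≤ 0 := by
      have := key t; linarith
    exact mul_nonpos_of_nonneg_of_nonpos (Real.exp_nonneg _) h1
  have hWanti : Antitone W :=
    antitone_of_deriv_nonpos (fun t => (hdW t).differentiableAt) hWderiv_nonpos
  have hWt₀ : W t₀ = 0 := by simp [hW, hvt₀]
  -- sign of v on both sides of t₀
  have hvle : ∀ t, t₀ ≤ t → v t ≤ 0 := by
    intro t ht
    have h1 : W t ≤ 0 := hWt₀ ▸ hWanti ht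
    have hWt : W t = Real.exp (-lp * t) * v t := rfl
    have hexp : 0 < Real.exp (-lp * t) := Real.exp_pos _
    nlinarith [h1, hWt, hexp]
  have hvge : ∀ t, t ≤ t₀ → 0 ≤ v t := by
    intro t ht
    have h1 : 0 ≤ W t := hWt₀ ▸ hWanti ht
    have hWt : W t = Real.exp (-lp * t) * v t := rfl
    have hexp : 0 < Real.exp (-lp * t) := Real.exp_pos _
    nlinarith [h1, hWt, hexp]
  -- second factor: p = exp(-lm t) * φ
  set P : ℝ → ℝ := fun t => Real.exp (-lm * t) * φ t with hP
  have hdP : ∀ t, HasDerivAt P (Real.exp (-lm * t) * v t) t := by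
    intro t
    have he : HasDerivAt (fun t : ℝ => Real.exp (-lm * t)) (Real.exp (-lm * t) * (-lm * 1)) t :=
      (((hasDerivAt_id t).const_mul (-lm)).exp)
    have := he.mul ((hφd t).hasDerivAt)
    exact this.congr_deriv (by rw [hv]; ring)
  have hPnn : ∀ t, 0 ≤ P t := fun t => mul_nonneg (Real.exp_nonneg _) (hφnn t)
  have hPt₀ : P t₀ = 0 := by simp [hP, hφt₀]
  have hPdiff : Differentiable ℝ P := fun t => (hdP t).differentiableAt
  intro t
  have hPt0 : P t = 0 := by
    rcases le_total t₀ t with ht | ht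
    · -- P antitone on [t₀, ∞)
      have hanti : AntitoneOn P (Set.Ici t₀) := by
        apply antitoneOn_of_deriv_nonpos (convex_Ici t₀) hPdiff.continuous.continuousOn
          (hPdiff.differentiableOn)
        intro x hx
        rw [interior_Ici] at hx
        rw [(hdP x).deriv]
        exact mul_nonpos_of_nonneg_of_nonpos (Real.exp_nonneg _) (hvle x (le_of_lt hx))
      have h1 : P t ≤ P t₀ := hanti (Set.self_mem_Ici) ht ht
      exact le_antisymm (hPt₀ ▸ h1) (hPnn t)
    · -- P monotone on (-∞, t₀]
      have hmono : MonotoneOn P (Set.Iic t₀) := by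
        apply monotoneOn_of_deriv_nonneg (convex_Iic t₀) hPdiff.continuous.continuousOn
          (hPdiff.differentiableOn)
        intro x hx
        rw [interior_Iic] at hx
        rw [(hdP x).deriv]
        exact mul_nonneg (Real.exp_nonneg _) (hvge x (le_of_lt hx))
      have h1 : P t ≤ P t₀ := hmono ht (Set.self_mem_Iic) ht
      exact le_antisymm (hPt₀ ▸ h1) (hPnn t)
  have hexp : Real.exp (-lm * t) ≠ 0 := (Real.exp_pos _).ne'
  have : Real.exp (-lm * t) * φ t = 0 := hPt0
  exact (mul_eq_zero.mp this).resolve_left hexp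
end
end

section
/- Assume (H0)–(H2), that there exists L ≥ g'(0) with g(s) ≤ L·s for all s ≥ 0, that q₀ := inf_{s≥0} f'(s) > 0 and f(s) ≥ q₀·s for all s ≥ 0. Let c ≥ c⋆, where c⋆ is the minimal c for which χ_L(z,c) := z² − cz − q₀ + L·∫₀^∞∫_ℝ K(s,w)·e^{−z(cs+w)} dw ds has a positive root, and let λ > 0 satisfy χ_L(λ,c) = 0. If φ : ℝ → ℝ₊ is a positive, twice continuously differentiable solution of the profile equation y''(t) − c·y'(t) − f(y(t)) + ∫₀^∞∫_ℝ K(s,w)·g(y(t − cs − w)) dw ds = 0 satisfying φ(t) ≤ δ·e^{λt} for all t ∈ ℝ and some δ > 0, then φ is bounded on ℝ and φ(t) ≤ (sup_{u≥0} g(u)) / q₀ for all t ∈ ℝ. -/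
open MeasureTheory Filter Set Topology
open scoped ENNReal

noncomputable section

/-- If `F` has everywhere derivative `F'` which is nonnegative on `Ioo a b`, then
`F a ≤ F b`. -/
lemma aux_mono {F F' : ℝ → ℝ} {a b : ℝ} (hF : ∀ t, HasDerivAt F (F' t) t)
    (h : ∀ t ∈ Set.Ioo a b, 0 ≤ F' t) (hab : a ≤ b) : F a ≤ F b := by
  have hm : MonotoneOn F (Set.Icc a b) := by
    apply monotoneOn_of_deriv_nonneg (convex_Icc a b)
    · exact fun t _ => (hF t).continuousAt.continuousWithinAt
    · exact fun t _ => (hF t).differentiableAt.differentiableWithinAt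
    · intro t ht
      rw [interior_Icc] at ht
      rw [(hF t).deriv]
      exact h t ht
  exact hm (Set.left_mem_Icc.2 hab) (Set.right_mem_Icc.2 hab) hab


lemma aux_mu_pos (c q₀ : ℝ) (hq : 0 < q₀) : 0 < (c + Real.sqrt (c ^ 2 + 4 * q₀)) / 2 := by
  have hs : Real.sqrt (c ^ 2 + 4 * q₀) ^ 2 = c ^ 2 + 4 * q₀ := Real.sq_sqrt (by positivity)
  nlinarith [Real.sqrt_nonneg (c ^ 2 + 4 * q₀)]

lemma aux_mu_eq (c q₀ : ℝ) (hq : 0 < q₀) :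
    ((c + Real.sqrt (c ^ 2 + 4 * q₀)) / 2) ^ 2
      - c * ((c + Real.sqrt (c ^ 2 + 4 * q₀)) / 2) - q₀ = 0 := by
  have hs : Real.sqrt (c ^ 2 + 4 * q₀) ^ 2 = c ^ 2 + 4 * q₀ := Real.sq_sqrt (by positivity)
  nlinarith [hs]

lemma aux_lam_lt (c q₀ lam mu : ℝ) (hneg : lam ^ 2 - c * lam - q₀ < 0)
    (hmu : mu ^ 2 - c * mu - q₀ = 0) (hs : 0 ≤ 2 * mu - c) : lam < mu := by
  by_contra h
  push_neg at h
  nlinarith [mul_nonneg (sub_nonneg.2 h) (by linarith : (0:ℝ) ≤ lam + mu - c)]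

lemma aux_mu_exists (c q₀ lam : ℝ) (hq : 0 < q₀) (hneg : lam ^ 2 - c * lam - q₀ < 0) :
    ∃ mu : ℝ, 0 < mu ∧ mu ^ 2 - c * mu - q₀ = 0 ∧ lam < mu := by
  refine ⟨(c + Real.sqrt (c ^ 2 + 4 * q₀)) / 2, aux_mu_pos c q₀ hq, aux_mu_eq c q₀ hq, ?_⟩
  apply aux_lam_lt c q₀ lam _ hneg (aux_mu_eq c q₀ hq)
  have := Real.sqrt_nonneg (c ^ 2 + 4 * q₀)
  linarith

lemma aux_key (q₀ S B mu c e pt A p : ℝ) (h1 : q₀ * pt - S ≤ A - c * p)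
    (hmu : mu ^ 2 - c * mu - q₀ = 0) (hB : 0 ≤ B) (he : 0 ≤ e) (hq : 0 < q₀) :
    q₀ * (pt - (S / q₀ + B * e)) ≤ (A - B * mu ^ 2 * e) - c * (p - B * mu * e) := by
  have hq' : q₀ * (S / q₀) = S := by field_simp
  nlinarith [mul_nonneg hB he]

set_option maxHeartbeats 1000000

/-- A positive solution of the profile equation dominated by `δ e^{λt}`, where
`χ_L(λ,c) = 0`, is globally bounded by `sup g / inf f'`. -/
theorem solution_bounded
    (K : ℝ → ℝ → ℝ) (γsharp : ℝ → ℝ≥0∞)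
    (f f' g : ℝ → ℝ) (g'0 L q₀ cstar c lam δ : ℝ) (φ : ℝ → ℝ)
    -- (H0)
    (hKmeas : Measurable fun x : ℝ × ℝ => K x.1 x.2)
    (hKnn : ∀ s w, 0 ≤ K s w)
    (hKint : IntegrableOn (fun x : ℝ × ℝ => K x.1 x.2) (Set.Ioi 0 ×ˢ Set.univ))
    (hKnorm : (∫ s in Set.Ioi (0:ℝ), ∫ w : ℝ, K s w) = 1)
    (hγpos : ∀ c', 0 < γsharp c')
    (hKconv : ∀ c' z : ℝ, 0 ≤ z → ENNReal.ofReal z < γsharp c' →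
      IntegrableOn (fun x : ℝ × ℝ => K x.1 x.2 * Real.exp (-z * (c' * x.1 + x.2)))
        (Set.Ioi 0 ×ˢ Set.univ))
    (hKdiv : ∀ c' z : ℝ, γsharp c' < ENNReal.ofReal z →
      ¬ IntegrableOn (fun x : ℝ × ℝ => K x.1 x.2 * Real.exp (-z * (c' * x.1 + x.2)))
        (Set.Ioi 0 ×ˢ Set.univ))
    -- (H1)
    (hgc : ContinuousOn g (Set.Ici 0))
    (hgnn : ∀ s, 0 ≤ s → 0 ≤ g s)
    (hg0 : g 0 = 0)
    (hgpos : ∀ s, 0 < s → 0 < g s)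
    (hgd : HasDerivWithinAt g g'0 (Set.Ici 0) 0)
    -- (H2)
    (hfd : ∀ s, 0 ≤ s → HasDerivWithinAt f (f' s) (Set.Ici 0) s)
    (hf'c : ContinuousOn f' (Set.Ici 0))
    (hfnn : ∀ s, 0 ≤ s → 0 ≤ f s)
    (hfmono : StrictMonoOn f (Set.Ici 0))
    (hf0 : f 0 = 0)
    (hf'0pos : 0 < f' 0) (hf'0lt : f' 0 < g'0)
    (hgbdd : BddAbove (g '' Set.Ici 0))
    (hfinf : ∃ s₀, 0 ≤ s₀ ∧ sSup (g '' Set.Ici 0) < f s₀)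
    -- extra conditions
    (hL : g'0 ≤ L)
    (hgL : ∀ s, 0 ≤ s → g s ≤ L * s)
    (hq₀def : q₀ = sInf (f' '' Set.Ici 0))
    (hq₀pos : 0 < q₀)
    (hflow : ∀ s, 0 ≤ s → q₀ * s ≤ f s)
    -- c ≥ c⋆, the minimal speed for which χ_L(·,c) has a positive root
    (hcstar : IsLeast {c' : ℝ | ∃ z : ℝ, 0 < z ∧ ENNReal.ofReal z < γsharp c' ∧
      chiL K q₀ L z c' = 0} cstar)
    (hc : cstar ≤ c)
    -- λ is a positive root of χ_L(·,c)
    (hlam : 0 < lam) (hlamdom : ENNReal.ofReal lam < γsharp c)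
    (hlamroot : chiL K q₀ L lam c = 0)
    -- φ is a positive C² solution dominated by δ e^{λ t}
    (hφC2 : ContDiff ℝ 2 φ)
    (hφpos : ∀ t, 0 < φ t)
    (hφsol : ProfileEq K f g c φ)
    (hδ : 0 < δ)
    (hφdom : ∀ t, φ t ≤ δ * Real.exp (lam * t)) :
    (∃ M, ∀ t, |φ t| ≤ M) ∧ ∀ t, φ t ≤ sSup (g '' Set.Ici 0) / q₀ := by
  clear hγpos hKdiv hgd hfd hf'c hfmono hf0 hg0 hgL hq₀def hcstar hc hfinf
  set S := sSup (g '' Set.Ici 0) with hSdef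
  have hS0 : 0 < S :=
    lt_of_lt_of_le (hgpos 1 one_pos) (le_csSup hgbdd ⟨1, by norm_num, rfl⟩)
  -- regularity of φ
  have hφcont : Continuous φ := hφC2.continuous
  have hd1 : Differentiable ℝ φ := hφC2.differentiable (by norm_num)
  have h21 : ContDiff ℝ 1 (deriv φ) := by
    have h' : ContDiff ℝ ((1:WithTop ℕ∞) + 1) φ := hφC2.of_le (by norm_num)
    exact (contDiff_succ_iff_deriv.mp h').2.2
  have hd2 : Differentiable ℝ (deriv φ) := h21.differentiable one_ne_zero
  have hdφcont : Continuous (deriv φ) := h21.continuous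
  -- product measure setup
  set P : Measure (ℝ × ℝ) := (volume.restrict (Set.Ioi 0)).prod volume with hPdef
  have hPrw : P = (volume : Measure (ℝ × ℝ)).restrict (Set.Ioi 0 ×ˢ Set.univ) := by
    rw [hPdef, Measure.restrict_prod_eq_prod_univ, ← Measure.volume_eq_prod]
  have hKP : Integrable (fun x : ℝ × ℝ => K x.1 x.2) P := by rw [hPrw]; exact hKint
  have hKnormP : (∫ x : ℝ × ℝ, K x.1 x.2 ∂P) = 1 := by
    rw [integral_prod _ hKP]; exact hKnorm
  -- positivity of the λ-integral, hence λ² - cλ - q₀ < 0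
  have hroot := hlamroot
  unfold chiL at hroot
  set Ilam := ∫ s in Set.Ioi (0:ℝ), ∫ w : ℝ, K s w * Real.exp (-lam * (c * s + w))
    with hIlamdef
  have hνP : Integrable (fun x : ℝ × ℝ => K x.1 x.2 * Real.exp (-lam * (c * x.1 + x.2))) P := by
    rw [hPrw]; exact hKconv c lam hlam.le hlamdom
  have hIlamP : Ilam = ∫ x : ℝ × ℝ, K x.1 x.2 * Real.exp (-lam * (c * x.1 + x.2)) ∂P := by
    rw [integral_prod _ hνP]
  have hIlampos : 0 < Ilam := by
    rcases lt_or_ge 0 Ilam with h | h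
    · exact h
    · exfalso
      have hnn : 0 ≤ fun x : ℝ × ℝ => K x.1 x.2 * Real.exp (-lam * (c * x.1 + x.2)) :=
        fun x => mul_nonneg (hKnn _ _) (Real.exp_pos _).le
      have hz : (∫ x : ℝ × ℝ, K x.1 x.2 * Real.exp (-lam * (c * x.1 + x.2)) ∂P) = 0 := by
        have h1 : 0 ≤ ∫ x : ℝ × ℝ, K x.1 x.2 * Real.exp (-lam * (c * x.1 + x.2)) ∂P :=
          integral_nonneg hnn
        rw [hIlamP] at h
        linarith
      have hae := (integral_eq_zero_iff_of_nonneg hnn hνP).mp hz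
      have hKae : (fun x : ℝ × ℝ => K x.1 x.2) =ᵐ[P] 0 := by
        filter_upwards [hae] with x hx
        have : 0 < Real.exp (-lam * (c * x.1 + x.2)) := Real.exp_pos _
        have hx' : K x.1 x.2 * Real.exp (-lam * (c * x.1 + x.2)) = 0 := hx
        simp only [Pi.zero_apply]
        exact (mul_eq_zero.mp hx').resolve_right (ne_of_gt this)
      have : (∫ x : ℝ × ℝ, K x.1 x.2 ∂P) = 0 := by
        rw [integral_congr_ae hKae]; simp
      rw [hKnormP] at this
      linarith
  have hL0 : 0 < L := lt_of_le_of_lt hf'0pos.le (lt_of_lt_of_le hf'0lt hL)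
  have hneg : lam ^ 2 - c * lam - q₀ < 0 := by linarith [mul_pos hL0 hIlampos, hroot]
  -- the positive root μ of z² - cz - q₀
  obtain ⟨mu, hmu_pos, hmu_eq, hlammu⟩ := aux_mu_exists c q₀ lam hq₀pos hneg
  -- the convolution term is bounded by S
  have hm : ∀ x : ℝ, g (φ x) ≤ S := fun x => le_csSup hgbdd ⟨φ x, (hφpos x).le, rfl⟩
  have hm0 : ∀ x : ℝ, 0 ≤ g (φ x) := fun x => hgnn _ (hφpos x).le
  have hgφ : Continuous fun x : ℝ => g (φ x) := by
    rw [continuous_iff_continuousAt]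
    intro x
    exact (hgc.continuousAt (Ici_mem_nhds (hφpos x))).comp hφcont.continuousAt
  have hk_int : Integrable (fun s : ℝ => ∫ w : ℝ, K s w) (volume.restrict (Set.Ioi 0)) :=
    hKP.integral_prod_left
  have hconv : ∀ t : ℝ,
      (∫ s in Set.Ioi (0:ℝ), ∫ w : ℝ, K s w * g (φ (t - c * s - w))) ≤ S := by
    intro t
    have hae : ∀ᵐ s ∂(volume.restrict (Set.Ioi (0:ℝ))),
        Integrable (fun w : ℝ => K s w) volume := hKP.prod_right_ae
    have step : ∀ᵐ s ∂(volume.restrict (Set.Ioi (0:ℝ))),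
        (∫ w : ℝ, K s w * g (φ (t - c * s - w))) ≤ S * ∫ w : ℝ, K s w := by
      filter_upwards [hae] with s hs
      have hmeas : AEStronglyMeasurable (fun w : ℝ => K s w * g (φ (t - c * s - w)))
          volume := by
        apply Measurable.aestronglyMeasurable
        exact (hKmeas.comp (measurable_const.prodMk measurable_id)).mul
          (hgφ.comp (continuous_const.sub continuous_id)).measurable
      have hint1 : Integrable (fun w : ℝ => K s w * g (φ (t - c * s - w))) volume := by
        apply Integrable.mono' (hs.const_mul S) hmeas
        filter_upwards with w
        rw [Real.norm_eq_abs, abs_of_nonneg (mul_nonneg (hKnn _ _) (hm0 _))]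
        calc K s w * g (φ (t - c * s - w)) ≤ K s w * S :=
              mul_le_mul_of_nonneg_left (hm _) (hKnn _ _)
          _ = S * K s w := mul_comm _ _
      calc (∫ w : ℝ, K s w * g (φ (t - c * s - w)))
          ≤ ∫ w : ℝ, S * K s w := by
            apply integral_mono hint1 (hs.const_mul S)
            intro w
            calc K s w * g (φ (t - c * s - w)) ≤ K s w * S :=
                  mul_le_mul_of_nonneg_left (hm _) (hKnn _ _)
              _ = S * K s w := mul_comm _ _
        _ = S * ∫ w : ℝ, K s w := integral_const_mul _ _
    have h0 : 0 ≤ᵐ[volume.restrict (Set.Ioi (0:ℝ))]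
        fun s : ℝ => ∫ w : ℝ, K s w * g (φ (t - c * s - w)) :=
      Filter.Eventually.of_forall fun s =>
        integral_nonneg fun w => mul_nonneg (hKnn _ _) (hm0 _)
    calc (∫ s in Set.Ioi (0:ℝ), ∫ w : ℝ, K s w * g (φ (t - c * s - w)))
        ≤ ∫ s in Set.Ioi (0:ℝ), S * ∫ w : ℝ, K s w :=
          integral_mono_of_nonneg h0 (hk_int.const_mul S) step
      _ = S * ∫ s in Set.Ioi (0:ℝ), ∫ w : ℝ, K s w := integral_const_mul _ _
      _ = S := by rw [hKnorm, mul_one]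
  -- key differential inequality
  have mkey : ∀ t : ℝ, q₀ * φ t - S ≤ deriv (deriv φ) t - c * deriv φ t := by
    intro t
    have h := hφsol t
    have h2 := hconv t
    have h3 := hflow (φ t) (hφpos t).le
    unfold ProfileEq at h
    linarith [h]
  -- blowup lemma
  have blowup : ∀ t₁ : ℝ, S / q₀ < φ t₁ → 0 < deriv φ t₁ → False := by
    intro t₁ h1 h2
    set B := min ((φ t₁ - S / q₀) / 2) (deriv φ t₁ / (2 * mu)) with hBdef
    have hBpos : 0 < B := lt_min (by linarith) (by positivity)
    have hB1 : B ≤ (φ t₁ - S / q₀) / 2 := min_le_left _ _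
    have hB2 : B * mu ≤ deriv φ t₁ / 2 := by
      have := min_le_right ((φ t₁ - S / q₀) / 2) (deriv φ t₁ / (2 * mu))
      calc B * mu ≤ (deriv φ t₁ / (2 * mu)) * mu :=
            mul_le_mul_of_nonneg_right this hmu_pos.le
        _ = deriv φ t₁ / 2 := by field_simp
    set d : ℝ → ℝ := fun t => φ t - (S / q₀ + B * Real.exp (mu * (t - t₁))) with hddef
    set D : ℝ → ℝ := fun t => deriv φ t - B * mu * Real.exp (mu * (t - t₁)) with hDdef
    have hexpd : ∀ t : ℝ, HasDerivAt (fun t : ℝ => Real.exp (mu * (t - t₁)))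
        (mu * Real.exp (mu * (t - t₁))) t := by
      intro t
      have h := (((hasDerivAt_id t).sub_const t₁).const_mul mu).exp
      simp only [id_eq] at h
      convert h using 1
      ring
    have hdd : ∀ t : ℝ, HasDerivAt d (D t) t := by
      intro t
      have h := ((hd1 t).hasDerivAt).sub (((hexpd t).const_mul B).const_add (S / q₀))
      refine h.congr_deriv ?_
      simp only [hDdef]
      ring
    have hDd : ∀ t : ℝ, HasDerivAt D
        (deriv (deriv φ) t - B * mu ^ 2 * Real.exp (mu * (t - t₁))) t := by
      intro t
      have h := ((hd2 t).hasDerivAt).sub ((hexpd t).const_mul (B * mu))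
      refine h.congr_deriv ?_
      ring
    set Ψ : ℝ → ℝ := fun t => Real.exp (-c * t) * D t with hΨdef
    set Ψ' : ℝ → ℝ := fun t => Real.exp (-c * t) *
      ((deriv (deriv φ) t - B * mu ^ 2 * Real.exp (mu * (t - t₁))) - c * D t) with hΨ'def
    have hΨd : ∀ t : ℝ, HasDerivAt Ψ (Ψ' t) t := by
      intro t
      have he : HasDerivAt (fun t : ℝ => Real.exp (-c * t)) (-c * Real.exp (-c * t)) t := by
        have h := ((hasDerivAt_id t).const_mul (-c)).exp
        simp only [id_eq] at h
        convert h using 1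
        ring
      have h := he.mul (hDd t)
      refine h.congr_deriv ?_
      simp only [hΨ'def]
      ring
    have hΨnn : ∀ t : ℝ, 0 ≤ d t → 0 ≤ Ψ' t := by
      intro t hd
      have h1' := mkey t
      have h2' : (deriv (deriv φ) t - B * mu ^ 2 * Real.exp (mu * (t - t₁))) - c * D t
          ≥ q₀ * d t := by
        simp only [hDdef, hddef]
        exact aux_key q₀ S B mu c (Real.exp (mu * (t - t₁))) (φ t)
          (deriv (deriv φ) t) (deriv φ t) h1' hmu_eq hBpos.le (Real.exp_pos _).le hq₀pos
      have he2 : 0 ≤ Real.exp (-c * t) := (Real.exp_pos _).le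
      have : 0 ≤ q₀ * d t := mul_nonneg hq₀pos.le hd
      exact mul_nonneg he2 (by linarith)
    have hd₁pos : 0 < d t₁ := by
      simp only [hddef, sub_self, mul_zero, Real.exp_zero, mul_one]
      linarith
    have hD₁pos : 0 < D t₁ := by
      simp only [hDdef, sub_self, mul_zero, Real.exp_zero, mul_one]
      linarith
    have hecont : Continuous fun t : ℝ => Real.exp (mu * (t - t₁)) :=
      Real.continuous_exp.comp (continuous_const.mul (continuous_id.sub continuous_const))
    have hdcont : Continuous d :=
      hφcont.sub (continuous_const.add (continuous_const.mul hecont))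
    have hDcont : Continuous D := hdφcont.sub (continuous_const.mul hecont)
    have inv : ∀ τ : ℝ, t₁ ≤ τ → 0 < d τ ∧ 0 < D τ := by
      intro τ hτ
      by_contra hcon
      set N := {t : ℝ | t₁ ≤ t ∧ (d t ≤ 0 ∨ D t ≤ 0)} with hNdef
      have hNne : N.Nonempty := by
        refine ⟨τ, hτ, ?_⟩
        by_cases hdτ : 0 < d τ
        · right
          by_contra hDτ
          exact hcon ⟨hdτ, lt_of_not_ge hDτ⟩
        · left; exact le_of_not_gt hdτ
      have hNclosed : IsClosed N := by
        apply IsClosed.inter isClosed_Ici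
        exact (isClosed_le hdcont continuous_const).union
          (isClosed_le hDcont continuous_const)
      have hNbdd : BddBelow N := ⟨t₁, fun x hx => hx.1⟩
      set t₃ := sInf N with ht₃def
      have ht₃N : t₃ ∈ N := hNclosed.csInf_mem hNne hNbdd
      have ht₁₃ : t₁ ≤ t₃ := ht₃N.1
      have hlt : t₁ < t₃ := by
        rcases lt_or_eq_of_le ht₁₃ with h | h
        · exact h
        · exfalso
          rw [← h] at ht₃N
          rcases ht₃N.2 with hh | hh <;> linarith
      have hpr : ∀ r : ℝ, t₁ ≤ r → r < t₃ → 0 < d r ∧ 0 < D r := by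
        intro r hr1 hr2
        by_contra hc'
        have : r ∈ N := by
          refine ⟨hr1, ?_⟩
          by_cases hdr : 0 < d r
          · right
            by_contra hDr
            exact hc' ⟨hdr, lt_of_not_ge hDr⟩
          · left; exact le_of_not_gt hdr
        exact absurd (csInf_le hNbdd this) (not_le.2 hr2)
      have hdmono : d t₁ ≤ d t₃ := by
        apply aux_mono hdd _ ht₁₃
        intro r hr
        exact (hpr r hr.1.le hr.2).2.le
      have hd₃ : 0 < d t₃ := lt_of_lt_of_le hd₁pos hdmono
      have hΨmono : Ψ t₁ ≤ Ψ t₃ := by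
        apply aux_mono hΨd _ ht₁₃
        intro r hr
        exact hΨnn r (hpr r hr.1.le hr.2).1.le
      have hΨ₁ : 0 < Ψ t₁ := mul_pos (Real.exp_pos _) hD₁pos
      have hD₃ : 0 < D t₃ := by
        by_contra hD
        push_neg at hD
        have : Ψ t₃ ≤ 0 := mul_nonpos_of_nonneg_of_nonpos (Real.exp_pos _).le hD
        linarith
      rcases ht₃N.2 with hh | hh <;> linarith
    -- now contradiction with domination
    set T := max t₁ ((Real.log (δ / B) + mu * t₁) / (mu - lam)) with hTdef
    have hT1 : t₁ ≤ T := le_max_left _ _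
    have h5 := (inv T hT1).1
    have hml : 0 < mu - lam := sub_pos.2 hlammu
    have h6 : (Real.log (δ / B) + mu * t₁) / (mu - lam) ≤ T := le_max_right _ _
    have h7 : Real.log (δ / B) + mu * t₁ ≤ (mu - lam) * T := by
      rw [div_le_iff₀ hml] at h6
      linarith
    have h8 : δ / B ≤ Real.exp (mu * (T - t₁) - lam * T) := by
      rw [← Real.exp_log (show (0:ℝ) < δ / B by positivity)]
      apply Real.exp_le_exp.2
      linarith [h7]
    have h9 : δ ≤ Real.exp (mu * (T - t₁) - lam * T) * B := by
      rw [div_le_iff₀ hBpos] at h8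
      exact h8
    have hexp : δ * Real.exp (lam * T) ≤ B * Real.exp (mu * (T - t₁)) := by
      have h10 : Real.exp (mu * (T - t₁) - lam * T) * Real.exp (lam * T)
          = Real.exp (mu * (T - t₁)) := by
        rw [← Real.exp_add]
        ring_nf
      calc δ * Real.exp (lam * T)
          ≤ (Real.exp (mu * (T - t₁) - lam * T) * B) * Real.exp (lam * T) :=
            mul_le_mul_of_nonneg_right h9 (Real.exp_pos _).le
        _ = (Real.exp (mu * (T - t₁) - lam * T) * Real.exp (lam * T)) * B := by ring
        _ = Real.exp (mu * (T - t₁)) * B := by rw [h10]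
        _ = B * Real.exp (mu * (T - t₁)) := mul_comm _ _
    have hdomT := hφdom T
    have hSq : 0 ≤ S / q₀ := by positivity
    simp only [hddef] at h5
    linarith
  -- main bound
  have hmain : ∀ t : ℝ, φ t ≤ S / q₀ := by
    by_contra hcon
    push_neg at hcon
    obtain ⟨t₀, ht₀⟩ := hcon
    have hex : ∃ t₁ : ℝ, S / q₀ < φ t₁ ∧ 0 ≤ deriv φ t₁ := by
      by_contra hb
      push_neg at hb
      set A := {t : ℝ | t ≤ t₀ ∧ φ t ≤ S / q₀} with hAdef
      have hAne : A.Nonempty := by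
        set t' := min t₀ (Real.log (S / (q₀ * δ)) / lam) with ht'def
        refine ⟨t', min_le_left _ _, ?_⟩
        have h9 : Real.exp (lam * t') ≤ S / (q₀ * δ) := by
          rw [← Real.exp_log (show (0:ℝ) < S / (q₀ * δ) by positivity)]
          apply Real.exp_le_exp.2
          have hmin := min_le_right t₀ (Real.log (S / (q₀ * δ)) / lam)
          calc lam * t' ≤ lam * (Real.log (S / (q₀ * δ)) / lam) :=
                mul_le_mul_of_nonneg_left hmin hlam.le
            _ = Real.log (S / (q₀ * δ)) := by field_simp
        calc φ t' ≤ δ * Real.exp (lam * t') := hφdom t'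
          _ ≤ δ * (S / (q₀ * δ)) := mul_le_mul_of_nonneg_left h9 hδ.le
          _ = S / q₀ := by field_simp
      have hAbdd : BddAbove A := ⟨t₀, fun x hx => hx.1⟩
      have hAclosed : IsClosed A :=
        IsClosed.inter isClosed_Iic (isClosed_le hφcont continuous_const)
      set t₂ := sSup A with ht₂def
      have ht₂A : t₂ ∈ A := hAclosed.csSup_mem hAne hAbdd
      have ht₂lt : t₂ < t₀ := by
        rcases lt_or_eq_of_le ht₂A.1 with h | h
        · exact h
        · exfalso; rw [h] at ht₂A; linarith [ht₂A.2]
      have hgt : ∀ r : ℝ, t₂ < r → r ≤ t₀ → S / q₀ < φ r := by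
        intro r hr1 hr2
        by_contra h3
        push_neg at h3
        exact absurd (le_csSup hAbdd (⟨hr2, h3⟩ : r ∈ A)) (not_le.2 hr1)
      have hanti : StrictAntiOn φ (Set.Icc t₂ t₀) := by
        apply strictAntiOn_of_deriv_neg (convex_Icc _ _) hφcont.continuousOn
        intro r hr
        rw [interior_Icc] at hr
        exact hb r (hgt r hr.1 hr.2.le)
      have := hanti (Set.left_mem_Icc.2 ht₂lt.le) (Set.right_mem_Icc.2 ht₂lt.le) ht₂lt
      linarith [ht₂A.2]
    obtain ⟨t₁, h1, h2⟩ := hex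
    rcases lt_or_eq_of_le h2 with h2' | h2'
    · exact blowup t₁ h1 h2'
    · -- deriv φ t₁ = 0; use the second derivative to move slightly right
      have hSlt : S < q₀ * φ t₁ := by
        rw [div_lt_iff₀ hq₀pos] at h1
        linarith [h1]
      have hsec : 0 < deriv (deriv φ) t₁ := by
        have h := mkey t₁
        rw [← h2'] at h
        simp only [mul_zero, sub_zero] at h
        linarith
      have hslope := hasDerivAt_iff_tendsto_slope.mp ((hd2 t₁).hasDerivAt)
      have hslope' : Tendsto (slope (deriv φ) t₁) (𝓝[>] t₁) (𝓝 (deriv (deriv φ) t₁)) :=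
        hslope.mono_left (nhdsWithin_mono _ fun x hx => ne_of_gt hx)
      have hev1 : ∀ᶠ x in 𝓝[>] t₁, 0 < slope (deriv φ) t₁ x :=
        hslope'.eventually_const_lt hsec
      have hev2 : ∀ᶠ x in 𝓝[>] t₁, S / q₀ < φ x := by
        apply mem_nhdsWithin_of_mem_nhds
        exact (isOpen_lt continuous_const hφcont).mem_nhds h1
      have hev3 : ∀ᶠ x in 𝓝[>] t₁, t₁ < x := self_mem_nhdsWithin
      obtain ⟨x, ⟨hx1, hx2⟩, hx3⟩ := ((hev1.and hev2).and hev3).exists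
      have hxpos : 0 < deriv φ x := by
        have hs := hx1
        rw [slope_def_field] at hs
        have hnum : 0 < deriv φ x - deriv φ t₁ := by
          rcases (div_pos_iff.mp hs) with ⟨hn, _⟩ | ⟨_, hd'⟩
          · exact hn
          · exfalso; linarith [sub_pos.2 hx3]
        linarith [hnum, h2']
      exact blowup x hx2 hxpos
  refine ⟨⟨S / q₀, fun t => ?_⟩, hmain⟩
  rw [abs_of_pos (hφpos t)]
  exact hmain t
end
end

section
/- Assume the hypotheses of the previous boundedness lemma: (H0)–(H2), g(s) ≤ L·s for all s ≥ 0 with L ≥ g'(0), q₀ := inf_{s≥0} f'(s) > 0, f(s) ≥ q₀·s for all s ≥ 0, c ≥ c⋆, λ > 0 with χ_L(λ,c) = 0, and φ a positive solution of the profile equation with φ(t) ≤ δ·e^{λt} for all t and some δ > 0. Set β > f'(0) large, ρ := (sup_{u≥0} g(u))/β, θ := (β − q₀)/(β + cλ − λ²) and γ := (β − q₀)/β. Then 0 < γ < 1 and 0 < θ < 1, and for every n ∈ ℕ and every t ∈ ℝ one has φ(t) ≤ δ·e^{λt}·θⁿ + ρ·(1 − γ^{n+1})/(1 − γ). -/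
open MeasureTheory Filter Set
open scoped ENNReal

noncomputable section

/-- Phragmén–Lindelöf style maximum principle on the real line. -/
lemma max_principle (v : ℝ → ℝ) (c β lam δ B : ℝ)
    (hβ : 0 < β) (hB : 0 < B) (hδ : 0 < δ) (hlam : 0 < lam)
    (hroot : lam ^ 2 - c * lam - β < 0)
    (hv1 : Differentiable ℝ v) (hv2 : Differentiable ℝ (deriv v))
    (hv2c : Continuous (deriv (deriv v)))
    (hineq : ∀ t, β * v t + c * deriv v t ≤ deriv (deriv v) t)
    (hbd : ∀ t, v t ≤ δ * Real.exp (lam * t) - B) :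
    ∀ t, v t ≤ 0 := by
  -- choose an exponent μ with lam < μ and μ² - cμ - β < 0
  obtain ⟨μ, hlamμ, hκ⟩ : ∃ μ, lam < μ ∧ 0 < β + c * μ - μ ^ 2 := by
    have hs2 : Real.sqrt (c ^ 2 + 4 * β) ^ 2 = c ^ 2 + 4 * β := Real.sq_sqrt (by nlinarith)
    have hs0 := Real.sqrt_nonneg (c ^ 2 + 4 * β)
    set s := Real.sqrt (c ^ 2 + 4 * β) with hs_def
    have hq2 : ((c + s) / 2) ^ 2 - c * ((c + s) / 2) - β = 0 := by linear_combination hs2 / 4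
    have hltμ2 : lam < (c + s) / 2 := by
      by_contra h
      push_neg at h
      have h1 : 0 ≤ 2 * lam - c - s := by linarith
      have h2 : 0 ≤ 2 * lam - c + s := by linarith
      nlinarith [mul_nonneg h1 h2]
    refine ⟨(lam + (c + s) / 2) / 2, by linarith, ?_⟩
    nlinarith [sq_nonneg (lam - (c + s) / 2)]
  -- it suffices to prove v t ≤ ε e^{μ t} for every ε > 0
  suffices h : ∀ ε : ℝ, 0 < ε → ∀ t, v t ≤ ε * Real.exp (μ * t) by
    intro t
    by_contra h0
    push_neg at h0
    have hE : 0 < Real.exp (μ * t) := Real.exp_pos _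
    have hε : 0 < v t / (2 * Real.exp (μ * t)) := by positivity
    have hle := h _ hε t
    have h2 : v t / (2 * Real.exp (μ * t)) * Real.exp (μ * t) = v t / 2 := by
      field_simp
    rw [h2] at hle
    linarith
  intro ε hε
  by_contra h0
  push_neg at h0
  obtain ⟨t₀, ht₀⟩ := h0
  set w : ℝ → ℝ := fun t => v t - ε * Real.exp (μ * t) with hw_def
  have hm : 0 < w t₀ := by simp only [hw_def]; linarith
  -- derivatives of w
  have hexp : ∀ t : ℝ, HasDerivAt (fun x : ℝ => Real.exp (μ * x)) (μ * Real.exp (μ * t)) t := by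
    intro t
    have h1 : HasDerivAt (fun x : ℝ => μ * x) μ t := by
      simpa using (hasDerivAt_id t).const_mul μ
    simpa [mul_comm] using h1.exp
  set dw : ℝ → ℝ := fun t => deriv v t - ε * (μ * Real.exp (μ * t)) with hdw_def
  have hdw : ∀ t, HasDerivAt w (dw t) t := fun t =>
    ((hv1 t).hasDerivAt).sub ((hexp t).const_mul ε)
  set ddw : ℝ → ℝ := fun t => deriv (deriv v) t - ε * (μ * (μ * Real.exp (μ * t))) with hddw_def
  have hddw : ∀ t, HasDerivAt dw (ddw t) t := by
    intro t
    have h2 : HasDerivAt (fun x : ℝ => ε * (μ * Real.exp (μ * x)))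
        (ε * (μ * (μ * Real.exp (μ * t)))) t := ((hexp t).const_mul μ).const_mul ε
    exact ((hv2 t).hasDerivAt).sub h2
  have hwc : Continuous w := hv1.continuous.sub (by fun_prop)
  have hdwc : Continuous dw := hv2.continuous.sub (by fun_prop)
  -- upper bound on w
  have hwbd : ∀ t, w t ≤ δ * Real.exp (lam * t) - B - ε * Real.exp (μ * t) := by
    intro t; simp only [hw_def]; linarith [hbd t]
  -- localize the max
  obtain ⟨a, hea⟩ : ∃ a, δ * Real.exp (lam * a) = w t₀ := by
    refine ⟨lam⁻¹ * Real.log (w t₀ / δ), ?_⟩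
    rw [mul_inv_cancel_left₀ (ne_of_gt hlam) (Real.log (w t₀ / δ)),
      Real.exp_log (by positivity)]
    field_simp
  have hleft : ∀ t, t ≤ a → w t < w t₀ := by
    intro t ht
    have h1 : Real.exp (lam * t) ≤ Real.exp (lam * a) :=
      Real.exp_le_exp.mpr (by nlinarith)
    have := hwbd t
    nlinarith [Real.exp_pos (μ * t)]
  obtain ⟨b, hbineq⟩ : ∃ b, ∀ t, b ≤ t → δ * Real.exp (lam * t) ≤ ε * Real.exp (μ * t) := by
    have hμlam : 0 < μ - lam := by linarith
    refine ⟨(μ - lam)⁻¹ * Real.log (δ / ε), fun t ht => ?_⟩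
    have h1 : Real.exp ((μ - lam) * ((μ - lam)⁻¹ * Real.log (δ / ε))) = δ / ε := by
      rw [mul_inv_cancel_left₀ (ne_of_gt hμlam) (Real.log (δ / ε)),
        Real.exp_log (by positivity)]
    have h2 : δ / ε ≤ Real.exp ((μ - lam) * t) := by
      rw [← h1]; exact Real.exp_le_exp.mpr (by nlinarith)
    have h4 : Real.exp (μ * t) = Real.exp ((μ - lam) * t) * Real.exp (lam * t) := by
      rw [← Real.exp_add]; ring_nf
    rw [h4]
    have h5 : δ ≤ ε * Real.exp ((μ - lam) * t) := by
      rw [div_le_iff₀ hε] at h2; linarith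
    nlinarith [Real.exp_pos (lam * t)]
  have hright : ∀ t, b ≤ t → w t < w t₀ := by
    intro t ht
    have := hwbd t
    have := hbineq t ht
    linarith
  have ht₀mem : t₀ ∈ Icc (min a t₀) (max b t₀) := ⟨min_le_right _ _, le_max_right _ _⟩
  obtain ⟨tm, htm_mem, htm_max⟩ :=
    isCompact_Icc.exists_isMaxOn ⟨t₀, ht₀mem⟩ hwc.continuousOn
  have hglobal : ∀ t, w t ≤ w tm := by
    intro t
    by_cases h : t ∈ Icc (min a t₀) (max b t₀)
    · exact htm_max h
    · have hm_le : w t₀ ≤ w tm := htm_max ht₀mem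
      rcases not_and_or.mp h with h1 | h1
      · push_neg at h1
        have : t ≤ a := le_of_lt (lt_of_lt_of_le h1 (min_le_left _ _))
        linarith [hleft t this]
      · push_neg at h1
        have : b ≤ t := le_of_lt (lt_of_le_of_lt (le_max_left _ _) h1)
        linarith [hright t this]
  have hwtm : 0 < w tm := lt_of_lt_of_le hm (htm_max ht₀mem)
  have hlocal : IsLocalMax w tm := Filter.Eventually.of_forall hglobal
  have hder0 : dw tm = 0 := by
    have h1 := hlocal.deriv_eq_zero
    have h2 := (hdw tm).deriv
    rw [← h2]; exact h1
  -- second derivative of w is positive at tm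
  set W2 : ℝ → ℝ := fun t => deriv (deriv v) t - ε * (μ * (μ * Real.exp (μ * t))) with hW2_def
  have hW2cont : Continuous W2 := hv2c.sub (by fun_prop)
  have hW2pos : 0 < W2 tm := by
    have h1 := hineq tm
    have h2 : deriv v tm = ε * (μ * Real.exp (μ * tm)) := by
      have h3 := hder0
      simp only [hdw_def] at h3
      linarith
    have h3 : v tm = w tm + ε * Real.exp (μ * tm) := by simp [hw_def]
    have hE : 0 < Real.exp (μ * tm) := Real.exp_pos _
    have hkey : 0 < ε * Real.exp (μ * tm) * (β + c * μ - μ ^ 2) :=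
      mul_pos (mul_pos hε hE) hκ
    have hβw : 0 < β * w tm := mul_pos hβ hwtm
    simp only [hW2_def]
    rw [h3, h2] at h1
    nlinarith [h1, hkey, hβw]
  -- w is strictly increasing just to the right of tm : contradiction
  have hopen : IsOpen {x | 0 < W2 x} := isOpen_lt continuous_const hW2cont
  obtain ⟨η, hη, hball⟩ := Metric.isOpen_iff.mp hopen tm hW2pos
  have hIoo : Set.Ioo (tm - η) (tm + η) ⊆ {x | 0 < W2 x} := by
    rw [← Real.ball_eq_Ioo]; exact hball
  have hdw_mono : StrictMonoOn dw (Icc tm (tm + η / 2)) := by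
    apply strictMonoOn_of_deriv_pos (convex_Icc _ _) hdwc.continuousOn
    intro x hx
    rw [interior_Icc] at hx
    rw [(hddw x).deriv]
    exact hIoo ⟨by linarith [hx.1], by linarith [hx.2]⟩
  have hdw_pos : ∀ x ∈ Set.Ioo tm (tm + η / 2), 0 < dw x := by
    intro x hx
    have h1 : dw tm < dw x := hdw_mono (left_mem_Icc.mpr (by linarith)) ⟨hx.1.le, hx.2.le⟩ hx.1
    rw [hder0] at h1
    exact h1
  have hw_mono : StrictMonoOn w (Icc tm (tm + η / 2)) := by
    apply strictMonoOn_of_deriv_pos (convex_Icc _ _) hwc.continuousOn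
    intro x hx
    rw [interior_Icc] at hx
    rw [(hdw x).deriv]
    exact hdw_pos x hx
  have hfinal : w tm < w (tm + η / 2) :=
    hw_mono (left_mem_Icc.mpr (by linarith)) (right_mem_Icc.mpr (by linarith)) (by linarith)
  linarith [hglobal (tm + η / 2)]

lemma restrict_prod_eq :
    ((volume : Measure ℝ).restrict (Set.Ioi 0)).prod (volume : Measure ℝ)
      = (volume : Measure (ℝ × ℝ)).restrict (Set.Ioi 0 ×ˢ Set.univ) := by
  rw [Measure.volume_eq_prod, ← Measure.prod_restrict, Measure.restrict_univ]

lemma kernel_bound (K : ℝ → ℝ → ℝ) (u : ℝ → ℝ → ℝ) (M : ℝ)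
    (hKmeas : Measurable fun x : ℝ × ℝ => K x.1 x.2)
    (hKnn : ∀ s w, 0 ≤ K s w)
    (hKint : IntegrableOn (fun x : ℝ × ℝ => K x.1 x.2) (Set.Ioi 0 ×ˢ Set.univ))
    (hKnorm : (∫ s in Set.Ioi (0:ℝ), ∫ w : ℝ, K s w) = 1)
    (hu : Continuous fun x : ℝ × ℝ => u x.1 x.2)
    (hunn : ∀ s w, 0 ≤ u s w) (huM : ∀ s w, u s w ≤ M) :
    (∫ s in Set.Ioi (0:ℝ), ∫ w : ℝ, K s w * u s w) ≤ M := by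
  set ν := ((volume : Measure ℝ).restrict (Set.Ioi 0)).prod (volume : Measure ℝ) with hν_def
  have hK1 : Integrable (fun x : ℝ × ℝ => K x.1 x.2) ν := by
    rw [hν_def, restrict_prod_eq]; exact hKint
  have hbound : ∀ x : ℝ × ℝ, ‖K x.1 x.2 * u x.1 x.2‖ ≤ M * K x.1 x.2 := by
    intro x
    rw [Real.norm_eq_abs, abs_of_nonneg (mul_nonneg (hKnn _ _) (hunn _ _))]
    calc K x.1 x.2 * u x.1 x.2 ≤ K x.1 x.2 * M :=
          mul_le_mul_of_nonneg_left (huM _ _) (hKnn _ _)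
      _ = M * K x.1 x.2 := mul_comm _ _
  have hG : Integrable (fun x : ℝ × ℝ => K x.1 x.2 * u x.1 x.2) ν := by
    refine Integrable.mono' (hK1.const_mul M) ?_ (Filter.Eventually.of_forall hbound)
    exact (hKmeas.mul hu.measurable).aestronglyMeasurable
  have hle : ∀ x : ℝ × ℝ, K x.1 x.2 * u x.1 x.2 ≤ M * K x.1 x.2 := by
    intro x
    have := hbound x
    rwa [Real.norm_eq_abs, abs_of_nonneg (mul_nonneg (hKnn _ _) (hunn _ _))] at this
  calc (∫ s in Set.Ioi (0:ℝ), ∫ w : ℝ, K s w * u s w)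
      = ∫ x : ℝ × ℝ, K x.1 x.2 * u x.1 x.2 ∂ν := (integral_prod _ hG).symm
    _ ≤ ∫ x : ℝ × ℝ, M * K x.1 x.2 ∂ν :=
        integral_mono hG (hK1.const_mul M) hle
    _ = M * ∫ x : ℝ × ℝ, K x.1 x.2 ∂ν := integral_const_mul M _
    _ = M * ∫ s in Set.Ioi (0:ℝ), ∫ w : ℝ, K s w := by rw [integral_prod _ hK1]
    _ = M := by rw [hKnorm, mul_one]

lemma kernel_pos (K : ℝ → ℝ → ℝ) (E : ℝ → ℝ → ℝ)
    (hKmeas : Measurable fun x : ℝ × ℝ => K x.1 x.2)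
    (hKnn : ∀ s w, 0 ≤ K s w)
    (hKint : IntegrableOn (fun x : ℝ × ℝ => K x.1 x.2) (Set.Ioi 0 ×ˢ Set.univ))
    (hKnorm : (∫ s in Set.Ioi (0:ℝ), ∫ w : ℝ, K s w) = 1)
    (hEpos : ∀ s w, 0 < E s w)
    (hGint : IntegrableOn (fun x : ℝ × ℝ => K x.1 x.2 * E x.1 x.2) (Set.Ioi 0 ×ˢ Set.univ)) :
    0 < ∫ s in Set.Ioi (0:ℝ), ∫ w : ℝ, K s w * E s w := by
  set ν := ((volume : Measure ℝ).restrict (Set.Ioi 0)).prod (volume : Measure ℝ) with hν_def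
  have hK1 : Integrable (fun x : ℝ × ℝ => K x.1 x.2) ν := by
    rw [hν_def, restrict_prod_eq]; exact hKint
  have hG : Integrable (fun x : ℝ × ℝ => K x.1 x.2 * E x.1 x.2) ν := by
    rw [hν_def, restrict_prod_eq]; exact hGint
  have heq : (∫ s in Set.Ioi (0:ℝ), ∫ w : ℝ, K s w * E s w)
      = ∫ x : ℝ × ℝ, K x.1 x.2 * E x.1 x.2 ∂ν := (integral_prod _ hG).symm
  rw [heq]
  have hnn : 0 ≤ fun x : ℝ × ℝ => K x.1 x.2 * E x.1 x.2 :=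
    fun x => mul_nonneg (hKnn _ _) (hEpos _ _).le
  have h0 : 0 ≤ ∫ x : ℝ × ℝ, K x.1 x.2 * E x.1 x.2 ∂ν := integral_nonneg hnn
  rcases h0.lt_or_eq with h | h
  · exact h
  · exfalso
    have hzero : (fun x : ℝ × ℝ => K x.1 x.2 * E x.1 x.2) =ᵐ[ν] 0 :=
      (integral_eq_zero_iff_of_nonneg hnn hG).mp h.symm
    have hKzero : (fun x : ℝ × ℝ => K x.1 x.2) =ᵐ[ν] 0 := by
      filter_upwards [hzero] with x hx
      have hE := hEpos x.1 x.2
      simp only [Pi.zero_apply] at hx ⊢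
      rcases mul_eq_zero.mp hx with h' | h'
      · exact h'
      · exact absurd h' (ne_of_gt hE)
    have h1 : ∫ x : ℝ × ℝ, K x.1 x.2 ∂ν = 0 := by
      rw [integral_congr_ae hKzero]; simp
    have h2 : ∫ x : ℝ × ℝ, K x.1 x.2 ∂ν = 1 := by
      rw [integral_prod _ hK1, hKnorm]
    rw [h1] at h2
    exact zero_ne_one h2

/-- One step of the iteration. -/
lemma iteration_step (φ : ℝ → ℝ) (c β lam q₀ δ M An Bn A B : ℝ)
    (hφ1 : Differentiable ℝ φ) (hφ2 : Differentiable ℝ (deriv φ))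
    (hφ2c : Continuous (deriv (deriv φ)))
    (hLφ : ∀ t, q₀ * φ t - M ≤ deriv (deriv φ) t - c * deriv φ t)
    (hβ : 0 < β) (hqβ : q₀ < β) (hlam : 0 < lam)
    (hroot : lam ^ 2 - c * lam < q₀) (hδ : 0 < δ) (hB : 0 < B)
    (hIH : ∀ t, φ t ≤ An * Real.exp (lam * t) + Bn)
    (hdom : ∀ t, φ t ≤ δ * Real.exp (lam * t))
    (hAnn : 0 ≤ A)
    (id1 : A * (β + c * lam - lam ^ 2) = (β - q₀) * An)
    (id2 : β * B = (β - q₀) * Bn + M) :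
    ∀ t, φ t ≤ A * Real.exp (lam * t) + B := by
  set v : ℝ → ℝ := fun t => φ t - (A * Real.exp (lam * t) + B) with hv_def
  have hexp : ∀ t : ℝ, HasDerivAt (fun x : ℝ => Real.exp (lam * x)) (lam * Real.exp (lam * t)) t := by
    intro t
    have h1 : HasDerivAt (fun x : ℝ => lam * x) lam t := by
      simpa using (hasDerivAt_id t).const_mul lam
    simpa [mul_comm] using h1.exp
  set dv : ℝ → ℝ := fun t => deriv φ t - A * (lam * Real.exp (lam * t)) with hdv_def
  have hdv : ∀ t, HasDerivAt v (dv t) t := fun t =>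
    ((hφ1 t).hasDerivAt).sub (((hexp t).const_mul A).add_const B)
  have hderiv_v : deriv v = dv := funext fun t => (hdv t).deriv
  set ddv : ℝ → ℝ := fun t => deriv (deriv φ) t - A * (lam * (lam * Real.exp (lam * t))) with hddv_def
  have hddv : ∀ t, HasDerivAt dv (ddv t) t := fun t =>
    ((hφ2 t).hasDerivAt).sub (((hexp t).const_mul lam).const_mul A)
  have hderiv_dv : deriv dv = ddv := funext fun t => (hddv t).deriv
  have hv1 : Differentiable ℝ v := fun t => (hdv t).differentiableAt
  have hv2 : Differentiable ℝ (deriv v) := by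
    rw [hderiv_v]; exact fun t => (hddv t).differentiableAt
  have hv2c : Continuous (deriv (deriv v)) := by
    rw [hderiv_v, hderiv_dv]
    exact hφ2c.sub (by fun_prop)
  have hbd : ∀ t, v t ≤ δ * Real.exp (lam * t) - B := by
    intro t
    have h1 := hdom t
    have h2 : 0 ≤ A * Real.exp (lam * t) := mul_nonneg hAnn (Real.exp_pos _).le
    simp only [hv_def]
    linarith
  have hineq : ∀ t, β * v t + c * deriv v t ≤ deriv (deriv v) t := by
    intro t
    rw [hderiv_v, hderiv_dv]
    simp only [hv_def, hdv_def, hddv_def]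
    have h1 := hLφ t
    have h2 : (β - q₀) * φ t ≤ (β - q₀) * (An * Real.exp (lam * t) + Bn) :=
      mul_le_mul_of_nonneg_left (hIH t) (by linarith)
    have id1e : A * (β + c * lam - lam ^ 2) * Real.exp (lam * t)
        = (β - q₀) * An * Real.exp (lam * t) := by rw [id1]
    nlinarith [h1, h2, id1e, id2]
  have hfin := max_principle v c β lam δ B hβ hB hδ hlam (by linarith) hv1 hv2 hv2c hineq hbd
  intro t
  have := hfin t
  simp only [hv_def] at this
  linarith

lemma geom_step_id (γ M β q₀ : ℝ) (n : ℕ) (hβ : β ≠ 0) (hγ1 : 1 - γ ≠ 0)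
    (hγβ : γ * β = β - q₀) :
    β * ((M / β) * (1 - γ ^ (n + 2)) / (1 - γ))
      = (β - q₀) * ((M / β) * (1 - γ ^ (n + 1)) / (1 - γ)) + M := by
  rw [← hγβ]
  field_simp
  ring

/-- The iterative bound `φ(t) ≤ δ e^{λt} θⁿ + ρ (1 - γ^{n+1})/(1 - γ)` for a positive
solution of the profile equation dominated by `δ e^{λt}`. -/
theorem iterative_bound
    (K : ℝ → ℝ → ℝ) (γsharp : ℝ → ℝ≥0∞)
    (f f' g : ℝ → ℝ) (g'0 L q₀ cstar c lam δ β : ℝ) (φ : ℝ → ℝ)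
    -- (H0)
    (hKmeas : Measurable fun x : ℝ × ℝ => K x.1 x.2)
    (hKnn : ∀ s w, 0 ≤ K s w)
    (hKint : IntegrableOn (fun x : ℝ × ℝ => K x.1 x.2) (Set.Ioi 0 ×ˢ Set.univ))
    (hKnorm : (∫ s in Set.Ioi (0:ℝ), ∫ w : ℝ, K s w) = 1)
    (hγpos : ∀ c', 0 < γsharp c')
    (hKconv : ∀ c' z : ℝ, 0 ≤ z → ENNReal.ofReal z < γsharp c' →
      IntegrableOn (fun x : ℝ × ℝ => K x.1 x.2 * Real.exp (-z * (c' * x.1 + x.2)))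
        (Set.Ioi 0 ×ˢ Set.univ))
    (hKdiv : ∀ c' z : ℝ, γsharp c' < ENNReal.ofReal z →
      ¬ IntegrableOn (fun x : ℝ × ℝ => K x.1 x.2 * Real.exp (-z * (c' * x.1 + x.2)))
        (Set.Ioi 0 ×ˢ Set.univ))
    -- (H1)
    (hgc : ContinuousOn g (Set.Ici 0))
    (hgnn : ∀ s, 0 ≤ s → 0 ≤ g s)
    (hg0 : g 0 = 0)
    (hgpos : ∀ s, 0 < s → 0 < g s)
    (hgd : HasDerivWithinAt g g'0 (Set.Ici 0) 0)
    -- (H2)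
    (hfd : ∀ s, 0 ≤ s → HasDerivWithinAt f (f' s) (Set.Ici 0) s)
    (hf'c : ContinuousOn f' (Set.Ici 0))
    (hfnn : ∀ s, 0 ≤ s → 0 ≤ f s)
    (hfmono : StrictMonoOn f (Set.Ici 0))
    (hf0 : f 0 = 0)
    (hf'0pos : 0 < f' 0) (hf'0lt : f' 0 < g'0)
    (hgbdd : BddAbove (g '' Set.Ici 0))
    (hfinf : ∃ s₀, 0 ≤ s₀ ∧ sSup (g '' Set.Ici 0) < f s₀)
    -- extra conditions
    (hL : g'0 ≤ L)
    (hgL : ∀ s, 0 ≤ s → g s ≤ L * s)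
    (hq₀def : q₀ = sInf (f' '' Set.Ici 0))
    (hq₀pos : 0 < q₀)
    (hflow : ∀ s, 0 ≤ s → q₀ * s ≤ f s)
    -- c ≥ c⋆, the minimal speed for which χ_L(·,c) has a positive root
    (hcstar : IsLeast {c' : ℝ | ∃ z : ℝ, 0 < z ∧ ENNReal.ofReal z < γsharp c' ∧
      chiL K q₀ L z c' = 0} cstar)
    (hc : cstar ≤ c)
    -- λ is a positive root of χ_L(·,c)
    (hlam : 0 < lam) (hlamdom : ENNReal.ofReal lam < γsharp c)
    (hlamroot : chiL K q₀ L lam c = 0)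
    -- φ is a positive C² solution dominated by δ e^{λ t}
    (hφC2 : ContDiff ℝ 2 φ)
    (hφpos : ∀ t, 0 < φ t)
    (hφsol : ProfileEq K f g c φ)
    (hδ : 0 < δ)
    (hφdom : ∀ t, φ t ≤ δ * Real.exp (lam * t))
    -- β > f'(0) large
    (hβ : f' 0 < β) :
    (0 < (β - q₀) / β ∧ (β - q₀) / β < 1) ∧
    (0 < (β - q₀) / (β + c * lam - lam ^ 2) ∧ (β - q₀) / (β + c * lam - lam ^ 2) < 1) ∧
    ∀ (n : ℕ) (t : ℝ),
      φ t ≤ δ * Real.exp (lam * t) * ((β - q₀) / (β + c * lam - lam ^ 2)) ^ n +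
        (sSup (g '' Set.Ici 0) / β) * (1 - ((β - q₀) / β) ^ (n + 1)) / (1 - (β - q₀) / β) := by
  have hβ0 : 0 < β := hf'0pos.trans hβ
  have hβne : β ≠ 0 := ne_of_gt hβ0
  -- q₀ ≤ f' 0
  have hq0le : q₀ ≤ f' 0 := by
    by_cases hbb : BddBelow (f' '' Set.Ici 0)
    · rw [hq₀def]
      exact csInf_le hbb ⟨0, self_mem_Ici, rfl⟩
    · exfalso
      rw [csInf_of_not_bddBelow hbb, Real.sInf_empty] at hq₀def
      rw [hq₀def] at hq₀pos
      exact lt_irrefl 0 hq₀pos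
  have hqβ : q₀ < β := lt_of_le_of_lt hq0le hβ
  -- M := sup g > 0
  set M := sSup (g '' Set.Ici 0) with hMdef
  have hM0 : 0 < M := by
    have h1 : g (φ 0) ≤ M := le_csSup hgbdd ⟨φ 0, (hφpos 0).le, rfl⟩
    have h2 : 0 < g (φ 0) := hgpos _ (hφpos 0)
    linarith
  -- positivity of the kernel integral, root location
  have hI : 0 < ∫ s in Set.Ioi (0:ℝ), ∫ w : ℝ, K s w * Real.exp (-lam * (c * s + w)) := by
    exact kernel_pos K (fun s w => Real.exp (-lam * (c * s + w))) hKmeas hKnn hKint hKnorm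
      (fun s w => Real.exp_pos _) (hKconv c lam hlam.le hlamdom)
  have hL0 : 0 < L := lt_of_lt_of_le (hf'0pos.trans hf'0lt) hL
  simp only [chiL] at hlamroot
  have hroot : lam ^ 2 - c * lam < q₀ := by
    nlinarith [mul_pos hL0 hI]
  have hκ0 : 0 < β + c * lam - lam ^ 2 := by linarith
  have hκgt : β - q₀ < β + c * lam - lam ^ 2 := by linarith
  have hθ0 : 0 < (β - q₀) / (β + c * lam - lam ^ 2) := div_pos (by linarith) hκ0
  have hγ0 : 0 < (β - q₀) / β := div_pos (by linarith) hβ0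
  have hγ1 : (β - q₀) / β < 1 := (div_lt_one hβ0).mpr (by linarith)
  have h1γpos : 0 < 1 - (β - q₀) / β := by linarith
  have h1γne : (1:ℝ) - (β - q₀) / β ≠ 0 := ne_of_gt h1γpos
  refine ⟨⟨hγ0, hγ1⟩, ⟨hθ0, (div_lt_one hκ0).mpr hκgt⟩, ?_⟩
  -- differential inequality for φ
  have hLφ : ∀ t, q₀ * φ t - M ≤ deriv (deriv φ) t - c * deriv φ t := by
    intro t
    have hsol := hφsol t
    have hcont : Continuous fun x : ℝ × ℝ => g (φ (t - c * x.1 - x.2)) := by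
      apply hgc.comp_continuous
      · exact hφC2.continuous.comp (by fun_prop)
      · exact fun x => (hφpos _).le
    have hb := kernel_bound K (fun s w => g (φ (t - c * s - w))) M hKmeas hKnn hKint hKnorm
      hcont (fun s w => hgnn _ (hφpos _).le)
      (fun s w => le_csSup hgbdd ⟨φ (t - c * s - w), (hφpos _).le, rfl⟩)
    have hfl := hflow (φ t) (hφpos t).le
    linarith
  -- regularity of φ
  have h2eq : ((1 : WithTop ℕ∞) + 1) = 2 := by norm_num
  have hφ' := contDiff_succ_iff_deriv.mp (h2eq ▸ hφC2 : ContDiff ℝ (1 + 1) φ)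
  have hφ1 : Differentiable ℝ φ := hφ'.1
  have hφ'' := contDiff_one_iff_deriv.mp hφ'.2.2
  have hφ2 : Differentiable ℝ (deriv φ) := hφ''.1
  have hφ2c : Continuous (deriv (deriv φ)) := hφ''.2
  -- the iteration
  intro n
  induction n with
  | zero =>
    intro t
    have hρ : 0 < M / β := div_pos hM0 hβ0
    have hone : (M / β) * (1 - ((β - q₀) / β) ^ (0 + 1)) / (1 - (β - q₀) / β) = M / β := by
      rw [pow_one, mul_div_assoc, div_self h1γne, mul_one]
    rw [hone]
    simp only [pow_zero, mul_one]
    linarith [hφdom t]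
  | succ n ih =>
    have hγβ : ((β - q₀) / β) * β = β - q₀ := div_mul_cancel₀ _ hβne
    have hθκ : ((β - q₀) / (β + c * lam - lam ^ 2)) * (β + c * lam - lam ^ 2) = β - q₀ :=
      div_mul_cancel₀ _ (ne_of_gt hκ0)
    have hpow : ((β - q₀) / β) ^ (n + 2) < 1 := pow_lt_one₀ hγ0.le hγ1 (by omega)
    have hB : 0 < (M / β) * (1 - ((β - q₀) / β) ^ (n + 2)) / (1 - (β - q₀) / β) :=
      div_pos (mul_pos (div_pos hM0 hβ0) (by linarith)) h1γpos
    have hIH' : ∀ t, φ t ≤ (δ * ((β - q₀) / (β + c * lam - lam ^ 2)) ^ n) * Real.exp (lam * t)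
        + (M / β) * (1 - ((β - q₀) / β) ^ (n + 1)) / (1 - (β - q₀) / β) := by
      intro t
      have h1 := ih t
      have h2 : δ * Real.exp (lam * t) * ((β - q₀) / (β + c * lam - lam ^ 2)) ^ n
          = (δ * ((β - q₀) / (β + c * lam - lam ^ 2)) ^ n) * Real.exp (lam * t) := by ring
      linarith [h1, h2.ge, h2.le]
    have id1 : (δ * ((β - q₀) / (β + c * lam - lam ^ 2)) ^ (n + 1)) * (β + c * lam - lam ^ 2)
        = (β - q₀) * (δ * ((β - q₀) / (β + c * lam - lam ^ 2)) ^ n) := by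
      linear_combination (δ * ((β - q₀) / (β + c * lam - lam ^ 2)) ^ n) * hθκ
    have id2 : β * ((M / β) * (1 - ((β - q₀) / β) ^ (n + 2)) / (1 - (β - q₀) / β))
        = (β - q₀) * ((M / β) * (1 - ((β - q₀) / β) ^ (n + 1)) / (1 - (β - q₀) / β)) + M :=
      geom_step_id _ M β q₀ n hβne h1γne hγβ
    have hAnn : 0 ≤ δ * ((β - q₀) / (β + c * lam - lam ^ 2)) ^ (n + 1) :=
      mul_nonneg hδ.le (pow_nonneg hθ0.le _)
    have hstep := iteration_step φ c β lam q₀ δ M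
      (δ * ((β - q₀) / (β + c * lam - lam ^ 2)) ^ n)
      ((M / β) * (1 - ((β - q₀) / β) ^ (n + 1)) / (1 - (β - q₀) / β))
      (δ * ((β - q₀) / (β + c * lam - lam ^ 2)) ^ (n + 1))
      ((M / β) * (1 - ((β - q₀) / β) ^ (n + 2)) / (1 - (β - q₀) / β))
      hφ1 hφ2 hφ2c hLφ hβ0 hqβ hlam hroot hδ hB hIH' hφdom hAnn id1 id2
    intro t
    have h1 := hstep t
    have h2 : (δ * ((β - q₀) / (β + c * lam - lam ^ 2)) ^ (n + 1)) * Real.exp (lam * t)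
        = δ * Real.exp (lam * t) * ((β - q₀) / (β + c * lam - lam ^ 2)) ^ (n + 1) := by ring
    have h3 : ((β - q₀) / β) ^ (n + 1 + 1) = ((β - q₀) / β) ^ (n + 2) := by norm_num
    rw [h3]
    linarith [h1, h2.le, h2.ge]
end
end

section
/- Let α > 0, c ≠ 0, let P be a Borel probability measure on ℝ₊, g ∈ C(ℝ₊, ℝ₊) bounded with g(0) = 0, and define K₂(w) := ∫_{[0,w]} e^{−α(w−r)} dP(r) for w ≥ 0. Let φ : ℝ → ℝ₊ be a bounded continuous function and define ψ(t) := ∫₀^∞ g(φ(t − cw))·K₂(w) dw. Then: ψ is well defined and |ψ(t)| ≤ (sup_{u≥0} g(u))/α for all t ∈ ℝ; ψ is continuously differentiable and satisfies c·ψ'(t) + α·ψ(t) = ∫₀^∞ g(φ(t − cs)) dP(s) for all t ∈ ℝ; and if lim_{t→−∞} φ(t) = 0 then lim_{t→−∞} ψ(t) = 0. -/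
open MeasureTheory Filter Set
open scoped ENNReal Topology

noncomputable section

/-- `K₂(w) = ∫_{[0,w]} e^{-α(w-r)} dP(r)`. -/
def K2kernel (P : Measure ℝ) (α : ℝ) (w : ℝ) : ℝ :=
  ∫ r in Set.Icc (0:ℝ) w, Real.exp (-α * (w - r)) ∂P

/-- `ψ(t) = ∫₀^∞ g(φ(t - cw)) K₂(w) dw`. -/
def psiFun (P : Measure ℝ) (α c : ℝ) (g φ : ℝ → ℝ) (t : ℝ) : ℝ :=
  ∫ w in Set.Ioi (0:ℝ), g (φ (t - c * w)) * K2kernel P α w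

namespace EpiAux


/-- Affine substitution for lintegrals. -/
lemma lintegral_comp_affine {c : ℝ} (hc : c ≠ 0) (b : ℝ) (F : ℝ → ℝ≥0∞)
    (hF : AEMeasurable F (volume : Measure ℝ)) :
    ∫⁻ w, F (b - c * w) = ENNReal.ofReal |c|⁻¹ * ∫⁻ u, F u := by
  have hm : Measurable fun w : ℝ => b - c * w := by fun_prop
  have hcomp : (fun w : ℝ => b - c * w) = (fun x : ℝ => b + x) ∘ fun x : ℝ => (-c) * x := by
    funext w; simp [Function.comp]; ring
  have hmap : Measure.map (fun w : ℝ => b - c * w) (volume : Measure ℝ)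
      = ENNReal.ofReal |c|⁻¹ • volume := by
    rw [hcomp, ← Measure.map_map (measurable_const_add b) (measurable_const_mul _)]
    rw [Real.map_volume_mul_left (neg_ne_zero.2 hc)]
    rw [Measure.map_smul]
    rw [map_add_left_eq_self]
    congr 1
    rw [abs_inv, abs_neg]
  have hF' : AEMeasurable F (Measure.map (fun w : ℝ => b - c * w) volume) := by
    rw [hmap]; exact hF.smul_measure _
  calc ∫⁻ w, F (b - c * w) = ∫⁻ u, F u ∂(Measure.map (fun w : ℝ => b - c * w) volume) :=
        (lintegral_map' hF' hm.aemeasurable).symm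
    _ = ENNReal.ofReal |c|⁻¹ * ∫⁻ u, F u := by rw [hmap, lintegral_smul_measure, smul_eq_mul]



/-- The half-line `S_t`: `Iio t` when `c > 0`, `Ioi t` when `c < 0`. -/
def Sset (t c : ℝ) : Set ℝ := {u : ℝ | 0 < (t - u) / c}

lemma measurableSet_Sset (t c : ℝ) : MeasurableSet (Sset t c) :=
  measurableSet_lt measurable_const ((measurable_const.sub measurable_id).div_const c)

lemma Sset_of_pos {c : ℝ} (hc : 0 < c) (t : ℝ) : Sset t c = Iio t := by
  ext u
  simp only [Sset, mem_setOf_eq, mem_Iio, div_pos_iff]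
  constructor
  · rintro (⟨h, -⟩ | ⟨-, h⟩)
    · linarith
    · linarith
  · intro h; exact Or.inl ⟨by linarith, hc⟩

lemma Sset_of_neg {c : ℝ} (hc : c < 0) (t : ℝ) : Sset t c = Ioi t := by
  ext u
  simp only [Sset, mem_setOf_eq, mem_Ioi, div_pos_iff]
  constructor
  · rintro (⟨-, h⟩ | ⟨h, -⟩)
    · linarith
    · linarith
  · intro h; exact Or.inr ⟨by linarith, hc⟩

lemma integrableOn_exp_neg_mul {b : ℝ} (hb : 0 < b) :
    IntegrableOn (fun w : ℝ => Real.exp (-(b * w))) (Ioi (0:ℝ)) := by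
  simpa [neg_mul] using exp_neg_integrableOn_Ioi 0 hb

lemma integral_exp_neg_mul {b : ℝ} (hb : 0 < b) :
    ∫ w in Ioi (0:ℝ), Real.exp (-(b * w)) = 1 / b := by
  have h := integral_comp_mul_left_Ioi (fun x : ℝ => Real.exp (-x)) 0 hb
  simp only [mul_zero, integral_exp_neg_Ioi, neg_zero, Real.exp_zero, smul_eq_mul,
    mul_one] at h
  simpa [neg_mul, one_div] using h

lemma lintegral_exp_neg_mul {b : ℝ} (hb : 0 < b) :
    ∫⁻ w in Ioi (0:ℝ), ENNReal.ofReal (Real.exp (-(b * w))) = ENNReal.ofReal (1 / b) := by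
  rw [← ofReal_integral_eq_lintegral_ofReal (integrableOn_exp_neg_mul hb)
      (ae_of_all _ fun x => (Real.exp_pos _).le), integral_exp_neg_mul hb]

lemma lintegral_exp_S {c : ℝ} (hc : c ≠ 0) {α : ℝ} (hα : 0 < α) (t : ℝ) :
    ∫⁻ u in Sset t c, ENNReal.ofReal (Real.exp (α / c * (u - t))) =
      ENNReal.ofReal (|c| / α) := by
  set F : ℝ → ℝ≥0∞ :=
    (Sset t c).indicator fun u => ENNReal.ofReal (Real.exp (α / c * (u - t))) with hF
  have hFae : AEMeasurable F volume := by
    refine (Measurable.indicator ?_ (measurableSet_Sset t c)).aemeasurable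
    exact (measurable_id.sub measurable_const).const_mul _ |>.exp.ennreal_ofReal
  have key : ∀ w : ℝ, F (t - c * w) =
      (Ioi (0:ℝ)).indicator (fun w => ENNReal.ofReal (Real.exp (-(α * w)))) w := by
    intro w
    simp only [hF]
    have hmem : (t - c * w ∈ Sset t c) ↔ (w ∈ Ioi (0:ℝ)) := by
      simp only [Sset, mem_setOf_eq, mem_Ioi]
      rw [show (t - (t - c * w)) / c = w by field_simp; ring]
    have hval : α / c * (t - c * w - t) = -(α * w) := by
      field_simp; ring
    by_cases hw : w ∈ Ioi (0:ℝ)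
    · rw [indicator_of_mem (hmem.2 hw), indicator_of_mem hw, hval]
    · rw [indicator_of_notMem (fun h => hw (hmem.1 h)), indicator_of_notMem hw]
  have h1 : ∫⁻ w, F (t - c * w) = ENNReal.ofReal (1 / α) := by
    calc ∫⁻ w, F (t - c * w)
        = ∫⁻ w, (Ioi (0:ℝ)).indicator (fun w => ENNReal.ofReal (Real.exp (-(α * w)))) w :=
          lintegral_congr key
      _ = ∫⁻ w in Ioi (0:ℝ), ENNReal.ofReal (Real.exp (-(α * w))) := by
          rw [lintegral_indicator measurableSet_Ioi]
      _ = ENNReal.ofReal (1 / α) := lintegral_exp_neg_mul hα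
  have h2 := lintegral_comp_affine hc t F hFae
  have h3 : ∫⁻ u, F u = ENNReal.ofReal (|c|) * ENNReal.ofReal (1 / α) := by
    rw [← h1, h2, ← mul_assoc, ← ENNReal.ofReal_mul (abs_nonneg c),
      mul_inv_cancel₀ (abs_ne_zero.2 hc), ENNReal.ofReal_one, one_mul]
  rw [← lintegral_indicator (measurableSet_Sset t c), ← hF, h3,
    ← ENNReal.ofReal_mul (abs_nonneg c), mul_one_div]



variable {P : Measure ℝ}

lemma K2_nonneg (α w : ℝ) : 0 ≤ K2kernel P α w :=
  integral_nonneg fun _ => (Real.exp_pos _).le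

lemma K2_integrand_integrable [IsFiniteMeasure P] {α : ℝ} (hα : 0 < α) (w : ℝ) :
    IntegrableOn (fun r => Real.exp (-α * (w - r))) (Icc (0:ℝ) w) P := by
  apply Measure.integrableOn_of_bounded (M := 1)
  · exact measure_ne_top _ _
  · exact (Continuous.aestronglyMeasurable (by fun_prop) :
      AEStronglyMeasurable (fun r : ℝ => Real.exp (-α * (w - r))) _)
  · filter_upwards [ae_restrict_mem measurableSet_Icc] with r hr
    rw [Real.norm_eq_abs, abs_of_pos (Real.exp_pos _)]
    apply Real.exp_le_one_iff.2
    nlinarith [hr.2, hα]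

lemma K2_lintegral [IsFiniteMeasure P] {α : ℝ} (hα : 0 < α) (w : ℝ) :
    ENNReal.ofReal (K2kernel P α w) =
      ∫⁻ r in Icc (0:ℝ) w, ENNReal.ofReal (Real.exp (-α * (w - r))) ∂P :=
  ofReal_integral_eq_lintegral_ofReal (K2_integrand_integrable hα w)
    (ae_of_all _ fun _ => (Real.exp_pos _).le)

lemma K2_stronglyMeasurable [SFinite P] (α : ℝ) :
    StronglyMeasurable (K2kernel P α) := by
  have hT : MeasurableSet {q : ℝ × ℝ | 0 ≤ q.2 ∧ q.2 ≤ q.1} :=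
    (measurableSet_le measurable_const measurable_snd).inter
      (measurableSet_le measurable_snd measurable_fst)
  have h : ∀ w, K2kernel P α w =
      ∫ r, ({q : ℝ × ℝ | 0 ≤ q.2 ∧ q.2 ≤ q.1}.indicator
        (fun q => Real.exp (-α * (q.1 - q.2))) (w, r)) ∂P := by
    intro w
    rw [K2kernel, ← integral_indicator measurableSet_Icc]
    apply integral_congr_ae
    apply ae_of_all
    intro r
    simp only [indicator_apply]
    by_cases hr : r ∈ Icc (0:ℝ) w
    · rw [if_pos hr, if_pos (show (w, r) ∈ {q : ℝ × ℝ | 0 ≤ q.2 ∧ q.2 ≤ q.1} from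
        ⟨hr.1, hr.2⟩)]
    · rw [if_neg hr, if_neg (show (w, r) ∉ {q : ℝ × ℝ | 0 ≤ q.2 ∧ q.2 ≤ q.1} from
        fun hmem => hr ⟨hmem.1, hmem.2⟩)]
  have h' : K2kernel P α = fun w =>
      ∫ r, ({q : ℝ × ℝ | 0 ≤ q.2 ∧ q.2 ≤ q.1}.indicator
        (fun q => Real.exp (-α * (q.1 - q.2))) (w, r)) ∂P := funext h
  rw [h']
  apply StronglyMeasurable.integral_prod_right
  exact (Continuous.stronglyMeasurable (by fun_prop :
    Continuous fun q : ℝ × ℝ => Real.exp (-α * (q.1 - q.2)))).indicator hT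



def Tset : Set (ℝ × ℝ) := {q : ℝ × ℝ | 0 ≤ q.2 ∧ q.2 ≤ q.1}

lemma measurableSet_Tset : MeasurableSet Tset :=
  (measurableSet_le measurable_const measurable_snd).inter
    (measurableSet_le measurable_snd measurable_fst)

def Fbox (t c α : ℝ) (G : ℝ → ℝ) (w r : ℝ) : ℝ≥0∞ :=
  (Ioi (0:ℝ)).indicator (fun _ => (1:ℝ≥0∞)) w * Tset.indicator (fun _ => (1:ℝ≥0∞)) (w, r) *
    (ENNReal.ofReal (G (t - c * w)) * ENNReal.ofReal (Real.exp (-α * (w - r))))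

def Gbox (t c α : ℝ) (G : ℝ → ℝ) (r u : ℝ) : ℝ≥0∞ :=
  (Sset t c).indicator
    (fun u => ENNReal.ofReal (G (u - c * r)) * ENNReal.ofReal (Real.exp (α / c * (u - t)))) u

lemma Fbox_measurable {t c α : ℝ} {G : ℝ → ℝ} (hG : Measurable G) :
    Measurable fun p : ℝ × ℝ => Fbox t c α G p.1 p.2 := by
  apply Measurable.mul
  · apply Measurable.mul
    · exact (measurable_const.indicator measurableSet_Ioi).comp measurable_fst
    · exact measurable_const.indicator measurableSet_Tset
  · refine Measurable.mul (f := fun p : ℝ × ℝ => ENNReal.ofReal (G (t - c * p.1)))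
      (g := fun p : ℝ × ℝ => ENNReal.ofReal (Real.exp (-α * (p.1 - p.2)))) ?_ ?_
    · exact (hG.comp (by fun_prop)).ennreal_ofReal
    · exact Measurable.ennreal_ofReal (by fun_prop)

lemma Gbox_measurable {t c α : ℝ} {G : ℝ → ℝ} (hG : Measurable G) :
    Measurable fun p : ℝ × ℝ => Gbox t c α G p.1 p.2 := by
  have heq : (fun p : ℝ × ℝ => Gbox t c α G p.1 p.2) = fun p : ℝ × ℝ =>
      {q : ℝ × ℝ | q.2 ∈ Sset t c}.indicator
        (fun q => ENNReal.ofReal (G (q.2 - c * q.1)) *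
          ENNReal.ofReal (Real.exp (α / c * (q.2 - t)))) p := by
    funext p
    simp only [Gbox]
    by_cases hp : p.2 ∈ Sset t c
    · rw [indicator_of_mem hp,
        indicator_of_mem (show p ∈ {q : ℝ × ℝ | q.2 ∈ Sset t c} from hp)]
    · rw [indicator_of_notMem hp,
        indicator_of_notMem (show p ∉ {q : ℝ × ℝ | q.2 ∈ Sset t c} from hp)]
  rw [heq]
  exact (((hG.comp (by fun_prop)).ennreal_ofReal).mul
    (Measurable.ennreal_ofReal (by fun_prop))).indicator
    ((measurableSet_Sset t c).preimage measurable_snd)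

lemma Gbox_aemeasurable_right {t c α : ℝ} {G : ℝ → ℝ} (hG : Measurable G) (r : ℝ) :
    AEMeasurable (Gbox t c α G r) (volume : Measure ℝ) := by
  have h := (Gbox_measurable (t := t) (c := c) (α := α) hG).comp
    ((measurable_const (a := r)).prodMk measurable_id (β := ℝ))
  exact (h : Measurable fun u : ℝ => Gbox t c α G r u).aemeasurable

variable {P : Measure ℝ}

lemma stepA [IsFiniteMeasure P] {t c α : ℝ} (hα : 0 < α) {G : ℝ → ℝ}
    (hGnn : ∀ x, 0 ≤ G x) :
    ∫⁻ w in Ioi (0:ℝ), ENNReal.ofReal (G (t - c * w) * K2kernel P α w) =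
      ∫⁻ w, ∫⁻ r, Fbox t c α G w r ∂P := by
  rw [← lintegral_indicator measurableSet_Ioi]
  apply lintegral_congr
  intro w
  by_cases hw : w ∈ Ioi (0:ℝ)
  · rw [indicator_of_mem hw, ENNReal.ofReal_mul (hGnn _), K2_lintegral hα w,
      ← lintegral_indicator measurableSet_Icc,
      ← lintegral_const_mul' _ _ ENNReal.ofReal_ne_top]
    apply lintegral_congr
    intro r
    by_cases hr : r ∈ Icc (0:ℝ) w
    · have hrT : (w, r) ∈ Tset := ⟨hr.1, hr.2⟩
      simp only [Fbox, indicator_of_mem hw, indicator_of_mem hr, indicator_of_mem hrT,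
        one_mul]
    · have hrT : (w, r) ∉ Tset := fun h => hr ⟨h.1, h.2⟩
      simp only [Fbox, indicator_of_mem hw, indicator_of_notMem hr,
        indicator_of_notMem hrT, one_mul, mul_zero, zero_mul]
  · rw [indicator_of_notMem hw]
    symm
    have hzero : ∀ r, Fbox t c α G w r = 0 := by
      intro r
      simp only [Fbox, indicator_of_notMem hw, zero_mul]
    simp only [hzero, lintegral_zero]

lemma stepC_pointwise {t c α : ℝ} (hc : c ≠ 0) {G : ℝ → ℝ} {r w : ℝ}
    (hr : 0 ≤ r) (hwne : w ≠ r) :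
    Fbox t c α G w r = Gbox t c α G r (t + c * r - c * w) := by
  by_cases hrw : r < w
  · have hw : w ∈ Ioi (0:ℝ) := lt_of_le_of_lt hr hrw
    have hT : (w, r) ∈ Tset := ⟨hr, hrw.le⟩
    have hu : t + c * r - c * w ∈ Sset t c := by
      simp only [Sset, mem_setOf_eq]
      rw [show t - (t + c * r - c * w) = c * (w - r) by ring,
        mul_div_cancel_left₀ _ hc]
      exact sub_pos.mpr hrw
    simp only [Fbox, Gbox, indicator_of_mem hw, indicator_of_mem hT, indicator_of_mem hu,
      one_mul]
    rw [show t + c * r - c * w - c * r = t - c * w by ring,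
      show α / c * (t + c * r - c * w - t) = -α * (w - r) by field_simp; ring]
  · have hwr : w < r := lt_of_le_of_ne (not_lt.1 hrw) hwne
    have hT : (w, r) ∉ Tset := fun h => absurd h.2 (not_le.2 hwr)
    have hu : t + c * r - c * w ∉ Sset t c := by
      simp only [Sset, mem_setOf_eq]
      rw [show t - (t + c * r - c * w) = c * (w - r) by ring,
        mul_div_cancel_left₀ _ hc]
      simp only [not_lt, sub_nonpos]
      exact hwr.le
    simp only [Fbox, Gbox, indicator_of_notMem hT, indicator_of_notMem hu, mul_zero,
      zero_mul]

lemma stepC {t c α : ℝ} (hc : c ≠ 0) {G : ℝ → ℝ} (hG : Measurable G) {r : ℝ} (hr : 0 ≤ r) :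
    ∫⁻ w, Fbox t c α G w r = ENNReal.ofReal |c|⁻¹ * ∫⁻ u, Gbox t c α G r u := by
  have hne : ∀ᵐ w : ℝ, w ≠ r := by
    rw [ae_iff]
    have : {w : ℝ | ¬w ≠ r} = {r} := by ext w; simp [not_not]
    rw [this]
    exact measure_singleton r
  have hae : ∀ᵐ w : ℝ, Fbox t c α G w r = Gbox t c α G r (t + c * r - c * w) := by
    filter_upwards [hne] with w hw
    exact stepC_pointwise hc hr hw
  rw [lintegral_congr_ae hae,
    lintegral_comp_affine hc (t + c * r) _ (Gbox_aemeasurable_right hG r)]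

lemma stepD {t c α : ℝ} {G : ℝ → ℝ} (u : ℝ) :
    ∫⁻ r, Gbox t c α G r u ∂P =
      (Sset t c).indicator
        (fun u => ENNReal.ofReal (Real.exp (α / c * (u - t))) *
          ∫⁻ s, ENNReal.ofReal (G (u - c * s)) ∂P) u := by
  by_cases hu : u ∈ Sset t c
  · simp only [Gbox, indicator_of_mem hu]
    rw [lintegral_mul_const' _ _ ENNReal.ofReal_ne_top, mul_comm]
  · simp only [Gbox, indicator_of_notMem hu, lintegral_zero]

lemma keyId [IsProbabilityMeasure P] {α c : ℝ} (hα : 0 < α) (hc : c ≠ 0)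
    (hP : P (Set.Iio 0) = 0) {G : ℝ → ℝ} (hG : Measurable G) (hGnn : ∀ x, 0 ≤ G x) (t : ℝ) :
    ∫⁻ w in Ioi (0:ℝ), ENNReal.ofReal (G (t - c * w) * K2kernel P α w) =
      ENNReal.ofReal |c|⁻¹ *
        ∫⁻ u in Sset t c,
          ENNReal.ofReal (Real.exp (α / c * (u - t))) *
            ∫⁻ s, ENNReal.ofReal (G (u - c * s)) ∂P := by
  have hPae : ∀ᵐ r ∂P, (0:ℝ) ≤ r := by
    rw [ae_iff]
    have : {r : ℝ | ¬(0:ℝ) ≤ r} = Iio 0 := by ext r; simp [not_le]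
    rw [this]; exact hP
  calc ∫⁻ w in Ioi (0:ℝ), ENNReal.ofReal (G (t - c * w) * K2kernel P α w)
      = ∫⁻ w, ∫⁻ r, Fbox t c α G w r ∂P := stepA hα hGnn
    _ = ∫⁻ r, (∫⁻ w, Fbox t c α G w r) ∂P :=
        lintegral_lintegral_swap (Fbox_measurable hG).aemeasurable
    _ = ∫⁻ r, (ENNReal.ofReal |c|⁻¹ * ∫⁻ u, Gbox t c α G r u) ∂P := by
        apply lintegral_congr_ae
        filter_upwards [hPae] with r hr
        exact stepC hc hG hr
    _ = ENNReal.ofReal |c|⁻¹ * ∫⁻ r, (∫⁻ u, Gbox t c α G r u) ∂P :=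
        lintegral_const_mul' _ _ ENNReal.ofReal_ne_top
    _ = ENNReal.ofReal |c|⁻¹ * ∫⁻ u, (∫⁻ r, Gbox t c α G r u ∂P) := by
        rw [lintegral_lintegral_swap (Gbox_measurable hG).aemeasurable]
    _ = ENNReal.ofReal |c|⁻¹ *
          ∫⁻ u, (Sset t c).indicator
            (fun u => ENNReal.ofReal (Real.exp (α / c * (u - t))) *
              ∫⁻ s, ENNReal.ofReal (G (u - c * s)) ∂P) u := by
        congr 1
        exact lintegral_congr fun u => stepD u
    _ = ENNReal.ofReal |c|⁻¹ *
          ∫⁻ u in Sset t c,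
            ENNReal.ofReal (Real.exp (α / c * (u - t))) *
              ∫⁻ s, ENNReal.ofReal (G (u - c * s)) ∂P := by
        rw [lintegral_indicator (measurableSet_Sset t c)]


end EpiAux

namespace EpiAux2
open EpiAux

def PhiFun (P : Measure ℝ) (c : ℝ) (G : ℝ → ℝ) (u : ℝ) : ℝ := ∫ s, G (u - c * s) ∂P

variable {P : Measure ℝ} [IsProbabilityMeasure P] {α c M : ℝ} {G : ℝ → ℝ}

lemma integrableOn_of_lintegral {f : ℝ → ℝ} {s : Set ℝ}
    (hf : AEStronglyMeasurable f (volume.restrict s)) (hnn : ∀ x, 0 ≤ f x)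
    (hfin : ∫⁻ x in s, ENNReal.ofReal (f x) ≠ ⊤) : IntegrableOn f s :=
  ⟨hf, (hasFiniteIntegral_iff_ofReal (ae_of_all _ hnn)).2 (lt_top_iff_ne_top.2 hfin)⟩

lemma Phi_integrable (hGc : Continuous G) (hGM : ∀ x, |G x| ≤ M) (u : ℝ) :
    Integrable (fun s => G (u - c * s)) P := by
  refine ⟨(hGc.comp (by fun_prop)).aestronglyMeasurable, ?_⟩
  apply HasFiniteIntegral.of_bounded (C := M)
  exact ae_of_all _ fun s => by simpa [Real.norm_eq_abs] using hGM (u - c * s)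

lemma Phi_nonneg (hGnn : ∀ x, 0 ≤ G x) (u : ℝ) : 0 ≤ PhiFun P c G u :=
  integral_nonneg fun s => hGnn _

lemma Phi_le (hGc : Continuous G) (hGnn : ∀ x, 0 ≤ G x) (hGM : ∀ x, G x ≤ M) (u : ℝ) :
    PhiFun P c G u ≤ M := by
  have h1 : Integrable (fun s => G (u - c * s)) P :=
    Phi_integrable hGc (fun x => by rw [abs_of_nonneg (hGnn x)]; exact hGM x) u
  calc PhiFun P c G u ≤ ∫ _, M ∂P := integral_mono h1 (integrable_const M)
        fun s => hGM _
    _ = M := by simp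
  
lemma Phi_continuous (hGc : Continuous G) (hGM : ∀ x, |G x| ≤ M) :
    Continuous (PhiFun P c G) := by
  apply continuous_of_dominated (bound := fun _ => M)
  · exact fun u => (hGc.comp (by fun_prop)).aestronglyMeasurable
  · exact fun u => ae_of_all _ fun s => by
      simpa [Real.norm_eq_abs] using hGM (u - c * s)
  · exact integrable_const M
  · exact ae_of_all _ fun s => hGc.comp (by fun_prop)

lemma Phi_lintegral (hGc : Continuous G) (hGnn : ∀ x, 0 ≤ G x) (hGM : ∀ x, G x ≤ M)
    (u : ℝ) :
    ENNReal.ofReal (PhiFun P c G u) = ∫⁻ s, ENNReal.ofReal (G (u - c * s)) ∂P :=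
  ofReal_integral_eq_lintegral_ofReal
    (Phi_integrable hGc (fun x => by rw [abs_of_nonneg (hGnn x)]; exact hGM x) u)
    (ae_of_all _ fun s => hGnn _)

lemma integrableOn_exp_Sset (hc : c ≠ 0) (hα : 0 < α) (t : ℝ) :
    IntegrableOn (fun u => Real.exp (α / c * (u - t))) (Sset t c) := by
  apply integrableOn_of_lintegral
  · exact (Continuous.aestronglyMeasurable (by fun_prop))
  · exact fun x => (Real.exp_pos _).le
  · rw [lintegral_exp_S hc hα t]; exact ENNReal.ofReal_ne_top

lemma integral_exp_Sset (hc : c ≠ 0) (hα : 0 < α) (t : ℝ) :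
    ∫ u in Sset t c, Real.exp (α / c * (u - t)) = |c| / α := by
  rw [integral_eq_lintegral_of_nonneg_ae (ae_of_all _ fun x => (Real.exp_pos _).le)
    (Continuous.aestronglyMeasurable (by fun_prop)), lintegral_exp_S hc hα t,
    ENNReal.toReal_ofReal (by positivity)]

/-- The integrand of the representation. -/
lemma integrableOn_rep (hc : c ≠ 0) (hα : 0 < α) (hGc : Continuous G)
    (hGnn : ∀ x, 0 ≤ G x) (hGM : ∀ x, G x ≤ M) (t : ℝ) :
    IntegrableOn (fun u => Real.exp (α / c * (u - t)) * PhiFun P c G u) (Sset t c) := by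
  have hM : ∀ x, |G x| ≤ M := fun x => by rw [abs_of_nonneg (hGnn x)]; exact hGM x
  apply Integrable.mono' ((integrableOn_exp_Sset hc hα t).const_mul M)
  · exact ((Continuous.mul (by fun_prop) (Phi_continuous hGc hM)).aestronglyMeasurable).restrict
  · apply ae_of_all
    intro u
    rw [Real.norm_eq_abs, abs_of_nonneg (mul_nonneg (Real.exp_pos _).le
      (Phi_nonneg hGnn u)), mul_comm M _]
    exact mul_le_mul_of_nonneg_left (Phi_le hGc hGnn hGM u) (Real.exp_pos _).le

lemma rep_nonneg (hGnn : ∀ x, 0 ≤ G x) (t : ℝ) :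
    0 ≤ ∫ u in Sset t c, Real.exp (α / c * (u - t)) * PhiFun P c G u :=
  setIntegral_nonneg (measurableSet_Sset t c)
    fun u _ => mul_nonneg (Real.exp_pos _).le (Phi_nonneg hGnn u)

lemma lintegral_rep (hc : c ≠ 0) (hα : 0 < α) (hGc : Continuous G)
    (hGnn : ∀ x, 0 ≤ G x) (hGM : ∀ x, G x ≤ M) (t : ℝ) :
    ∫⁻ u in Sset t c,
        ENNReal.ofReal (Real.exp (α / c * (u - t))) *
          ∫⁻ s, ENNReal.ofReal (G (u - c * s)) ∂P =
      ENNReal.ofReal (∫ u in Sset t c, Real.exp (α / c * (u - t)) * PhiFun P c G u) := by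
  rw [ofReal_integral_eq_lintegral_ofReal (integrableOn_rep hc hα hGc hGnn hGM t)
    (ae_of_all _ fun u => mul_nonneg (Real.exp_pos _).le (Phi_nonneg hGnn u))]
  apply lintegral_congr
  intro u
  rw [ENNReal.ofReal_mul (Real.exp_pos _).le, Phi_lintegral hGc hGnn hGM u]

lemma psi_integrand_aesm (hα : 0 < α) (hGc : Continuous G) (t : ℝ) :
    AEStronglyMeasurable (fun w => G (t - c * w) * K2kernel P α w)
      (volume.restrict (Ioi (0:ℝ))) := by
  apply AEStronglyMeasurable.restrict
  exact ((hGc.comp (by fun_prop)).aestronglyMeasurable).mul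
    (K2_stronglyMeasurable α).aestronglyMeasurable

lemma psi_lintegral_eq (hα : 0 < α) (hc : c ≠ 0) (hP : P (Set.Iio 0) = 0)
    (hGc : Continuous G) (hGnn : ∀ x, 0 ≤ G x) (hGM : ∀ x, G x ≤ M) (t : ℝ) :
    ∫⁻ w in Ioi (0:ℝ), ENNReal.ofReal (G (t - c * w) * K2kernel P α w) =
      ENNReal.ofReal |c|⁻¹ *
        ENNReal.ofReal (∫ u in Sset t c, Real.exp (α / c * (u - t)) * PhiFun P c G u) := by
  rw [keyId hα hc hP hGc.measurable hGnn t, lintegral_rep hc hα hGc hGnn hGM t]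

lemma psi_integrableOn (hα : 0 < α) (hc : c ≠ 0) (hP : P (Set.Iio 0) = 0)
    (hGc : Continuous G) (hGnn : ∀ x, 0 ≤ G x) (hGM : ∀ x, G x ≤ M) (t : ℝ) :
    IntegrableOn (fun w => G (t - c * w) * K2kernel P α w) (Ioi (0:ℝ)) := by
  apply integrableOn_of_lintegral (psi_integrand_aesm hα hGc t)
    (fun w => mul_nonneg (hGnn _) (K2_nonneg α w))
  rw [psi_lintegral_eq hα hc hP hGc hGnn hGM t]
  exact ENNReal.mul_ne_top ENNReal.ofReal_ne_top ENNReal.ofReal_ne_top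

/-- Representation of `ψ`. -/
lemma psi_rep {g φ : ℝ → ℝ} (hα : 0 < α) (hc : c ≠ 0) (hP : P (Set.Iio 0) = 0)
    (hGc : Continuous (fun x => g (φ x))) (hGnn : ∀ x, 0 ≤ g (φ x))
    (hGM : ∀ x, g (φ x) ≤ M) (t : ℝ) :
    psiFun P α c g φ t =
      |c|⁻¹ * ∫ u in Sset t c,
        Real.exp (α / c * (u - t)) * PhiFun P c (fun x => g (φ x)) u := by
  have h0 : psiFun P α c g φ t =
      (∫⁻ w in Ioi (0:ℝ),
        ENNReal.ofReal ((fun x => g (φ x)) (t - c * w) * K2kernel P α w)).toReal := by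
    rw [psiFun, integral_eq_lintegral_of_nonneg_ae
      (ae_of_all _ fun w => mul_nonneg (hGnn _) (K2_nonneg α w))
      (psi_integrand_aesm hα hGc t)]
  rw [h0, psi_lintegral_eq hα hc hP hGc hGnn hGM t,
    ← ENNReal.ofReal_mul (by positivity), ENNReal.toReal_ofReal]
  exact mul_nonneg (by positivity) (rep_nonneg hGnn t)

lemma psi_bound {g φ : ℝ → ℝ} (hα : 0 < α) (hc : c ≠ 0) (hP : P (Set.Iio 0) = 0)
    (hGc : Continuous (fun x => g (φ x))) (hGnn : ∀ x, 0 ≤ g (φ x))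
    (hGM : ∀ x, g (φ x) ≤ M) (t : ℝ) :
    |psiFun P α c g φ t| ≤ M / α := by
  have hM : 0 ≤ M := le_trans (hGnn 0) (hGM 0)
  have h1 : (0:ℝ) ≤ |c|⁻¹ := by positivity
  rw [psi_rep hα hc hP hGc hGnn hGM t,
    abs_of_nonneg (mul_nonneg h1 (rep_nonneg hGnn t))]
  have h2 : ∫ u in Sset t c, Real.exp (α / c * (u - t)) *
        PhiFun P c (fun x => g (φ x)) u ≤
      ∫ u in Sset t c, M * Real.exp (α / c * (u - t)) := by
    apply setIntegral_mono_on (integrableOn_rep hc hα hGc hGnn hGM t)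
      ((integrableOn_exp_Sset hc hα t).const_mul M) (measurableSet_Sset t c)
    intro u _
    rw [mul_comm M _]
    exact mul_le_mul_of_nonneg_left (Phi_le hGc hGnn hGM u) (Real.exp_pos _).le
  have h3 : ∫ u in Sset t c, M * Real.exp (α / c * (u - t)) = M * (|c| / α) := by
    rw [integral_const_mul, integral_exp_Sset hc hα t]
  calc |c|⁻¹ * ∫ u in Sset t c, Real.exp (α / c * (u - t)) *
          PhiFun P c (fun x => g (φ x)) u
      ≤ |c|⁻¹ * (M * (|c| / α)) := by
        apply mul_le_mul_of_nonneg_left _ h1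
        rw [← h3]; exact h2
    _ = M / α := by
        have h4 : |c| ≠ 0 := abs_ne_zero.2 hc
        field_simp

lemma integral_Ioi_sub_Ioi' {f : ℝ → ℝ} {a b : ℝ} (ha : IntegrableOn f (Ioi a))
    (hb : IntegrableOn f (Ioi b)) :
    (∫ x in Ioi a, f x) - ∫ x in Ioi b, f x = ∫ x in a..b, f x := by
  rcases le_total a b with h | h
  · rw [intervalIntegral.integral_of_le h]
    have hsplit : ∫ x in Ioi a, f x = (∫ x in Ioc a b, f x) + ∫ x in Ioi b, f x := by
      rw [← setIntegral_union (Ioc_disjoint_Ioi le_rfl) measurableSet_Ioi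
        (ha.mono_set Ioc_subset_Ioi_self) hb, Ioc_union_Ioi_eq_Ioi h]
    rw [hsplit]; ring
  · rw [intervalIntegral.integral_symm, intervalIntegral.integral_of_le h]
    have hsplit : ∫ x in Ioi b, f x = (∫ x in Ioc b a, f x) + ∫ x in Ioi a, f x := by
      rw [← setIntegral_union (Ioc_disjoint_Ioi le_rfl) measurableSet_Ioi
        (hb.mono_set Ioc_subset_Ioi_self) ha, Ioc_union_Ioi_eq_Ioi h]
    rw [hsplit]; ring

lemma J_hasDerivAt {W : ℝ → ℝ} (hc : c ≠ 0) (hWc : Continuous W)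
    (hWint : ∀ t, IntegrableOn W (Sset t c)) (t : ℝ) :
    HasDerivAt (fun τ => ∫ u in Sset τ c, W u) (|c| * c⁻¹ * W t) t := by
  have hFTC : HasDerivAt (fun τ => ∫ u in (0:ℝ)..τ, W u) (W t) t :=
    intervalIntegral.integral_hasDerivAt_right (hWc.intervalIntegrable 0 t)
      hWc.stronglyMeasurable.stronglyMeasurableAtFilter hWc.continuousAt
  rcases hc.lt_or_gt with hneg | hpos
  · have hS : ∀ τ, Sset τ c = Ioi τ := Sset_of_neg hneg
    have habs : |c| * c⁻¹ = -1 := by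
      rw [abs_of_neg hneg]; field_simp
    have hJ : (fun τ => ∫ u in Sset τ c, W u) =
        fun τ => (∫ u in Sset (0:ℝ) c, W u) - ∫ u in (0:ℝ)..τ, W u := by
      funext τ
      have h := integral_Ioi_sub_Ioi' (hS τ ▸ hWint τ) (hS 0 ▸ hWint 0)
      rw [intervalIntegral.integral_symm] at h
      rw [hS τ, hS 0] at *
      linarith
    rw [hJ, habs]
    simpa using hFTC.const_sub (∫ u in Sset (0:ℝ) c, W u)
  · have hS : ∀ τ, Sset τ c = Iio τ := Sset_of_pos hpos
    have habs : |c| * c⁻¹ = 1 := by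
      rw [abs_of_pos hpos]; field_simp
    have hIic : ∀ τ, IntegrableOn W (Iic τ) := by
      intro τ
      have h := hWint τ
      rw [hS τ] at h
      rwa [IntegrableOn, ← restrict_Iio_eq_restrict_Iic]
    have hJ : (fun τ => ∫ u in Sset τ c, W u) =
        fun τ => (∫ u in Iic (0:ℝ), W u) + ∫ u in (0:ℝ)..τ, W u := by
      funext τ
      have h := intervalIntegral.integral_Iic_sub_Iic (hIic 0) (hIic τ)
      rw [hS τ, ← integral_Iic_eq_integral_Iio]
      linarith
    rw [hJ, habs]
    simpa using hFTC.const_add (∫ u in Iic (0:ℝ), W u)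

lemma W_integrableOn {g φ : ℝ → ℝ} (hα : 0 < α) (hc : c ≠ 0)
    (hGc : Continuous (fun x => g (φ x))) (hGnn : ∀ x, 0 ≤ g (φ x))
    (hGM : ∀ x, g (φ x) ≤ M) (t : ℝ) :
    IntegrableOn
      (fun u => Real.exp (α / c * u) * PhiFun P c (fun x => g (φ x)) u) (Sset t c) := by
  have h0 : IntegrableOn
      (fun u => Real.exp (α / c * (u - t)) * PhiFun P c (fun x => g (φ x)) u)
      (Sset t c) := integrableOn_rep hc hα hGc hGnn hGM t
  have h : IntegrableOn
      (fun u => Real.exp (α / c * t) *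
        (Real.exp (α / c * (u - t)) * PhiFun P c (fun x => g (φ x)) u))
      (Sset t c) := h0.const_mul _
  apply h.congr
  apply ae_of_all
  intro u
  show Real.exp (α / c * t) * (Real.exp (α / c * (u - t)) * PhiFun P c (fun x => g (φ x)) u) =
    Real.exp (α / c * u) * PhiFun P c (fun x => g (φ x)) u
  rw [← mul_assoc, ← Real.exp_add]
  congr 2
  ring

lemma rep_shift {g φ : ℝ → ℝ} (t : ℝ) :
    ∫ u in Sset t c, Real.exp (α / c * (u - t)) * PhiFun P c (fun x => g (φ x)) u =
      Real.exp (-(α / c) * t) *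
        ∫ u in Sset t c, Real.exp (α / c * u) * PhiFun P c (fun x => g (φ x)) u := by
  rw [← integral_const_mul (μ := volume.restrict (Sset t c)) (L := ℝ)]
  apply integral_congr_ae
  apply ae_of_all
  intro u
  show Real.exp (α / c * (u - t)) * PhiFun P c (fun x => g (φ x)) u =
    Real.exp (-(α / c) * t) * (Real.exp (α / c * u) * PhiFun P c (fun x => g (φ x)) u)
  rw [← mul_assoc, ← Real.exp_add]
  congr 2
  ring

lemma psi_hasDerivAt {g φ : ℝ → ℝ} (hα : 0 < α) (hc : c ≠ 0) (hP : P (Set.Iio 0) = 0)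
    (hGc : Continuous (fun x => g (φ x))) (hGnn : ∀ x, 0 ≤ g (φ x))
    (hGM : ∀ x, g (φ x) ≤ M) (t : ℝ) :
    HasDerivAt (psiFun P α c g φ)
      (-(α / c) * psiFun P α c g φ t +
        c⁻¹ * PhiFun P c (fun x => g (φ x)) t) t := by
  have hM : ∀ x, |g (φ x)| ≤ M := fun x => by
    rw [abs_of_nonneg (hGnn x)]; exact hGM x
  have hΦc : Continuous (PhiFun P c fun x => g (φ x)) := Phi_continuous hGc hM
  set Φ : ℝ → ℝ := PhiFun P c fun x => g (φ x) with hΦ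
  set W : ℝ → ℝ := fun u => Real.exp (α / c * u) * Φ u with hW
  have hWc : Continuous W := by
    apply Continuous.mul _ hΦc
    fun_prop
  have hWint : ∀ τ, IntegrableOn W (Sset τ c) := fun τ =>
    W_integrableOn hα hc hGc hGnn hGM τ
  have hrep : psiFun P α c g φ = fun τ =>
      |c|⁻¹ * (Real.exp (-(α / c) * τ) * ∫ u in Sset τ c, W u) := by
    funext τ
    rw [psi_rep hα hc hP hGc hGnn hGM τ, rep_shift]
  have hJd := J_hasDerivAt hc hWc hWint t
  have hE : HasDerivAt (fun τ => Real.exp (-(α / c) * τ))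
      (Real.exp (-(α / c) * t) * -(α / c)) t := by
    have h1 : HasDerivAt (fun τ : ℝ => -(α / c) * τ) (-(α / c)) t := by
      simpa using (hasDerivAt_id t).const_mul (-(α / c))
    exact h1.exp
  have hprod := (hE.mul hJd).const_mul |c|⁻¹
  rw [hrep]
  refine hprod.congr_deriv (Eq.symm ?_)
  have hexp : Real.exp (-(α / c) * t) * Real.exp (α / c * t) = 1 := by
    rw [← Real.exp_add]; simp
  have habs : |c| * |c|⁻¹ = 1 := mul_inv_cancel₀ (abs_ne_zero.2 hc)
  beta_reduce
  set J := ∫ u in Sset t c, (fun u => Real.exp (α / c * u) * Φ u) u with hJ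
  set E₁ := Real.exp (-(α / c) * t) with hE₁
  set E₂ := Real.exp (α / c * t) with hE₂
  linear_combination (-(c⁻¹ * Φ t * (|c| * |c|⁻¹))) * hexp - (c⁻¹ * Φ t) * habs

lemma K2_integrableOn (hα : 0 < α) (hc : c ≠ 0) (hP : P (Set.Iio 0) = 0) :
    IntegrableOn (K2kernel P α) (Ioi (0:ℝ)) := by
  apply integrableOn_of_lintegral
  · exact (K2_stronglyMeasurable α).aestronglyMeasurable.restrict
  · exact K2_nonneg α
  · have h := keyId (P := P) hα hc hP (G := fun _ => (1:ℝ)) measurable_const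
      (fun _ => zero_le_one) 0
    simp only [one_mul] at h
    rw [h]
    simp only [ENNReal.ofReal_one, lintegral_const, measure_univ, mul_one]
    rw [lintegral_exp_S hc hα]
    exact ENNReal.mul_ne_top ENNReal.ofReal_ne_top ENNReal.ofReal_ne_top

lemma psi_tendsto {g φ : ℝ → ℝ} (hα : 0 < α) (hc : c ≠ 0) (hP : P (Set.Iio 0) = 0)
    (hGc : Continuous (fun x => g (φ x))) (hGnn : ∀ x, 0 ≤ g (φ x))
    (hGM : ∀ x, g (φ x) ≤ M) (hG0 : Tendsto (fun x => g (φ x)) atBot (𝓝 0)) :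
    Tendsto (psiFun P α c g φ) atBot (𝓝 0) := by
  have hb0 : IntegrableOn (K2kernel P α) (Ioi (0:ℝ)) := K2_integrableOn hα hc hP
  have hbound : IntegrableOn (fun w => M * K2kernel P α w) (Ioi (0:ℝ)) := hb0.const_mul M
  have key : Tendsto (fun t => ∫ w in Ioi (0:ℝ), g (φ (t - c * w)) * K2kernel P α w)
      atBot (𝓝 (∫ _ in Ioi (0:ℝ), (0:ℝ))) := by
    apply tendsto_integral_filter_of_dominated_convergence
      (bound := fun w => M * K2kernel P α w)
    · exact Eventually.of_forall fun t => psi_integrand_aesm hα hGc t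
    · apply Eventually.of_forall
      intro t
      apply ae_of_all
      intro w
      rw [Real.norm_eq_abs, abs_of_nonneg (mul_nonneg (hGnn _) (K2_nonneg α w))]
      exact mul_le_mul_of_nonneg_right (hGM _) (K2_nonneg α w)
    · exact hbound
    · apply ae_of_all
      intro w
      have h1 : Tendsto (fun t : ℝ => t - c * w) atBot atBot := by
        simpa [sub_eq_add_neg] using tendsto_atBot_add_const_right atBot (-(c * w)) tendsto_id
      have h2 := (hG0.comp h1).mul_const (K2kernel P α w)
      simpa using h2
  simp only [integral_zero] at key; exact key

end EpiAux2


open EpiAux EpiAux2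

/-- Recovery of the second component of the epidemic wave profile system. -/
theorem epidemic_second_component
    (P : Measure ℝ) [IsProbabilityMeasure P] (α c : ℝ) (g φ : ℝ → ℝ)
    (hα : 0 < α) (hc : c ≠ 0)
    -- P is a probability measure on ℝ₊
    (hP : P (Set.Iio 0) = 0)
    -- g continuous, nonnegative, bounded, g(0) = 0
    (hgc : ContinuousOn g (Set.Ici 0))
    (hgnn : ∀ s, 0 ≤ s → 0 ≤ g s)
    (hg0 : g 0 = 0)
    (hgbdd : BddAbove (g '' Set.Ici 0))
    -- φ bounded continuous nonnegative
    (hφc : Continuous φ)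
    (hφnn : ∀ t, 0 ≤ φ t)
    (hφbdd : ∃ M, ∀ t, |φ t| ≤ M) :
    -- ψ is well defined and bounded by (sup g)/α
    (∀ t : ℝ, IntegrableOn (fun w => g (φ (t - c * w)) * K2kernel P α w) (Set.Ioi 0)) ∧
    (∀ t : ℝ, |psiFun P α c g φ t| ≤ sSup (g '' Set.Ici 0) / α) ∧
    -- ψ ∈ C¹ and solves c ψ' + α ψ = ∫₀^∞ g(φ(t - cs)) dP(s)
    (∃ ψ' : ℝ → ℝ, Continuous ψ' ∧
      (∀ t : ℝ, HasDerivAt (psiFun P α c g φ) (ψ' t) t) ∧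
      (∀ t : ℝ, c * ψ' t + α * psiFun P α c g φ t = ∫ s, g (φ (t - c * s)) ∂P)) ∧
    -- ψ vanishes at -∞ whenever φ does
    (Tendsto φ atBot (nhds 0) → Tendsto (psiFun P α c g φ) atBot (nhds 0)) := by
  have hGc : Continuous fun x => g (φ x) := hgc.comp_continuous hφc fun x => hφnn x
  have hGnn : ∀ x, 0 ≤ g (φ x) := fun x => hgnn _ (hφnn x)
  have hGM : ∀ x, g (φ x) ≤ sSup (g '' Set.Ici 0) := fun x =>
    le_csSup hgbdd ⟨φ x, hφnn x, rfl⟩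
  refine ⟨fun t => psi_integrableOn hα hc hP hGc hGnn hGM t,
    fun t => psi_bound hα hc hP hGc hGnn hGM t,
    ⟨fun t => -(α / c) * psiFun P α c g φ t +
        c⁻¹ * PhiFun P c (fun x => g (φ x)) t, ?_,
      fun t => psi_hasDerivAt hα hc hP hGc hGnn hGM t, ?_⟩, ?_⟩
  · have hψc : Continuous (psiFun P α c g φ) := continuous_iff_continuousAt.2
      fun t => (psi_hasDerivAt hα hc hP hGc hGnn hGM t).continuousAt
    have hΦc : Continuous (PhiFun P c fun x => g (φ x)) :=
      Phi_continuous hGc fun x => by rw [abs_of_nonneg (hGnn x)]; exact hGM x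
    exact (continuous_const.mul hψc).add (continuous_const.mul hΦc)
  · intro t
    have hΦ : PhiFun P c (fun x => g (φ x)) t = ∫ s, g (φ (t - c * s)) ∂P := rfl
    rw [← hΦ]
    field_simp
    ring
  · intro hφ0
    have hg0' : Tendsto (fun x => g (φ x)) atBot (𝓝 0) := by
      have hcont : ContinuousWithinAt g (Set.Ici 0) 0 := hgc 0 Set.self_mem_Ici
      have hφt : Tendsto φ atBot (𝓝[Set.Ici 0] 0) :=
        tendsto_nhdsWithin_iff.2 ⟨hφ0, Eventually.of_forall hφnn⟩
      have h := hcont.tendsto.comp hφt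
      rwa [hg0] at h
    exact psi_tendsto hα hc hP hGc hGnn hGM hg0'
end
end
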